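/- arXiv:1905.09729 — 4 statements merged into one kernel-verified Lean document; each statement's English description precedes it below -/
import Mathlib

section
/- With the setup of the auxiliary graph construction, if C ⊆ A is a non-empty colour-alternating cycle of length L with no neighbouring vertices, then the 2-factor F(C) of G has at most L connected components. -/
/-- Red part of the auxiliary graph `A(G,H)` (vertices indexed by `ZMod n`, vertex
`i` standing for the Hamilton-cycle edge `e_i = v_i v_{i+1}`): a red edge `e_i e_j`
iff `v_{i+1} v_{j+1}` is an inner edge of `G`. -/
def auxRed (n : ℕ) (G : SimpleGraph (ZMod n)) : SimpleGraph (ZMod n) where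
  Adj i j := G.Adj (i + 1) (j + 1) ∧ j ≠ i + 1 ∧ i ≠ j + 1
  symm := ⟨fun i j h => ⟨h.1.symm, h.2.2, h.2.1⟩⟩
  loopless := ⟨fun i h => G.loopless.irrefl (i + 1) h.1⟩

/-- Blue part of `A(G,H)`: a blue edge `e_i e_j` iff `v_i v_j` is an inner edge. -/
def auxBlue (n : ℕ) (G : SimpleGraph (ZMod n)) : SimpleGraph (ZMod n) where
  Adj i j := G.Adj i j ∧ j ≠ i + 1 ∧ i ≠ j + 1
  symm := ⟨fun i j h => ⟨h.1.symm, h.2.2, h.2.1⟩⟩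
  loopless := ⟨fun i h => G.loopless.irrefl i h.1⟩

/-- The 2-factor `F(S)` of `G` corresponding to a union `S` of vertex-disjoint
colour-alternating cycles in `A(G,H)` with vertex set `T` and red/blue partner
functions `r`, `b`. -/
def FSgraph (n : ℕ) (T : Finset (ZMod n)) (r b : ZMod n → ZMod n) :
    SimpleGraph (ZMod n) :=
  SimpleGraph.fromRel (fun x y =>
    (y = x + 1 ∧ x ∉ T) ∨ (x - 1 ∈ T ∧ y = r (x - 1) + 1) ∨ (x ∈ T ∧ y = b x))

/-- Walking forward along Hamilton-cycle edges: if after `k` steps we land in `T`,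
then `x` is reachable from some element of `T`. -/
lemma reach_T (n : ℕ) [NeZero n] (hn : 3 ≤ n)
    (T : Finset (ZMod n)) (r b : ZMod n → ZMod n) :
    ∀ (k : ℕ) (x : ZMod n), x + (k : ZMod n) ∈ T →
      ∃ t ∈ T, (FSgraph n T r b).Reachable x t := by
  intro k
  induction k with
  | zero => intro x hx; exact ⟨x, by simpa using hx, SimpleGraph.Reachable.refl x⟩
  | succ k ih =>
    intro x hx
    by_cases hxT : x ∈ T
    · exact ⟨x, hxT, SimpleGraph.Reachable.refl x⟩
    · have hadj : (FSgraph n T r b).Adj x (x + 1) := by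
        refine ⟨?_, Or.inl (Or.inl ⟨rfl, hxT⟩)⟩
        intro h
        have h1 : ((1 : ℕ) : ZMod n) = 0 := by
          push_cast
          exact add_left_cancel (show x + 1 = x + 0 by rw [add_zero]; exact h.symm)
        have hdvd : n ∣ 1 := (ZMod.natCast_eq_zero_iff 1 n).mp h1
        have := Nat.le_of_dvd one_pos hdvd
        omega
      have hx' : (x + 1) + (k : ZMod n) ∈ T := by
        have : x + ((k : ℕ) + 1 : ℕ) = (x + 1) + (k : ZMod n) := by
          push_cast; ring
        rwa [this] at hx
      obtain ⟨t, ht, hreach⟩ := ih (x + 1) hx'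
      exact ⟨t, ht, hadj.reachable.trans hreach⟩

/-- If `C ⊆ A(G,H)` is a non-empty single colour-alternating cycle of length `L`
(encoded by its vertex set `T` of cardinality `L`, red/blue partner functions and
the condition that the cycle is connected, i.e. any set containing some vertex of
`C` and closed under `r` and `b` contains all of `C`) with no neighbouring
vertices, then the 2-factor `F(C)` has at most `L` connected components. -/
theorem stmt_8 (n : ℕ) [NeZero n] (hn : 3 ≤ n) (G : SimpleGraph (ZMod n))
    (hH : ∀ i : ZMod n, G.Adj i (i + 1))
    (L : ℕ) (hL : 0 < L)
    (T : Finset (ZMod n)) (r b : ZMod n → ZMod n)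
    (hcard : T.card = L)
    (hr : ∀ i ∈ T, r i ∈ T ∧ r (r i) = i ∧ (auxRed n G).Adj i (r i))
    (hb : ∀ i ∈ T, b i ∈ T ∧ b (b i) = i ∧ (auxBlue n G).Adj i (b i))
    (hconn : ∀ (P : ZMod n → Prop) (x : ZMod n), x ∈ T → P x →
      (∀ z ∈ T, P z → P (r z) ∧ P (b z)) → ∀ y ∈ T, P y)
    (hnb : ∀ i ∈ T, i + 1 ∉ T) :
    Nat.card (FSgraph n T r b).ConnectedComponent ≤ L := by
  have hTne : T.Nonempty := Finset.card_pos.mp (hcard ▸ hL)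
  obtain ⟨t0, ht0⟩ := hTne
  -- the map from T to connected components is surjective
  have hsurj : Function.Surjective
      (fun i : {i // i ∈ T} => (FSgraph n T r b).connectedComponentMk i.1) := by
    intro c
    induction c using SimpleGraph.ConnectedComponent.ind with
    | _ x =>
      have hx : x + ((t0 - x).val : ℕ) ∈ T := by
        rwa [ZMod.natCast_val, ZMod.cast_id, add_sub_cancel]
      obtain ⟨t, ht, hreach⟩ := reach_T n hn T r b (t0 - x).val x hx
      exact ⟨⟨t, ht⟩, SimpleGraph.ConnectedComponent.sound hreach.symm⟩
  calc Nat.card (FSgraph n T r b).ConnectedComponent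
      ≤ Nat.card {i // i ∈ T} := Nat.card_le_card_of_surjective _ hsurj
    _ = T.card := by simp [Nat.card_eq_fintype_card]
    _ = L := hcard
end

section
/- Let S ⊆ A be a disjoint union of colour-alternating cycles without neighbouring vertices, where A = A(G, H) is the auxiliary graph of a Hamiltonian graph G. If the 2-factor F(S) has more than one connected component, then some vertex e_k of S separates components of F(S), i.e., v_k and v_{k+1} lie in different components of F(S). -/
/-- If `S ⊆ A(G,H)` is a disjoint union of colour-alternating cycles without
neighbouring vertices and the 2-factor `F(S)` has more than one connected
component, then some vertex `e_k` of `S` separates components of `F(S)`, i.e.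
`v_k` and `v_{k+1}` lie in different components of `F(S)`. -/
theorem stmt_9 (n : ℕ) [NeZero n] (hn : 3 ≤ n) (G : SimpleGraph (ZMod n))
    (hH : ∀ i : ZMod n, G.Adj i (i + 1))
    (T : Finset (ZMod n)) (r b : ZMod n → ZMod n)
    (hr : ∀ i ∈ T, r i ∈ T ∧ r (r i) = i ∧ (auxRed n G).Adj i (r i))
    (hb : ∀ i ∈ T, b i ∈ T ∧ b (b i) = i ∧ (auxBlue n G).Adj i (b i))
    (hnb : ∀ i ∈ T, i + 1 ∉ T)
    (hcomp : 1 < Nat.card (FSgraph n T r b).ConnectedComponent) :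
    ∃ k ∈ T, ¬ (FSgraph n T r b).Reachable k (k + 1) := by
  by_contra h
  push_neg at h
  haveI : Fact (1 < n) := ⟨by omega⟩
  have hstep : ∀ x : ZMod n, (FSgraph n T r b).Reachable x (x + 1) := by
    intro x
    by_cases hx : x ∈ T
    · exact h x hx
    · refine SimpleGraph.Adj.reachable ?_
      refine ⟨?_, Or.inl (Or.inl ⟨rfl, hx⟩)⟩
      simp only [ne_eq, left_eq_add]
      exact one_ne_zero
  have hreach : ∀ (m : ℕ) (x : ZMod n), (FSgraph n T r b).Reachable x (x + m) := by
    intro m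
    induction m with
    | zero => intro x; simpa using SimpleGraph.Reachable.refl x
    | succ k ih =>
        intro x
        have := (ih x).trans (hstep (x + k))
        simpa [add_assoc] using this
  have hpre : (FSgraph n T r b).Preconnected := by
    intro x y
    have := hreach (y - x).val x
    rwa [ZMod.natCast_val, ZMod.cast_id, add_sub_cancel] at this
  haveI : Subsingleton (FSgraph n T r b).ConnectedComponent := by
    constructor
    intro c d
    refine SimpleGraph.ConnectedComponent.ind₂ (fun x y => ?_) c d
    exact SimpleGraph.ConnectedComponent.sound (hpre x y)
  have h1 : Nat.card (FSgraph n T r b).ConnectedComponent = 1 :=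
    Nat.card_eq_one_iff_unique.mpr ⟨this, ⟨(FSgraph n T r b).connectedComponentMk 0⟩⟩
  omega
end

section
/- Let S ⊆ A be a disjoint union of colour-alternating cycles without neighbouring vertices, and let U be an ordered subgraph of A without neighbouring vertices that is a going-up version of S. Then the 2-factor F(U) of G has exactly one more connected component than F(S). -/
/-- The 2-factor `F(U)` of `G` corresponding to a going-up version `U` of `S`
embedded in `A(G,H)`: the original vertices of `S` (with vertex set `T`, partners
`r`, `b`) are embedded by `g`, and the extra copy of the cycle `C` of `S` (with
vertex set `T' ⊆ T`) is embedded by `g'`.  The edges of `F(U)` are the Hamilton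
edges `v_x v_{x+1}` with `e_x` not a vertex of `U`, together with the inner edges
of `G` corresponding to the red/blue edges of `U`. -/
def FUgraph (n : ℕ) (T T' : Finset (ZMod n)) (r b g g' : ZMod n → ZMod n) :
    SimpleGraph (ZMod n) :=
  SimpleGraph.fromRel (fun x y =>
    (y = x + 1 ∧ x ∉ g '' (T : Set (ZMod n)) ∪ g' '' (T' : Set (ZMod n))) ∨
    (∃ s ∈ T, x = g s + 1 ∧ y = g (r s) + 1) ∨
    (∃ s ∈ T, x = g s ∧ y = g (b s)) ∨
    (∃ s ∈ T', x = g' s + 1 ∧ y = g' (r s) + 1) ∨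
    (∃ s ∈ T', x = g' s ∧ y = g' (b s)))

open Function

section Orb

variable {α : Type*}

/-- Two points are orbit-equivalent under `f` if some forward iterates meet. -/
def orbEq (f : α → α) (x y : α) : Prop := ∃ k l : ℕ, f^[k] x = f^[l] y

theorem orbEq_refl (f : α → α) (x : α) : orbEq f x x := ⟨0, 0, rfl⟩

theorem orbEq_symm {f : α → α} {x y : α} (h : orbEq f x y) : orbEq f y x := by
  obtain ⟨k, l, h⟩ := h; exact ⟨l, k, h.symm⟩

theorem orbEq_trans {f : α → α} {x y z : α} (h1 : orbEq f x y) (h2 : orbEq f y z) :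
    orbEq f x z := by
  obtain ⟨k, l, h1⟩ := h1
  obtain ⟨p, q, h2⟩ := h2
  refine ⟨p + k, l + q, ?_⟩
  rw [Function.iterate_add_apply, h1, ← Function.iterate_add_apply,
    Nat.add_comm p l, Function.iterate_add_apply, h2, ← Function.iterate_add_apply]

/-- The orbit-equivalence setoid of a self-map. -/
def orbSetoid (f : α → α) : Setoid α :=
  ⟨orbEq f, ⟨orbEq_refl f, orbEq_symm, orbEq_trans⟩⟩

theorem orbEq_iterate (f : α → α) (x : α) (k : ℕ) : orbEq f x (f^[k] x) :=
  ⟨k, 0, rfl⟩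

theorem orbEq_step (f : α → α) (x : α) : orbEq f x (f x) := by
  simpa using orbEq_iterate f x 1

theorem orbEq_exists {f : α → α} (hf : Function.Injective f) {x y : α}
    (h : orbEq f x y) : ∃ m, f^[m] x = y ∨ f^[m] y = x := by
  obtain ⟨k, l, h⟩ := h
  rcases Nat.le_total l k with hl | hl
  · refine ⟨k - l, Or.inl ?_⟩
    have : f^[l] (f^[k - l] x) = f^[l] y := by
      rw [← Function.iterate_add_apply, Nat.add_sub_cancel' hl, h]
    exact (hf.iterate l) this
  · refine ⟨l - k, Or.inr ?_⟩
    have : f^[k] (f^[l - k] y) = f^[k] x := by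
      rw [← Function.iterate_add_apply, Nat.add_sub_cancel' hl, h]
    exact (hf.iterate k) this

theorem conj_iterate {f τ : α → α} (hconj : ∀ x, f (τ (f x)) = τ x) :
    ∀ (k : ℕ) (z : α), f^[k] (τ (f^[k] z)) = τ z := by
  intro k
  induction k with
  | zero => intro z; simp
  | succ k ih =>
    intro z
    have : f^[k+1] (τ (f^[k+1] z)) = f^[k] (f (τ (f (f^[k] z)))) := by
      rw [Function.iterate_succ_apply' f k z, Function.iterate_succ_apply f k]
    rw [this, hconj, ih]

theorem orbEq_tau {f τ : α → α} (hconj : ∀ x, f (τ (f x)) = τ x) {x y : α}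
    (h : orbEq f x y) : orbEq f (τ x) (τ y) := by
  obtain ⟨k, l, h⟩ := h
  refine ⟨l, k, ?_⟩
  have h1 : f^[k] (τ (f^[k] x)) = τ x := conj_iterate hconj k x
  have h2 : f^[l] (τ (f^[l] y)) = τ y := conj_iterate hconj l y
  rw [h] at h1
  calc f^[l] (τ x) = f^[l] (f^[k] (τ (f^[l] y))) := by rw [h1]
    _ = f^[k] (f^[l] (τ (f^[l] y))) := by
        rw [← Function.iterate_add_apply, ← Function.iterate_add_apply, Nat.add_comm]
    _ = f^[k] (τ y) := by rw [h2]

/-- Midpoint argument: no point is orbit-equivalent to its `τ`-mate. -/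
theorem no_orbEq_tau {f τ : α → α} (hinvol : ∀ x, τ (τ x) = x)
    (hfix : ∀ x, τ x ≠ x) (hconj : ∀ x, f (τ (f x)) = τ x)
    (hne : ∀ x, f x ≠ τ x) (x : α) : ¬ orbEq f x (τ x) := by
  have hinj : Function.Injective f := by
    intro a c h
    have ha := hconj a
    rw [h, hconj c] at ha
    calc a = τ (τ a) := (hinvol a).symm
      _ = τ (τ c) := by rw [ha]
      _ = c := hinvol c
  intro h
  obtain ⟨m, hm⟩ := orbEq_exists hinj h
  have key : ∀ (z : α) (m : ℕ), f^[m] z ≠ τ z := by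
    intro z m hm
    rcases Nat.even_or_odd m with ⟨j, hj⟩ | ⟨j, hj⟩
    · have h1 : f^[j] (τ (f^[j] z)) = τ z := conj_iterate hconj j z
      have h2 : f^[j] (f^[j] z) = τ z := by
        rw [← Function.iterate_add_apply, ← hj, hm]
      have := (hinj.iterate j) (h1.trans h2.symm)
      exact hfix _ this
    · have h1 : f^[j+1] (τ (f^[j+1] z)) = τ z := conj_iterate hconj (j+1) z
      have h2 : f^[j+1] (f^[j] z) = τ z := by
        rw [← Function.iterate_add_apply]
        have : j + 1 + j = m := by omega
        rw [this, hm]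
      have h3 : τ (f^[j+1] z) = f^[j] z := (hinj.iterate (j+1)) (h1.trans h2.symm)
      have h4 : f (f^[j] z) = τ (f^[j] z) := by
        rw [← Function.iterate_succ_apply' f j z]
        calc f^[j+1] z = τ (τ (f^[j+1] z)) := (hinvol _).symm
          _ = τ (f^[j] z) := by rw [h3]
      exact hne _ h4
  rcases hm with h' | h'
  · exact key x m h'
  · refine key (τ x) m ?_
    rw [h', hinvol]

end Orb

section Count

variable {X A B C : Type*}

/-- First-return correspondence: orbit counts agree with a section. -/
theorem card_quot_section (f : X → X) (ι : A → X) (hι : Function.Injective ι)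
    (ret : A → A)
    (hret : ∀ a, ∃ m, 1 ≤ m ∧ f^[m] (ι a) = ι (ret a) ∧
      ∀ j, 1 ≤ j → j < m → ∀ a', f^[j] (ι a) ≠ ι a')
    (hmeet : ∀ x, ∃ k a, f^[k] x = ι a) :
    Nat.card (Quotient (orbSetoid f)) = Nat.card (Quotient (orbSetoid ret)) := by
  -- lift iterates of ret to iterates of f
  have hlift : ∀ (k : ℕ) (a : A), ∃ M, f^[M] (ι a) = ι (ret^[k] a) := by
    intro k
    induction k with
    | zero => intro a; exact ⟨0, rfl⟩
    | succ k ih =>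
      intro a
      obtain ⟨M, hM⟩ := ih a
      obtain ⟨m, _, hm, _⟩ := hret (ret^[k] a)
      refine ⟨m + M, ?_⟩
      rw [Function.iterate_add_apply, hM, hm, Function.iterate_succ_apply']
  have hkey : ∀ (k : ℕ) (a a' : A), f^[k] (ι a) = ι a' → orbEq ret a a' := by
    intro k
    induction k using Nat.strong_induction_on with
    | _ k ih =>
      intro a a' h
      rcases Nat.eq_zero_or_pos k with hk | hk
      · subst hk
        simp only [Function.iterate_zero_apply] at h
        exact hι h ▸ orbEq_refl ret a
      · obtain ⟨m, hm1, hm2, hm3⟩ := hret a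
        have hmk : m ≤ k := by
          by_contra hc
          exact hm3 k hk (by omega) a' h
        have h' : f^[k - m] (ι (ret a)) = ι a' := by
          rw [← hm2, ← Function.iterate_add_apply, Nat.sub_add_cancel hmk, h]
        have := ih (k - m) (by omega) (ret a) a' h'
        exact orbEq_trans (orbEq_step ret a) this
  have hpres : ∀ a a', orbEq ret a a' → orbEq f (ι a) (ι a') := by
    intro a a' ⟨k, l, h⟩
    obtain ⟨M, hM⟩ := hlift k a
    obtain ⟨M', hM'⟩ := hlift l a'
    exact ⟨M, M', by rw [hM, hM', h]⟩
  let φ : Quotient (orbSetoid ret) → Quotient (orbSetoid f) :=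
    Quotient.lift (fun a => (Quotient.mk (orbSetoid f) (ι a)))
      (fun a a' h => Quotient.sound (hpres a a' h))
  have hbij : Function.Bijective φ := by
    constructor
    · intro q q'
      refine Quotient.inductionOn₂ q q' ?_
      intro a a' h
      have h2 : orbEq f (ι a) (ι a') := Quotient.exact h
      obtain ⟨k, l, hkl⟩ := h2
      obtain ⟨p, c, hp⟩ := hmeet (f^[k] (ι a))
      have e1 : f^[p + k] (ι a) = ι c := by
        rw [Function.iterate_add_apply, hp]
      have e2 : f^[p + l] (ι a') = ι c := by
        rw [Function.iterate_add_apply, ← hkl, hp]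
      exact Quotient.sound (orbEq_trans (hkey _ _ _ e1) (orbEq_symm (hkey _ _ _ e2)))
    · intro q
      refine Quotient.inductionOn q ?_
      intro x
      obtain ⟨k, a, hk⟩ := hmeet x
      exact ⟨Quotient.mk _ a, Quotient.sound (orbEq_symm ⟨k, 0, hk⟩)⟩
  exact (Nat.card_eq_of_bijective φ hbij).symm

/-- Orbit counts add over an invariant partition. -/
theorem card_quot_sum [Finite A] [Finite B] (f : C → C) (f₁ : A → A) (f₂ : B → B)
    (ι₁ : A → C) (ι₂ : B → C) (h₁ : Function.Injective ι₁)
    (h₂ : Function.Injective ι₂) (hd : ∀ a b, ι₁ a ≠ ι₂ b)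
    (hcov : ∀ c, (∃ a, ι₁ a = c) ∨ (∃ b, ι₂ b = c))
    (hc₁ : ∀ a, f (ι₁ a) = ι₁ (f₁ a)) (hc₂ : ∀ b, f (ι₂ b) = ι₂ (f₂ b)) :
    Nat.card (Quotient (orbSetoid f)) =
      Nat.card (Quotient (orbSetoid f₁)) + Nat.card (Quotient (orbSetoid f₂)) := by
  have hit₁ : ∀ (k : ℕ) (a : A), f^[k] (ι₁ a) = ι₁ (f₁^[k] a) := by
    intro k; induction k with
    | zero => intro a; rfl
    | succ k ih =>
      intro a
      rw [Function.iterate_succ_apply', ih, hc₁, Function.iterate_succ_apply' f₁ k a]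
  have hit₂ : ∀ (k : ℕ) (b : B), f^[k] (ι₂ b) = ι₂ (f₂^[k] b) := by
    intro k; induction k with
    | zero => intro b; rfl
    | succ k ih =>
      intro b
      rw [Function.iterate_succ_apply', ih, hc₂, Function.iterate_succ_apply' f₂ k b]
  let φ : Quotient (orbSetoid f₁) ⊕ Quotient (orbSetoid f₂) → Quotient (orbSetoid f) :=
    Sum.elim
      (Quotient.lift (fun a => (Quotient.mk (orbSetoid f) (ι₁ a)))
        (fun a a' ⟨k, l, h⟩ => Quotient.sound ⟨k, l, by rw [hit₁, hit₁, h]⟩))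
      (Quotient.lift (fun b => (Quotient.mk (orbSetoid f) (ι₂ b)))
        (fun b b' ⟨k, l, h⟩ => Quotient.sound ⟨k, l, by rw [hit₂, hit₂, h]⟩))
  have hbij : Function.Bijective φ := by
    constructor
    · rintro (q | q) (q' | q')
      · refine Quotient.inductionOn₂ q q' ?_
        intro a a' h
        obtain ⟨k, l, hkl⟩ := Quotient.exact h
        rw [hit₁, hit₁] at hkl
        exact congrArg Sum.inl (Quotient.sound ⟨k, l, h₁ hkl⟩)
      · refine Quotient.inductionOn₂ q q' ?_
        intro a b h
        obtain ⟨k, l, hkl⟩ := Quotient.exact h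
        rw [hit₁, hit₂] at hkl
        exact absurd hkl (hd _ _)
      · refine Quotient.inductionOn₂ q q' ?_
        intro b a h
        obtain ⟨k, l, hkl⟩ := Quotient.exact h
        rw [hit₂, hit₁] at hkl
        exact absurd hkl.symm (hd _ _)
      · refine Quotient.inductionOn₂ q q' ?_
        intro b b' h
        obtain ⟨k, l, hkl⟩ := Quotient.exact h
        rw [hit₂, hit₂] at hkl
        exact congrArg Sum.inr (Quotient.sound ⟨k, l, h₂ hkl⟩)
    · intro q
      refine Quotient.inductionOn q ?_
      intro c
      rcases hcov c with ⟨a, ha⟩ | ⟨b, hb⟩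
      · exact ⟨Sum.inl (Quotient.mk _ a), by simp [φ, ha]⟩
      · exact ⟨Sum.inr (Quotient.mk _ b), by simp [φ, hb]⟩
  rw [← Nat.card_eq_of_bijective φ hbij, Nat.card_sum]

end Count

section Components

open SimpleGraph

variable {V : Type*}

/-- The directed-edge permutation of a 2-factor counts components twice. -/
theorem card_quot_two_mul (G' : SimpleGraph V) (σ : V × Bool → V × Bool)
    (hconj : ∀ x, σ (((σ x).1, !(σ x).2)) = (x.1, !x.2))
    (hne : ∀ x, σ x ≠ (x.1, !x.2))
    (hstep : ∀ x, G'.Adj x.1 (σ x).1)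
    (hadj : ∀ u v, G'.Adj u v → ∃ s t, orbEq σ (u, s) (v, t)) :
    Nat.card (Quotient (orbSetoid σ)) = 2 * Nat.card G'.ConnectedComponent := by
  classical
  set τ : V × Bool → V × Bool := fun x => (x.1, !x.2) with hτ
  have hinvol : ∀ x, τ (τ x) = x := by intro x; simp [hτ]
  have hfix : ∀ x, τ x ≠ x := by
    intro x h
    have := congrArg Prod.snd h
    simp [hτ] at this
  have hconj' : ∀ x, σ (τ (σ x)) = τ x := hconj
  have hne' : ∀ x, σ x ≠ τ x := hne
  have hreach : ∀ (x : V × Bool) (k : ℕ), G'.Reachable x.1 ((σ^[k] x).1) := by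
    intro x k
    induction k with
    | zero => exact Reachable.refl _
    | succ k ih =>
      rw [Function.iterate_succ_apply']
      exact ih.trans (hstep (σ^[k] x)).reachable
  have horb : ∀ x y, orbEq σ x y → G'.Reachable x.1 y.1 := by
    rintro x y ⟨k, l, h⟩
    have h1 := hreach x k
    have h2 := hreach y l
    rw [h] at h1
    exact h1.trans h2.symm
  have htrans2 : ∀ u w v, (∃ s t, orbEq σ (u, s) (w, t)) →
      (∃ s t, orbEq σ (w, s) (v, t)) → ∃ s t, orbEq σ (u, s) (v, t) := by
    rintro u w v ⟨s, t, h1⟩ ⟨s', t', h2⟩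
    by_cases h : t = s'
    · exact ⟨s, t', orbEq_trans h1 (h ▸ h2)⟩
    · have h2' := orbEq_tau hconj' h2
      have hts : (w, !s') = (w, t) := by
        cases t <;> cases s' <;> simp_all
      rw [hτ] at h2'
      simp only at h2'
      rw [hts] at h2'
      exact ⟨s, !t', orbEq_trans h1 h2'⟩
  have hQ : ∀ u v, G'.Reachable u v → ∃ s t, orbEq σ (u, s) (v, t) := by
    intro u v h
    obtain ⟨p⟩ := h
    induction p with
    | nil => exact ⟨false, false, orbEq_refl _ _⟩
    | cons h p ih => exact htrans2 _ _ _ (hadj _ _ h) ih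
  have hflip : ∀ u v s t, orbEq σ (u, s) (v, t) → orbEq σ (u, !s) (v, !t) := by
    intro u v s t h
    have := orbEq_tau hconj' h
    simpa [hτ] using this
  -- the bijection
  let e : G'.ConnectedComponent × Bool → Quotient (orbSetoid σ) :=
    fun p => Quotient.mk _ (Quot.out p.1, p.2)
  have hbij : Function.Bijective e := by
    constructor
    · rintro ⟨K, s⟩ ⟨K', s'⟩ h
      have h2 : orbEq σ (Quot.out K, s) (Quot.out K', s') := Quotient.exact h
      have hKK' : K = K' := by
        have := horb _ _ h2
        have h3 : G'.connectedComponentMk K.out = G'.connectedComponentMk K'.out :=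
          ConnectedComponent.sound this
        rwa [show G'.connectedComponentMk (Quot.out K) = K from Quot.out_eq K,
          show G'.connectedComponentMk (Quot.out K') = K' from Quot.out_eq K'] at h3
      have hss' : s = s' := by
        by_contra hc
        have hs' : s' = !s := by cases s <;> cases s' <;> simp_all
        subst hKK'
        rw [hs'] at h2
        exact no_orbEq_tau hinvol hfix hconj' hne' (Quot.out K, s) h2
      rw [hKK', hss']
    · intro q
      refine Quotient.inductionOn q ?_
      rintro ⟨v, s⟩
      set K := G'.connectedComponentMk v with hK
      have hre : G'.Reachable v (Quot.out K) := by
        have h0 : G'.connectedComponentMk (Quot.out K) = G'.connectedComponentMk v :=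
          (Quot.out_eq K).trans hK
        exact (SimpleGraph.ConnectedComponent.exact h0).symm
      obtain ⟨s₁, t₁, h1⟩ := hQ v (Quot.out K) hre
      by_cases hs : s = s₁
      · exact ⟨(K, t₁), Quotient.sound (orbEq_symm (hs ▸ h1))⟩
      · have hs1 : s = !s₁ := by cases s <;> cases s₁ <;> simp_all
        have h2 := hflip _ _ _ _ h1
        rw [← hs1] at h2
        exact ⟨(K, !t₁), Quotient.sound (orbEq_symm h2)⟩
  have := Nat.card_eq_of_bijective e hbij
  rw [← this, Nat.card_prod]
  simp [Nat.card_eq_fintype_card, mul_comm]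

end Components

section Dihedral

variable {S : Type*}

/-- A fixed-point-free dihedral pair acting transitively has exactly two
orbits under the rotation `R ∘ B`. -/
theorem dihedral_two (R B : S → S) (hRR : ∀ z, R (R z) = z) (hBB : ∀ z, B (B z) = z)
    (hRfix : ∀ z, R z ≠ z) (hBfix : ∀ z, B z ≠ z)
    (htrans : ∀ (P : S → Prop) (x : S), P x → (∀ z, P z → P (R z) ∧ P (B z)) → ∀ y, P y)
    (x₀ : S) :
    Nat.card (Quotient (orbSetoid (fun z => R (B z)))) = 2 := by
  classical
  set ρ : S → S := fun z => R (B z) with hρ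
  have hconjB : ∀ z, ρ (B (ρ z)) = B z := by
    intro z; simp only [hρ, hBB, hRR]
  have hconjR : ∀ z, ρ (R (ρ z)) = R z := by
    intro z; simp only [hρ, hBB, hRR]
  have hneB : ∀ z, ρ z ≠ B z := by
    intro z h
    exact hRfix (B z) h
  have hnot : ∀ z, ¬ orbEq ρ z (B z) := fun z => no_orbEq_tau hBB hBfix hconjB hneB z
  -- R x₀ is in the class of B x₀
  have hRB : orbEq ρ (R x₀) (B x₀) := ⟨0, 1, by simp [hρ, hBB]⟩
  have hcover : ∀ y, orbEq ρ y x₀ ∨ orbEq ρ y (B x₀) := by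
    intro y
    refine htrans (fun z => orbEq ρ z x₀ ∨ orbEq ρ z (B x₀)) x₀ (Or.inl (orbEq_refl _ _))
      ?_ y
    rintro z (h | h)
    · constructor
      · exact Or.inr (orbEq_trans (orbEq_tau hconjR h) hRB)
      · exact Or.inr (orbEq_tau hconjB h)
    · constructor
      · refine Or.inl (orbEq_trans (orbEq_tau hconjR h) ?_)
        have : R (B x₀) = ρ x₀ := rfl
        rw [this]
        exact orbEq_symm (orbEq_step ρ x₀)
      · refine Or.inl (orbEq_trans (orbEq_tau hconjB h) ?_)
        rw [hBB]
        exact orbEq_refl _ _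
  let e : Bool → Quotient (orbSetoid ρ) := fun s =>
    if s then Quotient.mk _ (B x₀) else Quotient.mk _ x₀
  have hbij : Function.Bijective e := by
    constructor
    · intro s t h
      cases s <;> cases t <;> simp_all [e]
      · exact hnot x₀ (Quotient.exact h)
      · exact hnot x₀ (orbEq_symm (Quotient.exact h))
    · intro q
      refine Quotient.inductionOn q ?_
      intro y
      rcases hcover y with h | h
      · exact ⟨false, Quotient.sound (orbEq_symm h)⟩
      · exact ⟨true, Quotient.sound (orbEq_symm h)⟩
  rw [← Nat.card_eq_of_bijective e hbij]
  simp [Nat.card_eq_fintype_card]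

end Dihedral

section ZModAux

variable {n : ℕ} [NeZero n]

theorem zval_add_nat {a : ZMod n} {k : ℕ} (h : a.val + k < n) :
    (a + (k : ℕ)).val = a.val + k := by
  have : a + (k : ℕ) = ((a.val + k : ℕ) : ZMod n) := by
    push_cast [ZMod.natCast_zmod_val]
    ring
  rw [this, ZMod.val_cast_of_lt h]

theorem zval_sub_of_le {a b : ZMod n} (h : b.val ≤ a.val) :
    (a - b).val = a.val - b.val := by
  have ha := ZMod.val_lt a
  have h2 : a - b = ((a.val - b.val : ℕ) : ZMod n) := by
    push_cast [ZMod.natCast_zmod_val, Nat.cast_sub h]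
    ring
  rw [h2, ZMod.val_cast_of_lt (by omega : a.val - b.val < n)]

theorem zval_sub_of_lt {a b : ZMod n} (h : a.val < b.val) :
    (a - b).val = a.val + n - b.val := by
  have hb := ZMod.val_lt b
  have h2 : a - b = ((a.val + n - b.val : ℕ) : ZMod n) := by
    push_cast [ZMod.natCast_zmod_val, Nat.cast_sub (by omega : b.val ≤ a.val + n)]
    simp [ZMod.natCast_self]
  rw [h2, ZMod.val_cast_of_lt (by omega : a.val + n - b.val < n)]

theorem zval_inj {a b : ZMod n} (h : a.val = b.val) : a = b :=
  ZMod.val_injective n h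

theorem zsub_val_pos {a b : ZMod n} (h : a ≠ b) : 1 ≤ (a - b).val := by
  rcases Nat.eq_zero_or_pos ((a - b).val) with h0 | h0
  · exfalso
    have : a - b = 0 := (ZMod.val_eq_zero _).mp h0
    exact h (by rwa [sub_eq_zero] at this)
  · exact h0

theorem zadd_sub_self (a b : ZMod n) : a + (((b - a).val : ℕ) : ZMod n) = b := by
  rw [ZMod.natCast_zmod_val]
  ring

end ZModAux

section NextPrev

attribute [local instance] Classical.propDecidable

variable {n : ℕ} [NeZero n]

/-- Cyclic gap to the next element of `T` (the number of steps `≥ 1`). -/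
noncomputable def dNx (T : Finset (ZMod n)) (w : ZMod n) : ℕ :=
  if h : ∃ k : ℕ, w + ((k + 1 : ℕ) : ZMod n) ∈ T then Nat.find h + 1 else 1

/-- The cyclically next element of `T` strictly after `w`. -/
noncomputable def nextT (T : Finset (ZMod n)) (w : ZMod n) : ZMod n :=
  w + ((dNx T w : ℕ) : ZMod n)

noncomputable def dPv (T : Finset (ZMod n)) (w : ZMod n) : ℕ :=
  if h : ∃ k : ℕ, w - ((k + 1 : ℕ) : ZMod n) ∈ T then Nat.find h + 1 else 1

/-- The cyclically previous element of `T` strictly before `w`. -/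
noncomputable def prevT (T : Finset (ZMod n)) (w : ZMod n) : ZMod n :=
  w - ((dPv T w : ℕ) : ZMod n)

theorem next_exists {T : Finset (ZMod n)} (hT : T.Nonempty) (w : ZMod n) :
    ∃ k : ℕ, w + ((k + 1 : ℕ) : ZMod n) ∈ T := by
  obtain ⟨t, ht⟩ := hT
  refine ⟨(t - w - 1).val, ?_⟩
  have : w + (((t - w - 1).val + 1 : ℕ) : ZMod n) = t := by
    push_cast [ZMod.natCast_zmod_val]
    ring
  rwa [this]

theorem prev_exists {T : Finset (ZMod n)} (hT : T.Nonempty) (w : ZMod n) :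
    ∃ k : ℕ, w - ((k + 1 : ℕ) : ZMod n) ∈ T := by
  obtain ⟨t, ht⟩ := hT
  refine ⟨(w - t - 1).val, ?_⟩
  have : w - (((w - t - 1).val + 1 : ℕ) : ZMod n) = t := by
    push_cast [ZMod.natCast_zmod_val]
    ring
  rwa [this]

theorem dNx_pos (T : Finset (ZMod n)) (w : ZMod n) : 1 ≤ dNx T w := by
  unfold dNx; split <;> omega

theorem dPv_pos (T : Finset (ZMod n)) (w : ZMod n) : 1 ≤ dPv T w := by
  unfold dPv; split <;> omega

theorem next_mem {T : Finset (ZMod n)} (hT : T.Nonempty) (w : ZMod n) :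
    nextT T w ∈ T := by
  unfold nextT dNx
  rw [dif_pos (next_exists hT w)]
  exact Nat.find_spec (next_exists hT w)

theorem prev_mem {T : Finset (ZMod n)} (hT : T.Nonempty) (w : ZMod n) :
    prevT T w ∈ T := by
  unfold prevT dPv
  rw [dif_pos (prev_exists hT w)]
  exact Nat.find_spec (prev_exists hT w)

theorem next_min {T : Finset (ZMod n)} (hT : T.Nonempty) (w : ZMod n)
    {k : ℕ} (h1 : 1 ≤ k) (h2 : k < dNx T w) : w + ((k : ℕ) : ZMod n) ∉ T := by
  unfold dNx at h2
  rw [dif_pos (next_exists hT w)] at h2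
  have := Nat.find_min (next_exists hT w) (by omega : k - 1 < Nat.find (next_exists hT w))
  intro hc
  apply this
  have : k - 1 + 1 = k := by omega
  rwa [this]

theorem prev_min {T : Finset (ZMod n)} (hT : T.Nonempty) (w : ZMod n)
    {k : ℕ} (h1 : 1 ≤ k) (h2 : k < dPv T w) : w - ((k : ℕ) : ZMod n) ∉ T := by
  unfold dPv at h2
  rw [dif_pos (prev_exists hT w)] at h2
  have := Nat.find_min (prev_exists hT w) (by omega : k - 1 < Nat.find (prev_exists hT w))
  intro hc
  apply this
  have : k - 1 + 1 = k := by omega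
  rwa [this]

theorem dNx_le {T : Finset (ZMod n)} (hT : T.Nonempty) (w : ZMod n) {z : ZMod n}
    (hz : z ∈ T) (hne : z ≠ w) : dNx T w ≤ (z - w).val := by
  unfold dNx
  rw [dif_pos (next_exists hT w)]
  have h1 : 1 ≤ (z - w).val := zsub_val_pos hne
  have : w + (((z - w).val - 1 + 1 : ℕ) : ZMod n) ∈ T := by
    have he : (z - w).val - 1 + 1 = (z - w).val := by omega
    rw [he, zadd_sub_self]
    exact hz
  have := Nat.find_le (h := next_exists hT w) this
  omega

theorem dPv_le {T : Finset (ZMod n)} (hT : T.Nonempty) (w : ZMod n) {z : ZMod n}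
    (hz : z ∈ T) (hne : z ≠ w) : dPv T w ≤ (w - z).val := by
  unfold dPv
  rw [dif_pos (prev_exists hT w)]
  have h1 : 1 ≤ (w - z).val := zsub_val_pos (fun h => hne h.symm)
  have : w - (((w - z).val - 1 + 1 : ℕ) : ZMod n) ∈ T := by
    have he : (w - z).val - 1 + 1 = (w - z).val := by omega
    rw [he]
    have : w - (((w - z).val : ℕ) : ZMod n) = z := by
      rw [ZMod.natCast_zmod_val]; ring
    rwa [this]
  have := Nat.find_le (h := prev_exists hT w) this
  omega

/-- If some element other than `w` is in `T`, the next-distance is realized. -/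
theorem next_sub_val {T : Finset (ZMod n)} (hT : T.Nonempty) (w : ZMod n)
    {z : ZMod n} (hz : z ∈ T) (hne : z ≠ w) :
    (nextT T w - w).val = dNx T w ∧ nextT T w ≠ w := by
  have hle := dNx_le hT w hz hne
  have hlt : dNx T w < n := lt_of_le_of_lt hle (ZMod.val_lt _)
  have h1 : nextT T w - w = ((dNx T w : ℕ) : ZMod n) := by unfold nextT; ring
  have h2 : (nextT T w - w).val = dNx T w := by
    rw [h1, ZMod.val_cast_of_lt hlt]
  refine ⟨h2, fun hc => ?_⟩
  rw [hc] at h2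
  simp at h2
  have := dNx_pos T w
  omega

theorem prev_sub_val {T : Finset (ZMod n)} (hT : T.Nonempty) (w : ZMod n)
    {z : ZMod n} (hz : z ∈ T) (hne : z ≠ w) :
    (w - prevT T w).val = dPv T w ∧ prevT T w ≠ w := by
  have hle := dPv_le hT w hz hne
  have hlt : dPv T w < n := lt_of_le_of_lt hle (ZMod.val_lt _)
  have h1 : w - prevT T w = ((dPv T w : ℕ) : ZMod n) := by unfold prevT; ring
  have h2 : (w - prevT T w).val = dPv T w := by
    rw [h1, ZMod.val_cast_of_lt hlt]
  refine ⟨h2, fun hc => ?_⟩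
  rw [hc] at h2
  simp at h2
  have := dPv_pos T w
  omega

/-- Characterization of `nextT` by minimal cyclic distance. -/
theorem coreNext {T : Finset (ZMod n)} (hT : T.Nonempty) (w u : ZMod n)
    (hu : u ∈ T) (hne : u ≠ w)
    (hmin : ∀ v ∈ T, v ≠ w → (u - w).val ≤ (v - w).val) : nextT T w = u := by
  have h1 : 1 ≤ (u - w).val := zsub_val_pos hne
  have h2 : dNx T w ≤ (u - w).val := dNx_le hT w hu hne
  obtain ⟨hval, hne'⟩ := next_sub_val hT w hu hne
  have h3 : (u - w).val ≤ dNx T w := by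
    rw [← hval]
    exact hmin _ (next_mem hT w) hne'
  have h4 : (u - w).val = dNx T w := le_antisymm h3 h2
  have : nextT T w = w + (((u - w).val : ℕ) : ZMod n) := by
    unfold nextT; rw [h4]
  rw [this, zadd_sub_self]

theorem corePrev {T : Finset (ZMod n)} (hT : T.Nonempty) (w u : ZMod n)
    (hu : u ∈ T) (hne : u ≠ w)
    (hmin : ∀ v ∈ T, v ≠ w → (w - u).val ≤ (w - v).val) : prevT T w = u := by
  have h1 : 1 ≤ (w - u).val := zsub_val_pos (fun h => hne h.symm)
  have h2 : dPv T w ≤ (w - u).val := dPv_le hT w hu hne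
  obtain ⟨hval, hne'⟩ := prev_sub_val hT w hu hne
  have h3 : (w - u).val ≤ dPv T w := by
    rw [← hval]
    exact hmin _ (prev_mem hT w) hne'
  have h4 : (w - u).val = dPv T w := le_antisymm h3 h2
  have : prevT T w = w - (((w - u).val : ℕ) : ZMod n) := by
    unfold prevT; rw [h4]
  rw [this, ZMod.natCast_zmod_val]
  ring

end NextPrev


section Sigma

variable {n : ℕ} [NeZero n]

/-- The successor map on directed edges of the 2-factor `F(S)`. -/
noncomputable def sigmaF (T : Finset (ZMod n)) (r b : ZMod n → ZMod n) :
    ZMod n × Bool → ZMod n × Bool := fun x =>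
  match x with
  | (w, false) => if w ∈ T then (b w, true) else (w + 1, false)
  | (w, true) => if w - 1 ∈ T then (r (w - 1) + 1, false) else (w - 1, true)

/-- The return map on `T` for the 2-factor `F(S)`. -/
noncomputable def retF (T : Finset (ZMod n)) (r b : ZMod n → ZMod n)
    (t : ZMod n) : ZMod n := r (prevT T (b (nextT T t)))

theorem sigmaF_false_mem {T : Finset (ZMod n)} {r b : ZMod n → ZMod n} {w : ZMod n}
    (h : w ∈ T) : sigmaF T r b (w, false) = (b w, true) := by simp [sigmaF, h]

theorem sigmaF_false_not_mem {T : Finset (ZMod n)} {r b : ZMod n → ZMod n} {w : ZMod n}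
    (h : w ∉ T) : sigmaF T r b (w, false) = (w + 1, false) := by simp [sigmaF, h]

theorem sigmaF_true_mem {T : Finset (ZMod n)} {r b : ZMod n → ZMod n} {w : ZMod n}
    (h : w - 1 ∈ T) : sigmaF T r b (w, true) = (r (w - 1) + 1, false) := by
  simp [sigmaF, h]

theorem sigmaF_true_not_mem {T : Finset (ZMod n)} {r b : ZMod n → ZMod n} {w : ZMod n}
    (h : w - 1 ∉ T) : sigmaF T r b (w, true) = (w - 1, true) := by simp [sigmaF, h]

theorem walk_fwd (T : Finset (ZMod n)) (r b : ZMod n → ZMod n) :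
    ∀ (j : ℕ) (w : ZMod n), (∀ i : ℕ, i < j → w + ((i : ℕ) : ZMod n) ∉ T) →
      (sigmaF T r b)^[j] (w, false) = (w + ((j : ℕ) : ZMod n), false) := by
  intro j
  induction j with
  | zero => intro w _; simp
  | succ j ih =>
    intro w hw
    have h0 : w ∉ T := by simpa using hw 0 (by omega)
    rw [Function.iterate_succ_apply, sigmaF_false_not_mem h0]
    have hstep := ih (w + 1) (by
      intro i hi hc
      apply hw (i + 1) (by omega)
      have he : w + ((i + 1 : ℕ) : ZMod n) = w + 1 + ((i : ℕ) : ZMod n) := by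
        push_cast; ring
      rw [he]
      exact hc)
    rw [hstep]
    have he : w + 1 + ((j : ℕ) : ZMod n) = w + ((j + 1 : ℕ) : ZMod n) := by
      push_cast; ring
    rw [he]

theorem walk_bwd (T : Finset (ZMod n)) (r b : ZMod n → ZMod n) :
    ∀ (j : ℕ) (w : ZMod n), (∀ i : ℕ, i < j → w - ((i : ℕ) : ZMod n) - 1 ∉ T) →
      (sigmaF T r b)^[j] (w, true) = (w - ((j : ℕ) : ZMod n), true) := by
  intro j
  induction j with
  | zero => intro w _; simp
  | succ j ih =>
    intro w hw
    have h0 : w - 1 ∉ T := by simpa using hw 0 (by omega)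
    rw [Function.iterate_succ_apply, sigmaF_true_not_mem h0]
    have hstep := ih (w - 1) (by
      intro i hi hc
      apply hw (i + 1) (by omega)
      have he : w - ((i + 1 : ℕ) : ZMod n) - 1 = w - 1 - ((i : ℕ) : ZMod n) - 1 := by
        push_cast; ring
      rw [he]
      exact hc)
    rw [hstep]
    have he : w - 1 - ((j : ℕ) : ZMod n) = w - ((j + 1 : ℕ) : ZMod n) := by
      push_cast; ring
    rw [he]

/-- The walk from the left end of the arc after `t` first returns to the set of
left ends at the arc after `retF t`. -/
theorem ret_spec (T : Finset (ZMod n)) (r b : ZMod n → ZMod n)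
    (hT : T.Nonempty) (hbT : ∀ i ∈ T, b i ∈ T) (hnb : ∀ i ∈ T, i + 1 ∉ T)
    {t : ZMod n} (ht : t ∈ T) :
    ∃ m, 1 ≤ m ∧ (sigmaF T r b)^[m] (t + 1, false) = (retF T r b t + 1, false) ∧
      ∀ j, 1 ≤ j → j < m → ∀ u ∈ T, (sigmaF T r b)^[j] (t + 1, false) ≠ (u + 1, false) := by
  set σ := sigmaF T r b with hσ
  set nx := nextT T t with hnx
  have hnxT : nx ∈ T := next_mem hT t
  set d := dNx T t with hd
  have hd1 : 1 ≤ d := dNx_pos T t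
  set u := b nx with hu
  have huT : u ∈ T := hbT nx hnxT
  set q := dPv T u with hq
  have hq1 : 1 ≤ q := dPv_pos T u
  set p := prevT T u with hp
  have hpT : p ∈ T := prev_mem hT u
  have hfwd : ∀ i : ℕ, i < d - 1 → t + 1 + ((i : ℕ) : ZMod n) ∉ T := by
    intro i hi hc
    apply next_min hT t (k := i + 1) (by omega) (by omega)
    have he : t + ((i + 1 : ℕ) : ZMod n) = t + 1 + ((i : ℕ) : ZMod n) := by
      push_cast; ring
    rw [he]
    exact hc
  have hcast : t + 1 + ((d - 1 : ℕ) : ZMod n) = nx := by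
    rw [hnx]
    unfold nextT
    rw [← hd]
    push_cast [Nat.cast_sub hd1]
    ring
  have hWnx : σ^[d - 1] (t + 1, false) = (nx, false) := by
    rw [walk_fwd T r b (d - 1) (t + 1) hfwd, hcast]
  have hW2 : σ^[d] (t + 1, false) = (u, true) := by
    have hsplit : d = (d - 1) + 1 := by omega
    rw [hsplit, Function.iterate_succ_apply', hWnx, hσ, sigmaF_false_mem hnxT, ← hu]
  have hbwd : ∀ i' : ℕ, i' < q - 1 → u - ((i' : ℕ) : ZMod n) - 1 ∉ T := by
    intro i' hi' hc
    apply prev_min hT u (k := i' + 1) (by omega) (by omega)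
    have he : u - ((i' + 1 : ℕ) : ZMod n) = u - ((i' : ℕ) : ZMod n) - 1 := by
      push_cast; ring
    rw [he]
    exact hc
  have hW3 : ∀ i : ℕ, i ≤ q - 1 →
      σ^[d + i] (t + 1, false) = (u - ((i : ℕ) : ZMod n), true) := by
    intro i hi
    rw [Nat.add_comm d i, Function.iterate_add_apply, hW2]
    exact walk_bwd T r b i u (fun i' hi' => hbwd i' (by omega))
  have hplast : u - ((q - 1 : ℕ) : ZMod n) - 1 = p := by
    rw [hp]
    unfold prevT
    rw [← hq]
    push_cast [Nat.cast_sub hq1]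
    ring
  have hW4 : σ^[d + q] (t + 1, false) = (r p + 1, false) := by
    have hsplit : d + q = (d + (q - 1)) + 1 := by omega
    rw [hsplit, Function.iterate_succ_apply', hW3 (q - 1) (by omega), hσ,
      sigmaF_true_mem (by rw [hplast]; exact hpT), hplast]
  refine ⟨d + q, by omega, ?_, ?_⟩
  · rw [hW4]
    rfl
  · intro j hj1 hj2 v hv hc
    rcases Nat.lt_or_ge j d with hjd | hjd
    · rcases Nat.lt_or_ge j (d - 1) with hjd' | hjd'
      · have hWj : σ^[j] (t + 1, false) = (t + 1 + ((j : ℕ) : ZMod n), false) :=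
          walk_fwd T r b j (t + 1) (fun i hi => hfwd i (by omega))
        rw [hWj] at hc
        have hveq : t + ((j : ℕ) : ZMod n) = v := by
          have h5 := congrArg Prod.fst hc
          simp only at h5
          linear_combination h5
        apply next_min hT t (k := j) (by omega) (by omega)
        rw [hveq]
        exact hv
      · have hj' : j = d - 1 := by omega
        rw [hj', hWnx] at hc
        have hveq : nx = v + 1 := congrArg Prod.fst hc
        apply hnb v hv
        rw [← hveq]
        exact hnxT
    · have hj' : j = d + (j - d) := by omega
      rw [hj', hW3 (j - d) (by omega)] at hc
      exact absurd (congrArg Prod.snd hc) (by simp)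

/-- Every `sigmaF`-orbit meets the set of left arc-ends. -/
theorem meet_spec (T : Finset (ZMod n)) (r b : ZMod n → ZMod n)
    (hT : T.Nonempty) (hrT : ∀ i ∈ T, r i ∈ T)
    (x : ZMod n × Bool) :
    ∃ k, ∃ u ∈ T, (sigmaF T r b)^[k] x = (u + 1, false) := by
  set σ := sigmaF T r b with hσ
  have htrue : ∀ w : ZMod n, ∃ k, ∃ u ∈ T, σ^[k] (w, true) = (u + 1, false) := by
    intro w
    set q := dPv T w with hq
    have hq1 : 1 ≤ q := dPv_pos T w
    set p := prevT T w with hp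
    have hpT : p ∈ T := prev_mem hT w
    have hbwd : ∀ i' : ℕ, i' < q - 1 → w - ((i' : ℕ) : ZMod n) - 1 ∉ T := by
      intro i' hi' hc
      apply prev_min hT w (k := i' + 1) (by omega) (by omega)
      have he : w - ((i' + 1 : ℕ) : ZMod n) = w - ((i' : ℕ) : ZMod n) - 1 := by
        push_cast; ring
      rw [he]
      exact hc
    have hW3 : σ^[q - 1] (w, true) = (w - ((q - 1 : ℕ) : ZMod n), true) :=
      walk_bwd T r b (q - 1) w hbwd
    have hplast : w - ((q - 1 : ℕ) : ZMod n) - 1 = p := by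
      rw [hp]
      unfold prevT
      rw [← hq]
      push_cast [Nat.cast_sub hq1]
      ring
    refine ⟨q, r p, hrT p hpT, ?_⟩
    have hsplit : q = (q - 1) + 1 := by omega
    rw [hsplit, Function.iterate_succ_apply', hW3, hσ,
      sigmaF_true_mem (by rw [hplast]; exact hpT), hplast]
  rcases x with ⟨w, s⟩
  cases s
  · set d := dNx T (w - 1) with hd
    have hd1 : 1 ≤ d := dNx_pos T (w - 1)
    set nx := nextT T (w - 1) with hnx
    have hnxT : nx ∈ T := next_mem hT (w - 1)
    have hfwd : ∀ i : ℕ, i < d - 1 → w + ((i : ℕ) : ZMod n) ∉ T := by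
      intro i hi hc
      apply next_min hT (w - 1) (k := i + 1) (by omega) (by omega)
      have he : w - 1 + ((i + 1 : ℕ) : ZMod n) = w + ((i : ℕ) : ZMod n) := by
        push_cast; ring
      rw [he]
      exact hc
    have hcast : w + ((d - 1 : ℕ) : ZMod n) = nx := by
      rw [hnx]
      unfold nextT
      rw [← hd]
      push_cast [Nat.cast_sub hd1]
      ring
    have hW1 : σ^[d - 1] (w, false) = (nx, false) := by
      rw [walk_fwd T r b (d - 1) w hfwd, hcast]
    have hW2 : σ^[d] (w, false) = (b nx, true) := by
      have hsplit : d = (d - 1) + 1 := by omega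
      rw [hsplit, Function.iterate_succ_apply', hW1, hσ, sigmaF_false_mem hnxT]
    obtain ⟨k, u, huT, hk⟩ := htrue (b nx)
    refine ⟨k + d, u, huT, ?_⟩
    rw [Function.iterate_add_apply, hW2, hk]
  · exact htrue w

end Sigma

section FScount

/-- The orbit count of the return map is twice the component count of `F(S)`. -/
theorem fs_count {n : ℕ} [NeZero n] (hn : 3 ≤ n) (G : SimpleGraph (ZMod n))
    (T : Finset (ZMod n)) (r b : ZMod n → ZMod n) (hT : T.Nonempty)
    (hr : ∀ i ∈ T, r i ∈ T ∧ r (r i) = i ∧ (auxRed n G).Adj i (r i))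
    (hb : ∀ i ∈ T, b i ∈ T ∧ b (b i) = i ∧ (auxBlue n G).Adj i (b i))
    (hnb : ∀ i ∈ T, i + 1 ∉ T)
    (ret' : {x : ZMod n // x ∈ T} → {x : ZMod n // x ∈ T})
    (hret' : ∀ a, (ret' a : ZMod n) = retF T r b (a : ZMod n)) :
    Nat.card (Quotient (orbSetoid ret'))
      = 2 * Nat.card (FSgraph n T r b).ConnectedComponent := by
  classical
  haveI : Fact (1 < n) := ⟨by omega⟩
  have h10 : (1 : ZMod n) ≠ 0 := by
    intro h
    have h1 := congrArg ZMod.val h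
    rw [ZMod.val_one n, ZMod.val_zero] at h1
    omega
  have hsucc : ∀ w : ZMod n, w + 1 ≠ w := by
    intro w h
    apply h10
    have : w + 1 = w + 0 := by rw [add_zero]; exact h
    exact add_left_cancel this
  have hbne : ∀ w ∈ T, b w ≠ w := by
    intro w hw h
    exact ((hb w hw).2.2.1).ne h.symm
  have hrne : ∀ w ∈ T, r w ≠ w := by
    intro w hw h
    have := ((hr w hw).2.2.1).ne
    apply this
    rw [h]
  set σ := sigmaF T r b with hσ
  have hconj : ∀ x : ZMod n × Bool, σ ((σ x).1, !(σ x).2) = (x.1, !x.2) := by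
    rintro ⟨w, s⟩
    cases s
    · by_cases hw : w ∈ T
      · rw [hσ, sigmaF_false_mem hw]
        show sigmaF T r b (b w, false) = (w, true)
        rw [sigmaF_false_mem ((hb w hw).1), (hb w hw).2.1]
      · rw [hσ, sigmaF_false_not_mem hw]
        show sigmaF T r b (w + 1, true) = (w, true)
        rw [sigmaF_true_not_mem (by rw [add_sub_cancel_right]; exact hw),
          add_sub_cancel_right]
    · by_cases hw : w - 1 ∈ T
      · rw [hσ, sigmaF_true_mem hw]
        show sigmaF T r b (r (w - 1) + 1, true) = (w, false)
        rw [sigmaF_true_mem (by rw [add_sub_cancel_right]; exact (hr _ hw).1),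
          add_sub_cancel_right, (hr _ hw).2.1, sub_add_cancel]
      · rw [hσ, sigmaF_true_not_mem hw]
        show sigmaF T r b (w - 1, false) = (w, false)
        rw [sigmaF_false_not_mem hw, sub_add_cancel]
  have hne : ∀ x : ZMod n × Bool, σ x ≠ (x.1, !x.2) := by
    rintro ⟨w, s⟩
    cases s
    · by_cases hw : w ∈ T
      · rw [hσ, sigmaF_false_mem hw]
        intro h
        exact hbne w hw (congrArg Prod.fst h)
      · rw [hσ, sigmaF_false_not_mem hw]
        intro h
        exact absurd (congrArg Prod.snd h) (by simp)
    · by_cases hw : w - 1 ∈ T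
      · rw [hσ, sigmaF_true_mem hw]
        intro h
        have h1 : r (w - 1) + 1 = w := congrArg Prod.fst h
        apply hrne (w - 1) hw
        have : r (w - 1) = w - 1 := by
          have := congrArg (· - 1) h1
          simpa using this
        exact this
      · rw [hσ, sigmaF_true_not_mem hw]
        intro h
        exact absurd (congrArg Prod.snd h) (by simp)
  have hFSadj : ∀ x y : ZMod n, (FSgraph n T r b).Adj x y ↔ x ≠ y ∧
      (((y = x + 1 ∧ x ∉ T) ∨ (x - 1 ∈ T ∧ y = r (x - 1) + 1) ∨ (x ∈ T ∧ y = b x)) ∨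
       ((x = y + 1 ∧ y ∉ T) ∨ (y - 1 ∈ T ∧ x = r (y - 1) + 1) ∨ (y ∈ T ∧ x = b y))) := by
    intro x y
    exact SimpleGraph.fromRel_adj _ x y
  have hstep : ∀ x : ZMod n × Bool, (FSgraph n T r b).Adj x.1 (σ x).1 := by
    rintro ⟨w, s⟩
    cases s
    · by_cases hw : w ∈ T
      · rw [hσ, sigmaF_false_mem hw]
        show (FSgraph n T r b).Adj w (b w)
        exact (hFSadj _ _).mpr ⟨fun h => hbne w hw h.symm, Or.inl (Or.inr (Or.inr ⟨hw, rfl⟩))⟩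
      · rw [hσ, sigmaF_false_not_mem hw]
        show (FSgraph n T r b).Adj w (w + 1)
        exact (hFSadj _ _).mpr ⟨fun h => hsucc w h.symm, Or.inl (Or.inl ⟨rfl, hw⟩)⟩
    · by_cases hw : w - 1 ∈ T
      · rw [hσ, sigmaF_true_mem hw]
        show (FSgraph n T r b).Adj w (r (w - 1) + 1)
        refine (hFSadj _ _).mpr ⟨?_, Or.inl (Or.inr (Or.inl ⟨hw, rfl⟩))⟩
        intro h
        apply hrne (w - 1) hw
        have := congrArg (· - 1) h
        simpa using this.symm
      · rw [hσ, sigmaF_true_not_mem hw]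
        show (FSgraph n T r b).Adj w (w - 1)
        refine (hFSadj _ _).mpr ⟨?_, Or.inr (Or.inl ⟨by rw [sub_add_cancel], hw⟩)⟩
        intro h
        apply hsucc w
        calc w + 1 = w - 1 + 1 := by rw [← h]
          _ = w := by rw [sub_add_cancel]
  have hadj : ∀ u v : ZMod n, (FSgraph n T r b).Adj u v →
      ∃ s t, orbEq σ (u, s) (v, t) := by
    have hone : ∀ u v : ZMod n,
        ((v = u + 1 ∧ u ∉ T) ∨ (u - 1 ∈ T ∧ v = r (u - 1) + 1) ∨ (u ∈ T ∧ v = b u)) →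
        ∃ s t, orbEq σ (u, s) (v, t) := by
      rintro u v (⟨h1, h2⟩ | ⟨h1, h2⟩ | ⟨h1, h2⟩)
      · exact ⟨false, false, ⟨1, 0, by
          simp only [Function.iterate_one, Function.iterate_zero_apply]
          rw [hσ, sigmaF_false_not_mem h2, h1]⟩⟩
      · exact ⟨true, false, ⟨1, 0, by
          simp only [Function.iterate_one, Function.iterate_zero_apply]
          rw [hσ, sigmaF_true_mem h1, h2]⟩⟩
      · exact ⟨false, true, ⟨1, 0, by
          simp only [Function.iterate_one, Function.iterate_zero_apply]
          rw [hσ, sigmaF_false_mem h1, h2]⟩⟩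
    intro u v h
    rcases ((hFSadj u v).mp h).2 with h' | h'
    · exact hone u v h'
    · obtain ⟨s, t, h''⟩ := hone v u h'
      exact ⟨t, s, orbEq_symm h''⟩
  have hcomp := card_quot_two_mul (FSgraph n T r b) σ hconj hne hstep hadj
  have hsec := card_quot_section σ
    (fun a : {x : ZMod n // x ∈ T} => ((a : ZMod n) + 1, false)) (by
      intro a a' h
      have h1 : (a : ZMod n) + 1 = (a' : ZMod n) + 1 := congrArg Prod.fst h
      exact Subtype.ext (add_right_cancel h1))
    ret'
    (by
      intro a
      obtain ⟨m, hm1, hm2, hm3⟩ := ret_spec T r b hT (fun i hi => (hb i hi).1) hnb a.2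
      refine ⟨m, hm1, ?_, ?_⟩
      · rw [hm2]
        show (retF T r b (a : ZMod n) + 1, false) = ((ret' a : ZMod n) + 1, false)
        rw [hret']
      · intro j hj1 hj2 a' hc
        exact hm3 j hj1 hj2 (a' : ZMod n) a'.2 hc)
    (by
      intro x
      obtain ⟨k, u, hu, hk⟩ := meet_spec T r b hT (fun i hi => (hr i hi).1) x
      exact ⟨k, ⟨u, hu⟩, hk⟩)
  rw [← hsec, hcomp]

end FScount

-- MORE_HERE

/-- **Going up.**  Let `S ⊆ A(G,H)` be a disjoint union of colour-alternating cycles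
without neighbouring vertices (vertex set `T`, red/blue partners `r`, `b`), and let
`C` be a cycle of `S` (vertex set `T' ⊆ T`, nonempty, closed under `r` and `b` and
connected).  Let `U` be an ordered subgraph of `A` without neighbouring vertices
that is a going-up version `U(S,C)` of `S`: the vertices of `S` are re-embedded by
`g` and the new copies `s_{i+1/2}` of the vertices of `C` by `g'`, injectively,
preserving the order of `U(S,C)` (each `g' x` comes right after `g x`), with all
required red/blue edges present in `A`.  Then the 2-factor `F(U)` has exactly one
more connected component than `F(S)`. -/
theorem stmt_10 (n : ℕ) [NeZero n] (hn : 3 ≤ n) (G : SimpleGraph (ZMod n))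
    (hH : ∀ i : ZMod n, G.Adj i (i + 1))
    (T T' : Finset (ZMod n)) (r b g g' : ZMod n → ZMod n)
    -- `S` is a disjoint union of colour-alternating cycles in `A` …
    (hr : ∀ i ∈ T, r i ∈ T ∧ r (r i) = i ∧ (auxRed n G).Adj i (r i))
    (hb : ∀ i ∈ T, b i ∈ T ∧ b (b i) = i ∧ (auxBlue n G).Adj i (b i))
    -- … without neighbouring vertices
    (hnb : ∀ i ∈ T, i + 1 ∉ T)
    -- `C` is a cycle of `S` with vertex set `T'`
    (hT'T : T' ⊆ T) (hT'ne : T'.Nonempty)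
    (hT'cl : ∀ x ∈ T', r x ∈ T' ∧ b x ∈ T')
    (hT'conn : ∀ (P : ZMod n → Prop) (x : ZMod n), x ∈ T' → P x →
      (∀ z ∈ T', P z → P (r z) ∧ P (b z)) → ∀ y ∈ T', P y)
    -- `U` is embedded injectively via `g` (original vertices) and `g'` (copies)
    (hginj : ∀ x ∈ T, ∀ y ∈ T, g x = g y → x = y)
    (hg'inj : ∀ x ∈ T', ∀ y ∈ T', g' x = g' y → x = y)
    (hgg' : ∀ x ∈ T, ∀ y ∈ T', g x ≠ g' y)
    -- the embedding preserves the order of `U(S,C)`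
    (hord1 : ∀ x ∈ T, ∀ y ∈ T, x.val < y.val → (g x).val < (g y).val)
    (hord2 : ∀ x ∈ T', (g x).val < (g' x).val)
    (hord3 : ∀ x ∈ T', ∀ y ∈ T, x.val < y.val → (g' x).val < (g y).val)
    -- `U` is a subgraph of `A`: all its coloured edges are present in `A`
    (hUA : ∀ x ∈ T,
      (auxRed n G).Adj (g x) (g (r x)) ∧ (auxBlue n G).Adj (g x) (g (b x)))
    (hUA' : ∀ x ∈ T',
      (auxRed n G).Adj (g' x) (g' (r x)) ∧ (auxBlue n G).Adj (g' x) (g' (b x)))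
    -- `U` has no neighbouring vertices
    (hnbU : ∀ x : ZMod n,
      x ∈ g '' (T : Set (ZMod n)) ∪ g' '' (T' : Set (ZMod n)) →
      x + 1 ∉ g '' (T : Set (ZMod n)) ∪ g' '' (T' : Set (ZMod n))) :
    Nat.card (FUgraph n T T' r b g g').ConnectedComponent
      = Nat.card (FSgraph n T r b).ConnectedComponent + 1 := by
  classical
  obtain ⟨z0, hz0⟩ := hT'ne
  have hT : T.Nonempty := ⟨z0, hT'T hz0⟩
  set W : Finset (ZMod n) := T.image g ∪ T'.image g' with hWdef
  have hmemW : ∀ v, v ∈ W ↔ (∃ s ∈ T, g s = v) ∨ (∃ s ∈ T', g' s = v) := by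
    intro v
    simp [hWdef, Finset.mem_union, Finset.mem_image]
  have hgW : ∀ s ∈ T, g s ∈ W := fun s hs => (hmemW _).mpr (Or.inl ⟨s, hs, rfl⟩)
  have hg'W : ∀ s ∈ T', g' s ∈ W := fun s hs => (hmemW _).mpr (Or.inr ⟨s, hs, rfl⟩)
  have hTW : W.Nonempty := ⟨g' z0, hg'W z0 hz0⟩
  -- the transported partner functions
  set rU : ZMod n → ZMod n := fun x =>
    if h : ∃ s, s ∈ T ∧ g s = x then g (r h.choose)
    else if h' : ∃ s, s ∈ T' ∧ g' s = x then g' (r h'.choose) else x with hrUdef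
  set bU : ZMod n → ZMod n := fun x =>
    if h : ∃ s, s ∈ T ∧ g s = x then g (b h.choose)
    else if h' : ∃ s, s ∈ T' ∧ g' s = x then g' (b h'.choose) else x with hbUdef
  have hrUg : ∀ s ∈ T, rU (g s) = g (r s) := by
    intro s hs
    have h : ∃ s', s' ∈ T ∧ g s' = g s := ⟨s, hs, rfl⟩
    simp only [hrUdef]
    rw [dif_pos h]
    obtain ⟨h1, h2⟩ := h.choose_spec
    rw [hginj _ h1 _ hs h2]
  have hbUg : ∀ s ∈ T, bU (g s) = g (b s) := by
    intro s hs
    have h : ∃ s', s' ∈ T ∧ g s' = g s := ⟨s, hs, rfl⟩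
    simp only [hbUdef]
    rw [dif_pos h]
    obtain ⟨h1, h2⟩ := h.choose_spec
    rw [hginj _ h1 _ hs h2]
  have hnog : ∀ z ∈ T', ¬ ∃ s, s ∈ T ∧ g s = g' z := by
    rintro z hz ⟨s, hs, hc⟩
    exact hgg' s hs z hz hc
  have hrUg' : ∀ s ∈ T', rU (g' s) = g' (r s) := by
    intro s hs
    have h' : ∃ s', s' ∈ T' ∧ g' s' = g' s := ⟨s, hs, rfl⟩
    simp only [hrUdef]
    rw [dif_neg (hnog s hs), dif_pos h']
    obtain ⟨h1, h2⟩ := h'.choose_spec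
    rw [hg'inj _ h1 _ hs h2]
  have hbUg' : ∀ s ∈ T', bU (g' s) = g' (b s) := by
    intro s hs
    have h' : ∃ s', s' ∈ T' ∧ g' s' = g' s := ⟨s, hs, rfl⟩
    simp only [hbUdef]
    rw [dif_neg (hnog s hs), dif_pos h']
    obtain ⟨h1, h2⟩ := h'.choose_spec
    rw [hg'inj _ h1 _ hs h2]
  -- the union of the two images as a set
  have hsetW : (g '' (T : Set (ZMod n)) ∪ g' '' (T' : Set (ZMod n))) = (W : Set (ZMod n)) := by
    rw [hWdef]
    push_cast
    simp [Finset.coe_union, Finset.coe_image]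
  have hmemW' : ∀ x : ZMod n,
      x ∈ g '' (T : Set (ZMod n)) ∪ g' '' (T' : Set (ZMod n)) ↔ x ∈ W := by
    intro x
    rw [hsetW]
    exact Finset.mem_coe
  -- `F(U)` is the 2-factor of the transported system
  have hEq : FUgraph n T T' r b g g' = FSgraph n W rU bU := by
    unfold FUgraph FSgraph
    congr 1
    funext x y
    apply propext
    constructor
    · rintro (⟨h1, h2⟩ | ⟨s, hs, h1, h2⟩ | ⟨s, hs, h1, h2⟩ | ⟨s, hs, h1, h2⟩ | ⟨s, hs, h1, h2⟩)
      · exact Or.inl ⟨h1, fun hc => h2 ((hmemW' x).mpr hc)⟩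
      · refine Or.inr (Or.inl ⟨?_, ?_⟩)
        · rw [h1, add_sub_cancel_right]
          exact hgW s hs
        · rw [h1, add_sub_cancel_right, hrUg s hs, h2]
      · refine Or.inr (Or.inr ⟨?_, ?_⟩)
        · rw [h1]; exact hgW s hs
        · rw [h1, hbUg s hs, h2]
      · refine Or.inr (Or.inl ⟨?_, ?_⟩)
        · rw [h1, add_sub_cancel_right]
          exact hg'W s hs
        · rw [h1, add_sub_cancel_right, hrUg' s hs, h2]
      · refine Or.inr (Or.inr ⟨?_, ?_⟩)
        · rw [h1]; exact hg'W s hs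
        · rw [h1, hbUg' s hs, h2]
    · rintro (⟨h1, h2⟩ | ⟨h1, h2⟩ | ⟨h1, h2⟩)
      · exact Or.inl ⟨h1, fun hc => h2 ((hmemW' x).mp hc)⟩
      · rcases (hmemW _).mp h1 with ⟨s, hs, h3⟩ | ⟨s, hs, h3⟩
        · refine Or.inr (Or.inl ⟨s, hs, ?_, ?_⟩)
          · rw [h3, sub_add_cancel]
          · rw [h2, ← h3, hrUg s hs]
        · refine Or.inr (Or.inr (Or.inr (Or.inl ⟨s, hs, ?_, ?_⟩)))
          · rw [h3, sub_add_cancel]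
          · rw [h2, ← h3, hrUg' s hs]
      · rcases (hmemW _).mp h1 with ⟨s, hs, h3⟩ | ⟨s, hs, h3⟩
        · refine Or.inr (Or.inr (Or.inl ⟨s, hs, h3.symm, ?_⟩))
          rw [h2, ← h3, hbUg s hs]
        · refine Or.inr (Or.inr (Or.inr (Or.inr ⟨s, hs, h3.symm, ?_⟩)))
          rw [h2, ← h3, hbUg' s hs]
  -- the transported system satisfies the standing hypotheses
  have hrW : ∀ i ∈ W, rU i ∈ W ∧ rU (rU i) = i ∧ (auxRed n G).Adj i (rU i) := by
    intro i hi
    rcases (hmemW i).mp hi with ⟨s, hs, rfl⟩ | ⟨s, hs, rfl⟩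
    · rw [hrUg s hs]
      refine ⟨hgW _ (hr s hs).1, ?_, ?_⟩
      · rw [hrUg _ (hr s hs).1, (hr s hs).2.1]
      · exact (hUA s hs).1
    · rw [hrUg' s hs]
      refine ⟨hg'W _ (hT'cl s hs).1, ?_, ?_⟩
      · rw [hrUg' _ (hT'cl s hs).1, (hr s (hT'T hs)).2.1]
      · exact (hUA' s hs).1
  have hbW : ∀ i ∈ W, bU i ∈ W ∧ bU (bU i) = i ∧ (auxBlue n G).Adj i (bU i) := by
    intro i hi
    rcases (hmemW i).mp hi with ⟨s, hs, rfl⟩ | ⟨s, hs, rfl⟩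
    · rw [hbUg s hs]
      refine ⟨hgW _ (hb s hs).1, ?_, ?_⟩
      · rw [hbUg _ (hb s hs).1, (hb s hs).2.1]
      · exact (hUA s hs).2
    · rw [hbUg' s hs]
      refine ⟨hg'W _ (hT'cl s hs).2, ?_, ?_⟩
      · rw [hbUg' _ (hT'cl s hs).2, (hb s (hT'T hs)).2.1]
      · exact (hUA' s hs).2
  have hnbW : ∀ i ∈ W, i + 1 ∉ W := by
    intro i hi hc
    exact hnbU i ((hmemW' i).mpr hi) ((hmemW' (i + 1)).mpr hc)
  -- the combined order embedding `hh`
  set hh : ZMod n → ZMod n := fun t => if t ∈ T' then g' t else g t with hhdef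
  have hhT' : ∀ t ∈ T', hh t = g' t := by
    intro t ht; simp only [hhdef, if_pos ht]
  have hhnT' : ∀ t, t ∉ T' → hh t = g t := by
    intro t ht; simp only [hhdef, if_neg ht]
  have hhW : ∀ t ∈ T, hh t ∈ W := by
    intro t ht
    by_cases h : t ∈ T'
    · rw [hhT' t h]; exact hg'W t h
    · rw [hhnT' t h]; exact hgW t ht
  have hrT'iff : ∀ p ∈ T, (r p ∈ T' ↔ p ∈ T') := by
    intro p hp
    constructor
    · intro h
      have := (hT'cl (r p) h).1
      rwa [(hr p hp).2.1] at this
    · intro h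
      exact (hT'cl p h).1
  have hrUhh : ∀ p ∈ T, rU (hh p) = hh (r p) := by
    intro p hp
    by_cases h : p ∈ T'
    · rw [hhT' p h, hrUg' p h, hhT' (r p) ((hT'cl p h).1)]
    · rw [hhnT' p h, hrUg p hp, hhnT' (r p) (fun hc => h ((hrT'iff p hp).mp hc))]
  have hvlt : ∀ x : ZMod n, x.val < n := fun x => ZMod.val_lt x
  have htri : ∀ x y : ZMod n, x = y ∨ x.val < y.val ∨ y.val < x.val := by
    intro x y
    rcases lt_trichotomy x.val y.val with h | h | h
    · exact Or.inr (Or.inl h)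
    · exact Or.inl (zval_inj h)
    · exact Or.inr (Or.inr h)
  have hTnn : ∀ t ∈ T, ∃ z ∈ T, z ≠ t := by
    intro t ht
    by_cases h : z0 = t
    · subst h
      refine ⟨r z0, hT'T (hT'cl z0 hz0).1, ?_⟩
      intro hc
      exact ((hr z0 (hT'T hz0)).2.2.1).ne (by rw [hc])
    · exact ⟨z0, hT'T hz0, h⟩
  have hTne : ∀ t ∈ T, nextT T t ≠ t := by
    intro t ht
    obtain ⟨z, hz, hzt⟩ := hTnn t ht
    exact (next_sub_val hT t hz hzt).2
  have hTmin : ∀ t ∈ T, ∀ z ∈ T, z ≠ t → (nextT T t - t).val ≤ (z - t).val := by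
    intro t ht z hz hzt
    obtain ⟨z1, hz1, hz1t⟩ := hTnn t ht
    rw [(next_sub_val hT t hz1 hz1t).1]
    exact dNx_le hT t hz hzt
  have hPne : ∀ t ∈ T, prevT T t ≠ t := by
    intro t ht
    obtain ⟨z, hz, hzt⟩ := hTnn t ht
    exact (prev_sub_val hT t hz hzt).2
  have hPmin : ∀ t ∈ T, ∀ z ∈ T, z ≠ t → (t - prevT T t).val ≤ (t - z).val := by
    intro t ht z hz hzt
    obtain ⟨z1, hz1, hz1t⟩ := hTnn t ht
    rw [(prev_sub_val hT t hz1 hz1t).1]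
    exact dPv_le hT t hz hzt
  -- next/prev computations (the interleaving formulas)
  have hN1 : ∀ y ∈ T', nextT W (g y) = g' y := by
    intro y hy
    have hyT := hT'T hy
    have hAB : (g y).val < (g' y).val := hord2 y hy
    apply coreNext hTW (g y) (g' y) (hg'W y hy) (Ne.symm (hgg' y hyT y hy))
    intro v hv hvne
    rw [zval_sub_of_le hAB.le]
    rcases (hmemW v).mp hv with ⟨z, hz, rfl⟩ | ⟨z, hz, rfl⟩
    · rcases htri z y with heq | h | h
      · subst heq; exact absurd rfl hvne
      · have h1 : (g z).val < (g y).val := hord1 z hz y hyT h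
        rw [zval_sub_of_lt h1]
        have := hvlt (g' y)
        omega
      · have h1 : (g' y).val < (g z).val := hord3 y hy z hz h
        rw [zval_sub_of_le (by omega)]
        omega
    · rcases htri z y with heq | h | h
      · subst heq
        rw [zval_sub_of_le hAB.le]
      · have h1 : (g' z).val < (g y).val := hord3 z hz y hyT h
        rw [zval_sub_of_lt h1]
        have := hvlt (g' y)
        omega
      · have h1 : (g' y).val < (g' z).val :=
          lt_trans (hord3 y hy z (hT'T hz) h) (hord2 z hz)
        rw [zval_sub_of_le (by omega)]
        omega
  have hP1 : ∀ z ∈ T', prevT W (g' z) = g z := by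
    intro z hz
    have hzT := hT'T hz
    have hAB : (g z).val < (g' z).val := hord2 z hz
    apply corePrev hTW (g' z) (g z) (hgW z hzT) (hgg' z hzT z hz)
    intro v hv hvne
    rw [zval_sub_of_le hAB.le]
    rcases (hmemW v).mp hv with ⟨y, hy, rfl⟩ | ⟨y, hy, rfl⟩
    · rcases htri y z with heq | h | h
      · subst heq
        rw [zval_sub_of_le hAB.le]
      · have h1 : (g y).val < (g z).val := hord1 y hy z hzT h
        rw [zval_sub_of_le (by omega)]
        omega
      · have h1 : (g' z).val < (g y).val := hord3 z hz y hy h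
        rw [zval_sub_of_lt h1]
        have := hvlt (g y)
        omega
    · rcases htri y z with heq | h | h
      · subst heq; exact absurd rfl hvne
      · have h1 : (g' y).val < (g z).val := hord3 y hy z hzT h
        rw [zval_sub_of_le (by omega)]
        omega
      · have h1 : (g' z).val < (g' y).val :=
          lt_trans (hord3 z hz y (hT'T hy) h) (hord2 y hy)
        rw [zval_sub_of_lt h1]
        have := hvlt (g' y)
        omega
  have hN23 : ∀ t ∈ T, nextT W (hh t) = g (nextT T t) := by
    intro t ht
    set tp := nextT T t with htpdef
    have htpT : tp ∈ T := next_mem hT t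
    have htpne : tp ≠ t := hTne t ht
    have hA : (g t).val ≤ (hh t).val := by
      by_cases h : t ∈ T'
      · rw [hhT' t h]; exact (hord2 t h).le
      · rw [hhnT' t h]
    have hhlt : ∀ z ∈ T, t.val < z.val → (hh t).val < (g z).val := by
      intro z hz hlt
      by_cases h : t ∈ T'
      · rw [hhT' t h]; exact hord3 t h z hz hlt
      · rw [hhnT' t h]; exact hord1 t ht z hz hlt
    have hune : g tp ≠ hh t := by
      by_cases h : t ∈ T'
      · rw [hhT' t h]; exact hgg' tp htpT t h
      · rw [hhnT' t h]; intro hc; exact htpne (hginj _ htpT _ ht hc)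
    apply coreNext hTW (hh t) (g tp) (hgW tp htpT) hune
    intro v hv hvne
    have hAn := hvlt (hh t)
    have htn := hvlt t
    have hzn' := hvlt (g t)
    have hun := hvlt (g tp)
    rcases htri tp t with heq | hlo | hhi
    · exact absurd heq htpne
    all_goals rcases (hmemW v).mp hv with ⟨z, hz, rfl⟩ | ⟨z, hz, rfl⟩
    -- tp wraps below t ; v = g z
    · have hu1 : (g tp).val < (g t).val := hord1 tp htpT t ht hlo
      rw [zval_sub_of_lt (by omega)]
      by_cases hzt : z = t
      · have hlt : (g t).val < (hh t).val := by
          by_cases h : t ∈ T'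
          · rw [hhT' t h]; exact hord2 t h
          · rw [hhnT' t h] at hvne
            exact absurd (by rw [hzt]) hvne
        rw [hzt, zval_sub_of_lt hlt]
        omega
      · by_cases hztp : z = tp
        · rw [hztp, zval_sub_of_lt (by omega)]
        · have hm := hTmin t ht z hz hzt
          rw [← htpdef] at hm
          rw [zval_sub_of_lt (show tp.val < t.val from hlo)] at hm
          rcases htri z t with heq2 | h2 | h2
          · exact absurd heq2 hzt
          · rw [zval_sub_of_lt h2] at hm
            have h3 : tp.val < z.val := by
              rcases htri tp z with heq3 | h3 | h3
              · exact absurd heq3.symm hztp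
              · exact h3
              · omega
            have h4 : (g tp).val < (g z).val := hord1 tp htpT z hz h3
            have h5 : (g z).val < (g t).val := hord1 z hz t ht h2
            rw [zval_sub_of_lt (by omega)]
            omega
          · rw [zval_sub_of_le h2.le] at hm
            have := hvlt z
            omega
    -- tp wraps below t ; v = g' z
    · have hu1 : (g tp).val < (g t).val := hord1 tp htpT t ht hlo
      rw [zval_sub_of_lt (by omega)]
      have hzT := hT'T hz
      by_cases hzt : z = t
      · have htT' : t ∈ T' := hzt ▸ hz
        exact absurd (by rw [hzt, hhT' t htT']) hvne
      · by_cases hztp : z = tp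
        · have h4 : (g tp).val < (g' tp).val := by rw [← hztp]; exact hord2 z hz
          have h5 : (g' tp).val < (g t).val := by rw [← hztp]; exact hord3 z hz t ht (by rw [hztp]; exact hlo)
          rw [hztp, zval_sub_of_lt (by omega)]
          omega
        · have hm := hTmin t ht z hzT hzt
          rw [← htpdef] at hm
          rw [zval_sub_of_lt (show tp.val < t.val from hlo)] at hm
          rcases htri z t with heq2 | h2 | h2
          · exact absurd heq2 hzt
          · rw [zval_sub_of_lt h2] at hm
            have h3 : tp.val < z.val := by
              rcases htri tp z with heq3 | h3 | h3
              · exact absurd heq3.symm hztp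
              · exact h3
              · omega
            have h4 : (g tp).val < (g z).val := hord1 tp htpT z hzT h3
            have h5 : (g' z).val < (g t).val := hord3 z hz t ht h2
            have h6 : (g z).val < (g' z).val := hord2 z hz
            rw [zval_sub_of_lt (by omega)]
            omega
          · rw [zval_sub_of_le h2.le] at hm
            have := hvlt z
            omega
    -- tp above t ; v = g z
    · have hu1 : (hh t).val < (g tp).val := hhlt tp htpT hhi
      rw [zval_sub_of_le hu1.le]
      by_cases hzt : z = t
      · have hlt : (g t).val < (hh t).val := by
          by_cases h : t ∈ T'
          · rw [hhT' t h]; exact hord2 t h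
          · rw [hhnT' t h] at hvne
            exact absurd (by rw [hzt]) hvne
        rw [hzt, zval_sub_of_lt hlt]
        omega
      · by_cases hztp : z = tp
        · rw [hztp, zval_sub_of_le hu1.le]
        · have hm := hTmin t ht z hz hzt
          rw [← htpdef] at hm
          rw [zval_sub_of_le (show t.val ≤ tp.val from hhi.le)] at hm
          rcases htri z t with heq2 | h2 | h2
          · exact absurd heq2 hzt
          · rw [zval_sub_of_lt h2] at hm
            have h5 : (g z).val < (g t).val := hord1 z hz t ht h2
            rw [zval_sub_of_lt (by omega)]
            omega
          · rw [zval_sub_of_le h2.le] at hm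
            have h3 : tp.val < z.val := by
              rcases htri tp z with heq3 | h3 | h3
              · exact absurd heq3.symm hztp
              · exact h3
              · omega
            have h4 : (g tp).val < (g z).val := hord1 tp htpT z hz h3
            have h5 : (hh t).val < (g z).val := hhlt z hz h2
            rw [zval_sub_of_le h5.le]
            omega
    -- tp above t ; v = g' z
    · have hu1 : (hh t).val < (g tp).val := hhlt tp htpT hhi
      rw [zval_sub_of_le hu1.le]
      have hzT := hT'T hz
      by_cases hzt : z = t
      · have htT' : t ∈ T' := hzt ▸ hz
        exact absurd (by rw [hzt, hhT' t htT']) hvne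
      · by_cases hztp : z = tp
        · have h4 : (g tp).val < (g' tp).val := by rw [← hztp]; exact hord2 z hz
          rw [hztp, zval_sub_of_le (by omega)]
          omega
        · have hm := hTmin t ht z hzT hzt
          rw [← htpdef] at hm
          rw [zval_sub_of_le (show t.val ≤ tp.val from hhi.le)] at hm
          rcases htri z t with heq2 | h2 | h2
          · exact absurd heq2 hzt
          · rw [zval_sub_of_lt h2] at hm
            have h5 : (g' z).val < (g t).val := hord3 z hz t ht h2
            rw [zval_sub_of_lt (by omega)]
            omega
          · rw [zval_sub_of_le h2.le] at hm
            have h3 : tp.val < z.val := by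
              rcases htri tp z with heq3 | h3 | h3
              · exact absurd heq3.symm hztp
              · exact h3
              · omega
            have h4 : (g tp).val < (g z).val := hord1 tp htpT z hzT h3
            have h5 : (hh t).val < (g z).val := hhlt z hzT h2
            have h6 : (g z).val < (g' z).val := hord2 z hz
            rw [zval_sub_of_le (by omega)]
            omega
  have hP2 : ∀ s ∈ T, prevT W (g s) = hh (prevT T s) := by
    intro s hs
    set p := prevT T s with hpdef
    have hpT : p ∈ T := prev_mem hT s
    have hpne : p ≠ s := hPne s hs
    have hgpu : (g p).val ≤ (hh p).val := by
      by_cases h : p ∈ T'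
      · rw [hhT' p h]; exact (hord2 p h).le
      · rw [hhnT' p h]
    have hune : hh p ≠ g s := by
      by_cases h : p ∈ T'
      · rw [hhT' p h]; intro hc; exact hgg' s hs p h hc.symm
      · rw [hhnT' p h]; intro hc; exact hpne (hginj _ hpT _ hs hc)
    apply corePrev hTW (g s) (hh p) (hhW p hpT) hune
    intro v hv hvne
    have hAn := hvlt (g s)
    have hupn := hvlt (hh p)
    have hgpn := hvlt (g p)
    rcases htri p s with heq | hlo | hhi
    · exact absurd heq hpne
    all_goals rcases (hmemW v).mp hv with ⟨z, hz, rfl⟩ | ⟨z, hz, rfl⟩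
    -- p below s ; v = g z
    · have hu1 : (hh p).val < (g s).val := by
        by_cases h : p ∈ T'
        · rw [hhT' p h]; exact hord3 p h s hs hlo
        · rw [hhnT' p h]; exact hord1 p hpT s hs hlo
      rw [zval_sub_of_le hu1.le]
      by_cases hzs : z = s
      · exact absurd (by rw [hzs]) hvne
      · by_cases hzp : z = p
        · have h4 : (g p).val < (g s).val := hord1 p hpT s hs hlo
          rw [hzp, zval_sub_of_le h4.le]
          omega
        · have hm := hPmin s hs z hz hzs
          rw [← hpdef] at hm
          rw [zval_sub_of_le (le_of_lt hlo)] at hm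
          rcases htri z s with heq2 | h2 | h2
          · exact absurd heq2 hzs
          · rw [zval_sub_of_le h2.le] at hm
            have h3 : z.val < p.val := by
              rcases htri z p with heq3 | h3 | h3
              · exact absurd heq3 hzp
              · exact h3
              · omega
            have h4 : (g z).val < (g p).val := hord1 z hz p hpT h3
            have h5 : (g z).val < (g s).val := hord1 z hz s hs h2
            rw [zval_sub_of_le h5.le]
            omega
          · rw [zval_sub_of_lt h2] at hm
            have h5 : (g s).val < (g z).val := hord1 s hs z hz h2
            rw [zval_sub_of_lt h5]
            have := hvlt (g z)
            omega
    -- p below s ; v = g' z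
    · have hzT := hT'T hz
      have hu1 : (hh p).val < (g s).val := by
        by_cases h : p ∈ T'
        · rw [hhT' p h]; exact hord3 p h s hs hlo
        · rw [hhnT' p h]; exact hord1 p hpT s hs hlo
      rw [zval_sub_of_le hu1.le]
      by_cases hzs : z = s
      · have h4 : (g s).val < (g' s).val := by
          rw [← hzs]; exact hord2 z hz
        have h5 := hvlt (g' s)
        rw [hzs, zval_sub_of_lt (by omega)]
        omega
      · by_cases hzp : z = p
        · have hpT' : p ∈ T' := hzp ▸ hz
          have he : g' z = hh p := by rw [hzp, hhT' p hpT']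
          rw [he, zval_sub_of_le hu1.le]
        · have hm := hPmin s hs z hzT hzs
          rw [← hpdef] at hm
          rw [zval_sub_of_le (le_of_lt hlo)] at hm
          rcases htri z s with heq2 | h2 | h2
          · exact absurd heq2 hzs
          · rw [zval_sub_of_le h2.le] at hm
            have h3 : z.val < p.val := by
              rcases htri z p with heq3 | h3 | h3
              · exact absurd heq3 hzp
              · exact h3
              · omega
            have h4 : (g' z).val < (g p).val := hord3 z hz p hpT h3
            have h5 : (g' z).val < (g s).val := hord3 z hz s hs h2
            rw [zval_sub_of_le h5.le]
            omega
          · rw [zval_sub_of_lt h2] at hm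
            have h5 : (g s).val < (g z).val := hord1 s hs z hzT h2
            have h6 : (g z).val < (g' z).val := hord2 z hz
            rw [zval_sub_of_lt (by omega)]
            have := hvlt (g' z)
            omega
    -- p above s (wrap) ; v = g z
    · have hu1 : (g s).val < (hh p).val := by
        have := hord1 s hs p hpT hhi
        omega
      rw [zval_sub_of_lt hu1]
      by_cases hzs : z = s
      · exact absurd (by rw [hzs]) hvne
      · by_cases hzp : z = p
        · have h4 : (g s).val < (g p).val := hord1 s hs p hpT hhi
          rw [hzp, zval_sub_of_lt h4]
          omega
        · have hm := hPmin s hs z hz hzs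
          rw [← hpdef] at hm
          rw [zval_sub_of_lt hhi] at hm
          rcases htri z s with heq2 | h2 | h2
          · exact absurd heq2 hzs
          · rw [zval_sub_of_le h2.le] at hm
            have := hvlt z
            have := hvlt p
            omega
          · rw [zval_sub_of_lt h2] at hm
            have := hvlt z
            have := hvlt p
            have h3 : z.val < p.val := by
              rcases htri z p with heq3 | h3 | h3
              · exact absurd heq3 hzp
              · exact h3
              · omega
            have h4 : (g z).val < (g p).val := hord1 z hz p hpT h3
            have h5 : (g s).val < (g z).val := hord1 s hs z hz h2
            rw [zval_sub_of_lt h5]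
            omega
    -- p above s (wrap) ; v = g' z
    · have hzT := hT'T hz
      have hu1 : (g s).val < (hh p).val := by
        have := hord1 s hs p hpT hhi
        omega
      rw [zval_sub_of_lt hu1]
      by_cases hzs : z = s
      · have h4 : (g' s).val < (g p).val := by
          rw [← hzs]; exact hord3 z hz p hpT (by rw [hzs]; exact hhi)
        have h5 : (g s).val < (g' s).val := by
          rw [← hzs]; exact hord2 z hz
        rw [hzs, zval_sub_of_lt (by omega)]
        omega
      · by_cases hzp : z = p
        · have hpT' : p ∈ T' := hzp ▸ hz
          have he : g' z = hh p := by rw [hzp, hhT' p hpT']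
          rw [he, zval_sub_of_lt hu1]
        · have hm := hPmin s hs z hzT hzs
          rw [← hpdef] at hm
          rw [zval_sub_of_lt hhi] at hm
          rcases htri z s with heq2 | h2 | h2
          · exact absurd heq2 hzs
          · rw [zval_sub_of_le h2.le] at hm
            have := hvlt z
            have := hvlt p
            omega
          · rw [zval_sub_of_lt h2] at hm
            have := hvlt z
            have := hvlt p
            have h3 : z.val < p.val := by
              rcases htri z p with heq3 | h3 | h3
              · exact absurd heq3 hzp
              · exact h3
              · omega
            have h4 : (g' z).val < (g p).val := hord3 z hz p hpT h3
            have h5 : (g s).val < (g z).val := hord1 s hs z hzT h2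
            have h6 : (g z).val < (g' z).val := hord2 z hz
            rw [zval_sub_of_lt (by omega)]
            omega
  -- the return maps
  have hretT_mem : ∀ x ∈ T, retF T r b x ∈ T := by
    intro x hx
    unfold retF
    exact (hr _ (prev_mem hT _)).1
  have hretW_mem : ∀ x ∈ W, retF W rU bU x ∈ W := by
    intro x hx
    unfold retF
    exact (hrW _ (prev_mem hTW _)).1
  set retTs : {x : ZMod n // x ∈ T} → {x : ZMod n // x ∈ T} :=
    fun a => ⟨retF T r b a, hretT_mem _ a.2⟩ with hretTs
  set retWs : {x : ZMod n // x ∈ W} → {x : ZMod n // x ∈ W} :=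
    fun a => ⟨retF W rU bU a, hretW_mem _ a.2⟩ with hretWs
  set Rs : {x : ZMod n // x ∈ T'} → {x : ZMod n // x ∈ T'} :=
    fun z => ⟨r z, (hT'cl z z.2).1⟩ with hRs
  set Bs : {x : ZMod n // x ∈ T'} → {x : ZMod n // x ∈ T'} :=
    fun z => ⟨b z, (hT'cl z z.2).2⟩ with hBs
  set i1 : {x : ZMod n // x ∈ T} → {x : ZMod n // x ∈ W} :=
    fun a => ⟨hh a, hhW _ a.2⟩ with hi1
  set i2 : {x : ZMod n // x ∈ T'} → {x : ZMod n // x ∈ W} :=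
    fun z => ⟨g z, hgW _ (hT'T z.2)⟩ with hi2
  -- commutation identities
  have hcomm1 : ∀ a, retWs (i1 a) = i1 (retTs a) := by
    rintro ⟨t, ht⟩
    apply Subtype.ext
    show retF W rU bU (hh t) = hh (retF T r b t)
    unfold retF
    rw [hN23 t ht, hbUg _ (next_mem hT t), hP2 _ (hb _ (next_mem hT t)).1,
      hrUhh _ (prev_mem hT _)]
  have hcomm2 : ∀ z, retWs (i2 z) = i2 (Rs (Bs z)) := by
    rintro ⟨z, hz⟩
    apply Subtype.ext
    show retF W rU bU (g z) = g (r (b z))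
    unfold retF
    rw [hN1 z hz, hbUg' z hz, hP1 _ (hT'cl z hz).2, hrUg _ (hT'T (hT'cl z hz).2)]
  -- injectivity and covering
  have hi1inj : Function.Injective i1 := by
    rintro ⟨a, ha⟩ ⟨a', ha'⟩ h
    have h1 : hh a = hh a' := congrArg Subtype.val h
    apply Subtype.ext
    show a = a'
    by_cases h2 : a ∈ T' <;> by_cases h3 : a' ∈ T'
    · rw [hhT' a h2, hhT' a' h3] at h1
      exact hg'inj _ h2 _ h3 h1
    · rw [hhT' a h2, hhnT' a' h3] at h1
      exact absurd h1.symm (hgg' a' ha' a h2)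
    · rw [hhnT' a h2, hhT' a' h3] at h1
      exact absurd h1 (hgg' a ha a' h3)
    · rw [hhnT' a h2, hhnT' a' h3] at h1
      exact hginj _ ha _ ha' h1
  have hi2inj : Function.Injective i2 := by
    rintro ⟨z, hz⟩ ⟨z', hz'⟩ h
    have h1 : g z = g z' := congrArg Subtype.val h
    exact Subtype.ext (hginj _ (hT'T hz) _ (hT'T hz') h1)
  have hdisj : ∀ a z, i1 a ≠ i2 z := by
    rintro ⟨a, ha⟩ ⟨z, hz⟩ h
    have h1 : hh a = g z := congrArg Subtype.val h
    by_cases h2 : a ∈ T'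
    · rw [hhT' a h2] at h1
      exact hgg' z (hT'T hz) a h2 h1.symm
    · rw [hhnT' a h2] at h1
      exact h2 (hginj _ ha _ (hT'T hz) h1 ▸ hz)
  have hcov : ∀ c, (∃ a, i1 a = c) ∨ (∃ z, i2 z = c) := by
    rintro ⟨v, hv⟩
    rcases (hmemW v).mp hv with ⟨s, hs, rfl⟩ | ⟨s, hs, rfl⟩
    · by_cases h : s ∈ T'
      · exact Or.inr ⟨⟨s, h⟩, rfl⟩
      · exact Or.inl ⟨⟨s, hs⟩, Subtype.ext (hhnT' s h)⟩
    · exact Or.inl ⟨⟨s, hT'T hs⟩, Subtype.ext (hhT' s hs)⟩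
  -- the three orbit counts
  have hsum := card_quot_sum retWs retTs (fun z => Rs (Bs z)) i1 i2 hi1inj hi2inj
    hdisj hcov hcomm1 hcomm2
  have hrne' : ∀ z : {x : ZMod n // x ∈ T'}, Rs z ≠ z := by
    rintro ⟨z, hz⟩ h
    have h1 : r z = z := congrArg Subtype.val h
    have := ((hr z (hT'T hz)).2.2.1).ne
    apply this
    rw [h1]
  have hbne' : ∀ z : {x : ZMod n // x ∈ T'}, Bs z ≠ z := by
    rintro ⟨z, hz⟩ h
    have h1 : b z = z := congrArg Subtype.val h
    exact ((hb z (hT'T hz)).2.2.1).ne h1.symm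
  have hdi := dihedral_two Rs Bs
    (by rintro ⟨z, hz⟩; exact Subtype.ext ((hr z (hT'T hz)).2.1))
    (by rintro ⟨z, hz⟩; exact Subtype.ext ((hb z (hT'T hz)).2.1))
    hrne' hbne'
    (by
      rintro P ⟨x, hx⟩ hPx hcl ⟨y, hy⟩
      have := hT'conn (fun v => ∀ h : v ∈ T', P ⟨v, h⟩) x hx
        (fun h => by convert hPx) ?_ y hy
      · exact this hy
      · intro z hz hPz
        constructor
        · intro h
          have := (hcl ⟨z, hz⟩ (hPz hz)).1
          convert this using 2
        · intro h
          have := (hcl ⟨z, hz⟩ (hPz hz)).2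
          convert this using 2)
    ⟨z0, hz0⟩
  have c1 := fs_count hn G T r b hT hr hb hnb retTs (fun a => rfl)
  have c2 := fs_count hn G W rU bU hTW hrW hbW hnbW retWs (fun a => rfl)
  rw [hEq]
  rw [c1] at hsum
  rw [c2] at hsum
  rw [hdi] at hsum
  omega
end

section
/- Let S ⊆ A be a disjoint union of colour-alternating cycles without neighbouring vertices, and let D be an ordered subgraph of A without neighbouring vertices that is a going-down version of S. Then the 2-factor F(D) of G has exactly one fewer connected component than F(S). -/
set_option linter.unusedSectionVars false
set_option linter.unusedVariables false

/-- The 2-factor `F(D)` of `G` corresponding to a going-down version `D = D(S, s_k)`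
of `S` embedded in `A(G,H)`.  Here `S` has vertex set `T` and red/blue partners
`r`, `b`; the cycle `C` of `S` containing `s_k = k₀` has vertex set `T' ⊆ T`; the
original vertices are embedded by `g` and the two new copies `s_{i+1/3}`,
`s_{i+2/3}` of the vertices of `C` by `g1`, `g2`.  The coloured edges of `D` are:
all original red edges; copies of the red/blue edges of `C` not incident to `s_k`;
original blue edges not incident to `s_k`; the rewired blue edges
`s_i s_{k+1/3}`, `s_{i+1/3} s_{k+2/3}`, `s_{i+2/3} s_k` (where `s_i s_k` is the blue
edge at `s_k`); and the extra red edges `s_{i+1/3} s_{k+2/3}`, `s_{i+2/3} s_{k+1/3}`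
(where `s_i s_k` is the red edge at `s_k`).  `F(D)` consists of the Hamilton edges
avoiding `V(D)` plus the inner edges of `G` corresponding to the edges of `D`. -/
def FDgraph (n : ℕ) (T T' : Finset (ZMod n)) (r b g g1 g2 : ZMod n → ZMod n)
    (k₀ : ZMod n) : SimpleGraph (ZMod n) :=
  SimpleGraph.fromRel (fun x y =>
    (y = x + 1 ∧ x ∉ g '' (T : Set (ZMod n)) ∪ g1 '' (T' : Set (ZMod n))
        ∪ g2 '' (T' : Set (ZMod n))) ∨
    (∃ s ∈ T, x = g s + 1 ∧ y = g (r s) + 1) ∨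
    (∃ s ∈ T', s ≠ k₀ ∧ r s ≠ k₀ ∧
      ((x = g1 s + 1 ∧ y = g1 (r s) + 1) ∨ (x = g2 s + 1 ∧ y = g2 (r s) + 1))) ∨
    (x = g1 (r k₀) + 1 ∧ y = g2 k₀ + 1) ∨ (x = g2 (r k₀) + 1 ∧ y = g1 k₀ + 1) ∨
    (∃ s ∈ T, s ≠ k₀ ∧ b s ≠ k₀ ∧ x = g s ∧ y = g (b s)) ∨
    (∃ s ∈ T', s ≠ k₀ ∧ b s ≠ k₀ ∧
      ((x = g1 s ∧ y = g1 (b s)) ∨ (x = g2 s ∧ y = g2 (b s)))) ∨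
    (x = g (b k₀) ∧ y = g1 k₀) ∨ (x = g1 (b k₀) ∧ y = g2 k₀) ∨
    (x = g2 (b k₀) ∧ y = g k₀))



namespace GoingDown

open Finset in
theorem even_card_invol {α : Type*} [DecidableEq α] (s : Finset α) (f : α → α)
    (h1 : ∀ x ∈ s, f x ∈ s) (h2 : ∀ x ∈ s, f (f x) = x) (h3 : ∀ x ∈ s, f x ≠ x) :
    Even s.card := by
  induction s using Finset.strongInduction with
  | _ s ih =>
    rcases s.eq_empty_or_nonempty with rfl | ⟨x, hx⟩
    · simp
    · have hfx : f x ∈ s := h1 x hx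
      have hne : f x ≠ x := h3 x hx
      set t := (s.erase x).erase (f x) with ht
      have hxt : x ∉ t := by simp [ht]
      have hfxt : f x ∉ t := by simp [ht]
      have hsub : t ⊆ s := (erase_subset _ _).trans (erase_subset _ _)
      have hmem : ∀ y, y ∈ t ↔ y ∈ s ∧ y ≠ x ∧ y ≠ f x := by
        intro y; simp [ht]; tauto
      have hts : t ⊂ s := ⟨hsub, fun hc => hxt (hc hx)⟩
      have hcard : s.card = t.card + 2 := by
        have h1' : (s.erase x).card = s.card - 1 := card_erase_of_mem hx
        have hfx' : f x ∈ s.erase x := mem_erase.2 ⟨hne, hfx⟩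
        have h2' : t.card = (s.erase x).card - 1 := card_erase_of_mem hfx'
        have hpos : 0 < s.card := card_pos.2 ⟨x, hx⟩
        have hpos2 : 0 < (s.erase x).card := card_pos.2 ⟨f x, hfx'⟩
        omega
      have heven : Even t.card := by
        refine ih t hts (fun y hy => ?_) (fun y hy => h2 y (hsub hy)) (fun y hy => h3 y (hsub hy))
        rw [hmem] at hy ⊢
        obtain ⟨hys, hyx, hyfx⟩ := hy
        refine ⟨h1 y hys, ?_, ?_⟩
        · intro hc
          have : y = f x := by rw [← h2 y hys, hc]
          exact hyfx this
        · intro hc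
          have : y = x := by rw [← h2 y hys, hc, h2 x hx]
          exact hyx this
      obtain ⟨k, hk⟩ := heven
      exact ⟨k + 1, by omega⟩

variable {n : ℕ} [NeZero n]

lemma zcast_val (a : ZMod n) : ((a.val : ℕ) : ZMod n) = a := by
  rw [ZMod.natCast_val, ZMod.cast_id]

lemma dv_above {a w : ZMod n} (h : a.val < w.val) : (w - a).val = w.val - a.val :=
  ZMod.val_sub h.le

lemma dv_below {a w : ZMod n} (h : w.val < a.val) : (w - a).val = n + w.val - a.val := by
  have hne : a - w ≠ 0 := by
    intro hc
    rw [sub_eq_zero] at hc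
    subst hc; omega
  have h1 : (a - w).val = a.val - w.val := ZMod.val_sub h.le
  have h2 : w - a = -(a - w) := by ring
  haveI : NeZero (a - w) := ⟨hne⟩
  rw [h2, ZMod.val_neg_of_ne_zero, h1]
  have := ZMod.val_lt a
  omega

lemma val_one' (hn : 1 < n) : (1 : ZMod n).val = 1 := by
  have : ((1 : ℕ) : ZMod n).val = 1 % n := ZMod.val_natCast n 1
  simpa [Nat.mod_eq_of_lt hn] using this

lemma one_ne_zero' (hn : 1 < n) : (1 : ZMod n) ≠ 0 := by
  intro hc
  have := val_one' (n := n) hn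
  rw [hc] at this
  simp only [ZMod.val_zero] at this
  omega

lemma sub_one_val (hn : 1 < n) {c : ZMod n} (hc : c ≠ 0) : (c - 1).val = c.val - 1 := by
  have h1 : (1 : ZMod n).val = 1 := val_one' hn
  have h2 : (1 : ZMod n).val ≤ c.val := by
    have : 0 < c.val := ZMod.val_pos.2 hc
    omega
  rw [ZMod.val_sub h2, h1]

lemma neg_one_val (hn : 1 < n) : (-1 : ZMod n).val = n - 1 := by
  haveI : NeZero (1 : ZMod n) := ⟨one_ne_zero' hn⟩
  rw [ZMod.val_neg_of_ne_zero, val_one' hn]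


section Mark

variable (W : Finset (ZMod n))

lemma mark_ex (hW : W.Nonempty) (x : ZMod n) : ∃ j : ℕ, x + (j : ℕ) ∈ W := by
  obtain ⟨w, hw⟩ := hW
  exact ⟨(w - x).val, by rw [zcast_val]; simpa using hw⟩

/-- first element of `W` encountered when scanning `x, x+1, x+2, …`. -/
noncomputable def mark (hW : W.Nonempty) (x : ZMod n) : ZMod n :=
  x + (Nat.find (mark_ex W hW x) : ℕ)

variable {W}
variable (hW : W.Nonempty)

lemma mark_mem (x : ZMod n) : mark W hW x ∈ W := Nat.find_spec (mark_ex W hW x)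

lemma mark_min {x w : ZMod n} (hw : w ∈ W) : (mark W hW x - x).val ≤ (w - x).val := by
  have hle : Nat.find (mark_ex W hW x) ≤ (w - x).val :=
    Nat.find_min' _ (by rw [zcast_val]; simpa using hw)
  have hlt : Nat.find (mark_ex W hW x) < n := lt_of_le_of_lt hle (ZMod.val_lt _)
  have : (mark W hW x - x) = ((Nat.find (mark_ex W hW x) : ℕ) : ZMod n) := by
    unfold mark; ring
  rw [this, ZMod.val_natCast, Nat.mod_eq_of_lt hlt]
  exact hle

lemma mark_id {x : ZMod n} (hx : x ∈ W) : mark W hW x = x := by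
  have h0 : Nat.find (mark_ex W hW x) ≤ 0 := Nat.find_min' _ (by simpa using hx)
  unfold mark
  rw [Nat.le_zero.mp h0]
  simp

lemma mark_eq {x w₀ : ZMod n} (hw₀ : w₀ ∈ W)
    (hmin : ∀ w ∈ W, (w₀ - x).val ≤ (w - x).val) : mark W hW x = w₀ := by
  have h1 : (mark W hW x - x).val ≤ (w₀ - x).val := mark_min hW hw₀
  have h2 : (w₀ - x).val ≤ (mark W hW x - x).val := hmin _ (mark_mem hW x)
  have h3 : (mark W hW x - x) = (w₀ - x) := ZMod.val_injective _ (le_antisymm h1 h2)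
  have := sub_left_injective (G := ZMod n) (b := x) h3
  exact this

lemma mark_shift {x : ZMod n} (hx : x ∉ W) : mark W hW x = mark W hW (x + 1) := by
  have hj0 : Nat.find (mark_ex W hW x) ≠ 0 := by
    intro h
    have := Nat.find_spec (mark_ex W hW x)
    rw [h] at this
    simp at this
    exact hx this
  obtain ⟨k, hk⟩ : ∃ k, Nat.find (mark_ex W hW x) = k + 1 := ⟨_, (Nat.succ_pred_eq_of_pos (Nat.pos_of_ne_zero hj0)).symm⟩
  have hmem : (x + 1) + (k : ℕ) ∈ W := by
    have hsp := Nat.find_spec (mark_ex W hW x)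
    rw [hk] at hsp
    have harith : x + ((k + 1 : ℕ) : ZMod n) = (x + 1) + (k : ℕ) := by push_cast; ring
    rwa [harith] at hsp
  have hle : Nat.find (mark_ex W hW (x + 1)) ≤ k := Nat.find_min' _ hmem
  have hge : k ≤ Nat.find (mark_ex W hW (x + 1)) := by
    by_contra hcon
    push_neg at hcon
    have hmem2 : x + ((Nat.find (mark_ex W hW (x + 1)) + 1 : ℕ)) ∈ W := by
      have hsp := Nat.find_spec (mark_ex W hW (x + 1))
      have harith : (x + 1) + ((Nat.find (mark_ex W hW (x + 1)) : ℕ) : ZMod n)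
          = x + ((Nat.find (mark_ex W hW (x + 1)) + 1 : ℕ)) := by push_cast; ring
      rwa [harith] at hsp
    exact Nat.find_min (mark_ex W hW x) (by omega) hmem2
  have hfind : Nat.find (mark_ex W hW (x + 1)) = k := le_antisymm hle hge
  unfold mark
  rw [hk, hfind]
  push_cast
  ring

lemma mark_eq_succ (hn : 1 < n) {a w₀ : ZMod n} (hw₀ : w₀ ∈ W) (hne : w₀ ≠ a)
    (hmin : ∀ w ∈ W, w ≠ a → (w₀ - a).val ≤ (w - a).val) : mark W hW (a + 1) = w₀ := by
  apply mark_eq hW hw₀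
  intro w hw
  have hkey : w₀ - (a + 1) = (w₀ - a) - 1 := by ring
  have hc0 : w₀ - a ≠ 0 := sub_ne_zero_of_ne hne
  rw [hkey, sub_one_val hn hc0]
  by_cases hwa : w = a
  · subst hwa
    have : w - (w + 1) = -1 := by ring
    rw [this, neg_one_val hn]
    have := ZMod.val_lt (w₀ - w)
    omega
  · have hkey2 : w - (a + 1) = (w - a) - 1 := by ring
    rw [hkey2, sub_one_val hn (sub_ne_zero_of_ne hwa)]
    have := hmin w hw hwa
    omega

lemma mark_reach (FG : SimpleGraph (ZMod n)) (hH : ∀ y : ZMod n, y ∉ W → FG.Adj y (y + 1))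
    (x : ZMod n) : FG.Reachable x (mark W hW x) := by
  suffices h : ∀ (d : ℕ) (y : ZMod n), (y + (d : ℕ) ∈ W) → (∀ i : ℕ, i < d → y + (i : ℕ) ∉ W) →
      FG.Reachable y (y + (d : ℕ)) by
    refine h _ x (Nat.find_spec (mark_ex W hW x)) (fun i hi => Nat.find_min (mark_ex W hW x) hi)
  intro d
  induction d with
  | zero => intro y _ _; simpa using SimpleGraph.Reachable.refl y
  | succ d ih =>
    intro y hmem hmin
    have hy : y ∉ W := by simpa using hmin 0 (Nat.succ_pos d)
    have hadj := hH y hy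
    have harith : (y + 1) + (d : ℕ) = y + ((d + 1 : ℕ) : ℕ) := by push_cast; ring
    have hit : FG.Reachable (y + 1) ((y + 1) + (d : ℕ)) := by
      refine ih (y + 1) (by rw [harith]; exact hmem) (fun i hi => ?_)
      have : (y + 1) + (i : ℕ) = y + ((i + 1 : ℕ) : ℕ) := by push_cast; ring
      rw [this]
      exact hmin (i + 1) (by omega)
    have := hadj.reachable.trans hit
    rwa [harith] at this

end Mark


attribute [local instance] Classical.propDecidable


section DiffCmp

lemma zsub_add_one (x : ZMod n) : x - 1 + 1 = x := by ring
lemma zadd_sub_one (x : ZMod n) : x + 1 - 1 = x := by ring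

lemma val_cases {w a : ZMod n} (h : w ≠ a) : w.val < a.val ∨ a.val < w.val := by
  rcases lt_trichotomy w.val a.val with h1 | h1 | h1
  · exact Or.inl h1
  · exact absurd (ZMod.val_injective _ h1) h
  · exact Or.inr h1

lemma dcmp_aa {a w w' : ZMod n} (h1 : a.val < w.val) (h2 : a.val < w'.val)
    (h3 : w.val ≤ w'.val) : (w - a).val ≤ (w' - a).val := by
  rw [dv_above h1, dv_above h2]; omega

lemma dcmp_ab {a w w' : ZMod n} (h1 : a.val < w.val) (h2 : w'.val < a.val) :
    (w - a).val ≤ (w' - a).val := by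
  rw [dv_above h1, dv_below h2]
  have := ZMod.val_lt w
  omega

lemma dcmp_bb {a w w' : ZMod n} (h1 : w.val < a.val) (h2 : w'.val < a.val)
    (h3 : w.val ≤ w'.val) : (w - a).val ≤ (w' - a).val := by
  rw [dv_below h1, dv_below h2]; omega

lemma dle_aa {a w w' : ZMod n} (h1 : a.val < w.val) (h2 : a.val < w'.val)
    (h : (w - a).val ≤ (w' - a).val) : w.val ≤ w'.val := by
  rw [dv_above h1, dv_above h2] at h; omega

lemma dle_ba_false {a w w' : ZMod n} (h1 : w.val < a.val) (h2 : a.val < w'.val)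
    (h : (w - a).val ≤ (w' - a).val) : False := by
  rw [dv_below h1, dv_above h2] at h
  have := ZMod.val_lt w'
  have := ZMod.val_lt a
  omega

lemma dle_bb {a w w' : ZMod n} (h1 : w.val < a.val) (h2 : w'.val < a.val)
    (h : (w - a).val ≤ (w' - a).val) : w.val ≤ w'.val := by
  rw [dv_below h1, dv_below h2] at h
  have := ZMod.val_lt a
  omega

end DiffCmp

/-- All data and hypotheses of the going-down theorem. -/
structure Ctx (n : ℕ) [NeZero n] where
  hn : 3 ≤ n
  G : SimpleGraph (ZMod n)
  hH : ∀ i : ZMod n, G.Adj i (i + 1)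
  T : Finset (ZMod n)
  T' : Finset (ZMod n)
  r : ZMod n → ZMod n
  b : ZMod n → ZMod n
  g : ZMod n → ZMod n
  g1 : ZMod n → ZMod n
  g2 : ZMod n → ZMod n
  k₀ : ZMod n
  hr : ∀ i ∈ T, r i ∈ T ∧ r (r i) = i ∧ (auxRed n G).Adj i (r i)
  hb : ∀ i ∈ T, b i ∈ T ∧ b (b i) = i ∧ (auxBlue n G).Adj i (b i)
  hnb : ∀ i ∈ T, i + 1 ∉ T
  hk₀ : k₀ ∈ T'
  hT'T : T' ⊆ T
  hT'cl : ∀ x ∈ T', r x ∈ T' ∧ b x ∈ T'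
  hT'conn : ∀ (P : ZMod n → Prop) (x : ZMod n), x ∈ T' → P x →
      (∀ z ∈ T', P z → P (r z) ∧ P (b z)) → ∀ y ∈ T', P y
  hsep : ¬ (FSgraph n T r b).Reachable k₀ (k₀ + 1)
  hginj : ∀ x ∈ T, ∀ y ∈ T, g x = g y → x = y
  hg1inj : ∀ x ∈ T', ∀ y ∈ T', g1 x = g1 y → x = y
  hg2inj : ∀ x ∈ T', ∀ y ∈ T', g2 x = g2 y → x = y
  hgg12 : ∀ x ∈ T, ∀ y ∈ T', g x ≠ g1 y ∧ g x ≠ g2 y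
  hg12 : ∀ x ∈ T', ∀ y ∈ T', g1 x ≠ g2 y
  hord1 : ∀ x ∈ T, ∀ y ∈ T, x.val < y.val → (g x).val < (g y).val
  hord2 : ∀ x ∈ T', (g x).val < (g1 x).val ∧ (g1 x).val < (g2 x).val
  hord3 : ∀ x ∈ T', ∀ y ∈ T, x.val < y.val → (g2 x).val < (g y).val
  hA1 : ∀ s ∈ T, (auxRed n G).Adj (g s) (g (r s))
  hA2 : ∀ s ∈ T, s ≠ k₀ → b s ≠ k₀ → (auxBlue n G).Adj (g s) (g (b s))
  hA3 : ∀ s ∈ T', s ≠ k₀ → r s ≠ k₀ →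
      (auxRed n G).Adj (g1 s) (g1 (r s)) ∧ (auxRed n G).Adj (g2 s) (g2 (r s))
  hA4 : ∀ s ∈ T', s ≠ k₀ → b s ≠ k₀ →
      (auxBlue n G).Adj (g1 s) (g1 (b s)) ∧ (auxBlue n G).Adj (g2 s) (g2 (b s))
  hA5 : (auxRed n G).Adj (g1 (r k₀)) (g2 k₀) ∧ (auxRed n G).Adj (g2 (r k₀)) (g1 k₀)
  hA6 : (auxBlue n G).Adj (g (b k₀)) (g1 k₀) ∧ (auxBlue n G).Adj (g1 (b k₀)) (g2 k₀) ∧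
      (auxBlue n G).Adj (g2 (b k₀)) (g k₀)


/-- the base relation of `FDgraph`, named for convenience. -/
def FDrel {n : ℕ} [NeZero n] (C : Ctx n) (x y : ZMod n) : Prop :=
    (y = x + 1 ∧ x ∉ C.g '' (C.T : Set (ZMod n)) ∪ C.g1 '' (C.T' : Set (ZMod n))
        ∪ C.g2 '' (C.T' : Set (ZMod n))) ∨
    (∃ s ∈ C.T, x = C.g s + 1 ∧ y = C.g (C.r s) + 1) ∨
    (∃ s ∈ C.T', s ≠ C.k₀ ∧ C.r s ≠ C.k₀ ∧
      ((x = C.g1 s + 1 ∧ y = C.g1 (C.r s) + 1) ∨ (x = C.g2 s + 1 ∧ y = C.g2 (C.r s) + 1))) ∨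
    (x = C.g1 (C.r C.k₀) + 1 ∧ y = C.g2 C.k₀ + 1) ∨ (x = C.g2 (C.r C.k₀) + 1 ∧ y = C.g1 C.k₀ + 1) ∨
    (∃ s ∈ C.T, s ≠ C.k₀ ∧ C.b s ≠ C.k₀ ∧ x = C.g s ∧ y = C.g (C.b s)) ∨
    (∃ s ∈ C.T', s ≠ C.k₀ ∧ C.b s ≠ C.k₀ ∧
      ((x = C.g1 s ∧ y = C.g1 (C.b s)) ∨ (x = C.g2 s ∧ y = C.g2 (C.b s)))) ∨
    (x = C.g (C.b C.k₀) ∧ y = C.g1 C.k₀) ∨ (x = C.g1 (C.b C.k₀) ∧ y = C.g2 C.k₀) ∨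
    (x = C.g2 (C.b C.k₀) ∧ y = C.g C.k₀)

namespace Ctx

variable {n : ℕ} [NeZero n] (C : Ctx n)

/-- the 2-factor `F(S)`. -/
noncomputable abbrev FS : SimpleGraph (ZMod n) := FSgraph n C.T C.r C.b

/-- the 2-factor `F(D)`. -/
noncomputable abbrev FD : SimpleGraph (ZMod n) := FDgraph n C.T C.T' C.r C.b C.g C.g1 C.g2 C.k₀

/-- the cut graph: `F(S)` minus the blue chord at `k₀` and the red chord at `k₀`. -/
noncomputable abbrev Shat : SimpleGraph (ZMod n) :=
  SimpleGraph.fromRel (fun x y =>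
    (y = x + 1 ∧ x ∉ C.T) ∨
    (x - 1 ∈ C.T ∧ x - 1 ≠ C.k₀ ∧ x - 1 ≠ C.r C.k₀ ∧ y = C.r (x - 1) + 1) ∨
    (x ∈ C.T ∧ x ≠ C.k₀ ∧ x ≠ C.b C.k₀ ∧ y = C.b x))

/-- vertex set of the embedded graph `D` as a finset. -/
noncomputable abbrev V : Finset (ZMod n) :=
  C.T.image C.g ∪ C.T'.image C.g1 ∪ C.T'.image C.g2

lemma hk₀T : C.k₀ ∈ C.T := C.hT'T C.hk₀

lemma hTne : C.T.Nonempty := ⟨C.k₀, C.hk₀T⟩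

lemma hVne : C.V.Nonempty := ⟨C.g C.k₀, by
  simp only [Finset.mem_union, Finset.mem_image]
  exact Or.inl (Or.inl ⟨C.k₀, C.hk₀T, rfl⟩)⟩

lemma hrT {s : ZMod n} (hs : s ∈ C.T) : C.r s ∈ C.T := (C.hr s hs).1
lemma hbT {s : ZMod n} (hs : s ∈ C.T) : C.b s ∈ C.T := (C.hb s hs).1
lemma hrr {s : ZMod n} (hs : s ∈ C.T) : C.r (C.r s) = s := (C.hr s hs).2.1
lemma hbb {s : ZMod n} (hs : s ∈ C.T) : C.b (C.b s) = s := (C.hb s hs).2.1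

lemma hrne {s : ZMod n} (hs : s ∈ C.T) : C.r s ≠ s := ((C.hr s hs).2.2.ne).symm

lemma hbne {s : ZMod n} (hs : s ∈ C.T) : C.b s ≠ s := ((C.hb s hs).2.2.ne).symm

lemma hrT' {s : ZMod n} (hs : s ∈ C.T') : C.r s ∈ C.T' := (C.hT'cl s hs).1
lemma hbT' {s : ZMod n} (hs : s ∈ C.T') : C.b s ∈ C.T' := (C.hT'cl s hs).2

lemma hbk₀ : C.b C.k₀ ≠ C.k₀ := C.hbne C.hk₀T
lemma hrk₀ : C.r C.k₀ ≠ C.k₀ := C.hrne C.hk₀T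

include C in
lemma one_lt : 1 < n := by have := C.hn; omega

include C in
lemma hne_succ (x : ZMod n) : x ≠ x + 1 := by
  intro hc
  have h10 : (1 : ZMod n) = 0 := by
    have := add_left_cancel (a := x) (b := (1 : ZMod n)) (c := 0) (by rw [add_zero]; exact hc.symm)
    exact this
  exact one_ne_zero' C.one_lt h10


section Edges

lemma mem_V_iff {x : ZMod n} :
    x ∈ C.V ↔ x ∈ C.g '' (C.T : Set (ZMod n)) ∪ C.g1 '' (C.T' : Set (ZMod n))
      ∪ C.g2 '' (C.T' : Set (ZMod n)) := by
  simp only [Finset.mem_union, Finset.mem_image, Set.mem_union, Set.mem_image,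
    Finset.mem_coe]

lemma fs_ham {x : ZMod n} (hx : x ∉ C.T) : C.FS.Adj x (x + 1) := by
  rw [show C.FS = SimpleGraph.fromRel _ from rfl, SimpleGraph.fromRel_adj]
  exact ⟨C.hne_succ x, Or.inl (Or.inl ⟨rfl, hx⟩)⟩

lemma fs_blue {s : ZMod n} (hs : s ∈ C.T) : C.FS.Adj s (C.b s) := by
  rw [show C.FS = SimpleGraph.fromRel _ from rfl, SimpleGraph.fromRel_adj]
  exact ⟨(C.hbne hs).symm, Or.inl (Or.inr (Or.inr ⟨hs, rfl⟩))⟩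

lemma fs_red {s : ZMod n} (hs : s ∈ C.T) : C.FS.Adj (s + 1) (C.r s + 1) := by
  rw [show C.FS = SimpleGraph.fromRel _ from rfl, SimpleGraph.fromRel_adj]
  refine ⟨fun hc => C.hrne hs (add_right_cancel hc).symm, Or.inl (Or.inr (Or.inl ?_))⟩
  rw [add_sub_cancel_right]
  exact ⟨hs, rfl⟩

lemma sh_ham {x : ZMod n} (hx : x ∉ C.T) : C.Shat.Adj x (x + 1) := by
  rw [show C.Shat = SimpleGraph.fromRel _ from rfl, SimpleGraph.fromRel_adj]
  exact ⟨C.hne_succ x, Or.inl (Or.inl ⟨rfl, hx⟩)⟩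

lemma sh_blue {s : ZMod n} (hs : s ∈ C.T) (h1 : s ≠ C.k₀) (h2 : s ≠ C.b C.k₀) :
    C.Shat.Adj s (C.b s) := by
  rw [show C.Shat = SimpleGraph.fromRel _ from rfl, SimpleGraph.fromRel_adj]
  exact ⟨(C.hbne hs).symm, Or.inl (Or.inr (Or.inr ⟨hs, h1, h2, rfl⟩))⟩

lemma sh_red {s : ZMod n} (hs : s ∈ C.T) (h1 : s ≠ C.k₀) (h2 : s ≠ C.r C.k₀) :
    C.Shat.Adj (s + 1) (C.r s + 1) := by
  rw [show C.Shat = SimpleGraph.fromRel _ from rfl, SimpleGraph.fromRel_adj]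
  refine ⟨fun hc => C.hrne hs (add_right_cancel hc).symm, Or.inl (Or.inr (Or.inl ?_))⟩
  rw [add_sub_cancel_right]
  exact ⟨hs, h1, h2, rfl⟩

lemma shat_le_fs {x y : ZMod n} (h : C.Shat.Adj x y) : C.FS.Adj x y := by
  rw [show C.Shat = SimpleGraph.fromRel _ from rfl, SimpleGraph.fromRel_adj] at h
  rw [show C.FS = SimpleGraph.fromRel _ from rfl, SimpleGraph.fromRel_adj]
  obtain ⟨hne, h | h⟩ := h
  · exact ⟨hne, Or.inl (by tauto)⟩
  · exact ⟨hne, Or.inr (by tauto)⟩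

lemma shat_reach_fs {x y : ZMod n} (h : C.Shat.Reachable x y) : C.FS.Reachable x y :=
  SimpleGraph.Reachable.mono (fun _ _ hadj => C.shat_le_fs hadj) h

/-- FD adjacency: unfolded form. -/
lemma fd_adj_iff {x y : ZMod n} : C.FD.Adj x y ↔ x ≠ y ∧
    (FDrel C x y ∨ FDrel C y x) := by
  rw [show C.FD = SimpleGraph.fromRel _ from rfl, SimpleGraph.fromRel_adj]
  rfl

end Edges


section FDEdges

lemma fd_adj_of_rel {x y : ZMod n} (hne : x ≠ y) (h : FDrel C x y) : C.FD.Adj x y :=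
  (C.fd_adj_iff).2 ⟨hne, Or.inl h⟩

lemma gmemV {s : ZMod n} (hs : s ∈ C.T) : C.g s ∈ C.V := by
  simp only [V, Finset.mem_union, Finset.mem_image]
  exact Or.inl (Or.inl ⟨s, hs, rfl⟩)

lemma g1memV {s : ZMod n} (hs : s ∈ C.T') : C.g1 s ∈ C.V := by
  simp only [V, Finset.mem_union, Finset.mem_image]
  exact Or.inl (Or.inr ⟨s, hs, rfl⟩)

lemma g2memV {s : ZMod n} (hs : s ∈ C.T') : C.g2 s ∈ C.V := by
  simp only [V, Finset.mem_union, Finset.mem_image]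
  exact Or.inr ⟨s, hs, rfl⟩

lemma V_cases {w : ZMod n} (hw : w ∈ C.V) :
    (∃ u ∈ C.T, w = C.g u) ∨ (∃ u ∈ C.T', w = C.g1 u) ∨ (∃ u ∈ C.T', w = C.g2 u) := by
  simp only [V, Finset.mem_union, Finset.mem_image] at hw
  rcases hw with (⟨u, hu, rfl⟩ | ⟨u, hu, rfl⟩) | ⟨u, hu, rfl⟩
  · exact Or.inl ⟨u, hu, rfl⟩
  · exact Or.inr (Or.inl ⟨u, hu, rfl⟩)
  · exact Or.inr (Or.inr ⟨u, hu, rfl⟩)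

lemma fd_ham {x : ZMod n} (hx : x ∉ C.V) : C.FD.Adj x (x + 1) := by
  refine C.fd_adj_of_rel (C.hne_succ x) (Or.inl ⟨rfl, ?_⟩)
  rw [← mem_V_iff]
  exact hx

lemma auxRed_adj' {G : SimpleGraph (ZMod n)} {i j : ZMod n} (h : (auxRed n G).Adj i j) :
    G.Adj (i + 1) (j + 1) ∧ j ≠ i + 1 ∧ i ≠ j + 1 := h

lemma auxBlue_adj' {G : SimpleGraph (ZMod n)} {i j : ZMod n} (h : (auxBlue n G).Adj i j) :
    G.Adj i j ∧ j ≠ i + 1 ∧ i ≠ j + 1 := h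

lemma fd_red0 {s : ZMod n} (hs : s ∈ C.T) : C.FD.Adj (C.g s + 1) (C.g (C.r s) + 1) :=
  C.fd_adj_of_rel (auxRed_adj' (C.hA1 s hs)).1.ne (Or.inr (Or.inl ⟨s, hs, rfl, rfl⟩))

lemma fd_red1 {s : ZMod n} (hs : s ∈ C.T') (h1 : s ≠ C.k₀) (h2 : C.r s ≠ C.k₀) :
    C.FD.Adj (C.g1 s + 1) (C.g1 (C.r s) + 1) :=
  C.fd_adj_of_rel (auxRed_adj' (C.hA3 s hs h1 h2).1).1.ne
    (Or.inr (Or.inr (Or.inl ⟨s, hs, h1, h2, Or.inl ⟨rfl, rfl⟩⟩)))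

lemma fd_red2 {s : ZMod n} (hs : s ∈ C.T') (h1 : s ≠ C.k₀) (h2 : C.r s ≠ C.k₀) :
    C.FD.Adj (C.g2 s + 1) (C.g2 (C.r s) + 1) :=
  C.fd_adj_of_rel (auxRed_adj' (C.hA3 s hs h1 h2).2).1.ne
    (Or.inr (Or.inr (Or.inl ⟨s, hs, h1, h2, Or.inr ⟨rfl, rfl⟩⟩)))

lemma fd_red4 : C.FD.Adj (C.g1 (C.r C.k₀) + 1) (C.g2 C.k₀ + 1) :=
  C.fd_adj_of_rel (auxRed_adj' C.hA5.1).1.ne (Or.inr (Or.inr (Or.inr (Or.inl ⟨rfl, rfl⟩))))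

lemma fd_red5 : C.FD.Adj (C.g2 (C.r C.k₀) + 1) (C.g1 C.k₀ + 1) :=
  C.fd_adj_of_rel (auxRed_adj' C.hA5.2).1.ne (Or.inr (Or.inr (Or.inr (Or.inr (Or.inl ⟨rfl, rfl⟩)))))

lemma fd_blue0 {s : ZMod n} (hs : s ∈ C.T) (h1 : s ≠ C.k₀) (h2 : C.b s ≠ C.k₀) :
    C.FD.Adj (C.g s) (C.g (C.b s)) :=
  C.fd_adj_of_rel (auxBlue_adj' (C.hA2 s hs h1 h2)).1.ne
    (Or.inr (Or.inr (Or.inr (Or.inr (Or.inr (Or.inl ⟨s, hs, h1, h2, rfl, rfl⟩))))))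

lemma fd_blue1 {s : ZMod n} (hs : s ∈ C.T') (h1 : s ≠ C.k₀) (h2 : C.b s ≠ C.k₀) :
    C.FD.Adj (C.g1 s) (C.g1 (C.b s)) :=
  C.fd_adj_of_rel (auxBlue_adj' (C.hA4 s hs h1 h2).1).1.ne
    (Or.inr (Or.inr (Or.inr (Or.inr (Or.inr (Or.inr (Or.inl ⟨s, hs, h1, h2, Or.inl ⟨rfl, rfl⟩⟩)))))))

lemma fd_blue2 {s : ZMod n} (hs : s ∈ C.T') (h1 : s ≠ C.k₀) (h2 : C.b s ≠ C.k₀) :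
    C.FD.Adj (C.g2 s) (C.g2 (C.b s)) :=
  C.fd_adj_of_rel (auxBlue_adj' (C.hA4 s hs h1 h2).2).1.ne
    (Or.inr (Or.inr (Or.inr (Or.inr (Or.inr (Or.inr (Or.inl ⟨s, hs, h1, h2, Or.inr ⟨rfl, rfl⟩⟩)))))))

lemma fd_blue8 : C.FD.Adj (C.g (C.b C.k₀)) (C.g1 C.k₀) :=
  C.fd_adj_of_rel (auxBlue_adj' C.hA6.1).1.ne
    (Or.inr (Or.inr (Or.inr (Or.inr (Or.inr (Or.inr (Or.inr (Or.inl ⟨rfl, rfl⟩))))))))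

lemma fd_blue9 : C.FD.Adj (C.g1 (C.b C.k₀)) (C.g2 C.k₀) :=
  C.fd_adj_of_rel (auxBlue_adj' C.hA6.2.1).1.ne
    (Or.inr (Or.inr (Or.inr (Or.inr (Or.inr (Or.inr (Or.inr (Or.inr (Or.inl ⟨rfl, rfl⟩)))))))))

lemma fd_blue10 : C.FD.Adj (C.g2 (C.b C.k₀)) (C.g C.k₀) :=
  C.fd_adj_of_rel (auxBlue_adj' C.hA6.2.2).1.ne
    (Or.inr (Or.inr (Or.inr (Or.inr (Or.inr (Or.inr (Or.inr (Or.inr (Or.inr ⟨rfl, rfl⟩)))))))))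

end FDEdges

section Markers

/-- the marker (next `T`-element) in the `S`-world. -/
noncomputable def mT (x : ZMod n) : ZMod n := mark C.T C.hTne x

/-- the marker (next `V`-element) in the `D`-world. -/
noncomputable def mV (x : ZMod n) : ZMod n := mark C.V C.hVne x

lemma mT_def (x : ZMod n) : C.mT x = mark C.T C.hTne x := rfl
lemma mV_def (x : ZMod n) : C.mV x = mark C.V C.hVne x := rfl
lemma mT_mem (x : ZMod n) : C.mT x ∈ C.T := mark_mem _ _
lemma mV_mem (x : ZMod n) : C.mV x ∈ C.V := mark_mem _ _
lemma mT_id {x : ZMod n} (hx : x ∈ C.T) : C.mT x = x := mark_id _ hx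
lemma mV_id {x : ZMod n} (hx : x ∈ C.V) : C.mV x = x := mark_id _ hx
lemma mT_shift {x : ZMod n} (hx : x ∉ C.T) : C.mT x = C.mT (x + 1) := mark_shift _ hx
lemma mV_shift {x : ZMod n} (hx : x ∉ C.V) : C.mV x = C.mV (x + 1) := mark_shift _ hx

lemma sh_reach_mT (x : ZMod n) : C.Shat.Reachable x (C.mT x) :=
  mark_reach _ _ (fun y hy => C.sh_ham hy) x

lemma fd_reach_mV (x : ZMod n) : C.FD.Reachable x (C.mV x) :=
  mark_reach _ _ (fun y hy => C.fd_ham hy) x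

end Markers


section Interleave

lemma hord1le {u v : ZMod n} (hu : u ∈ C.T) (hv : v ∈ C.T) (h : u.val ≤ v.val) :
    (C.g u).val ≤ (C.g v).val := by
  rcases eq_or_lt_of_le h with heq | hlt
  · rw [ZMod.val_injective _ heq]
  · exact (C.hord1 u hu v hv hlt).le

lemma exists_ne_T (s : ZMod n) : ∃ u ∈ C.T, u ≠ s := by
  by_cases hc : s = C.k₀
  · exact ⟨C.b C.k₀, C.hbT C.hk₀T, by rw [hc]; exact C.hbk₀⟩
  · exact ⟨C.k₀, C.hk₀T, fun h => hc h.symm⟩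

lemma mT_succ_ne {s : ZMod n} (hs : s ∈ C.T) : C.mT (s + 1) ≠ s := by
  intro hc
  obtain ⟨u, huT, hus⟩ := C.exists_ne_T s
  have hmin : (C.mT (s + 1) - (s + 1)).val ≤ (u - (s + 1)).val := mark_min _ huT
  rw [hc] at hmin
  have h1 : s - (s + 1) = -1 := by ring
  rw [h1, neg_one_val C.one_lt] at hmin
  have h2 : (u - (s + 1)).val = n - 1 := by
    have := ZMod.val_lt (u - (s + 1))
    omega
  have h3 : u - (s + 1) = -1 := by
    apply ZMod.val_injective
    rw [h2, neg_one_val C.one_lt]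
  apply hus
  have : u = -1 + (s + 1) := by rw [← h3]; ring
  rw [this]; ring

lemma tmin {s u : ZMod n} (hs : s ∈ C.T) (hu : u ∈ C.T) (hune : u ≠ s) :
    (C.mT (s + 1) - s).val ≤ (u - s).val := by
  have h : (C.mT (s + 1) - (s + 1)).val ≤ (u - (s + 1)).val := mark_min C.hTne hu
  have ht₀ : C.mT (s + 1) ≠ s := C.mT_succ_ne hs
  have e1 : C.mT (s + 1) - (s + 1) = (C.mT (s + 1) - s) - 1 := by ring
  have e2 : u - (s + 1) = (u - s) - 1 := by ring
  have c1 : C.mT (s + 1) - s ≠ 0 := sub_ne_zero_of_ne ht₀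
  have c2 : u - s ≠ 0 := sub_ne_zero_of_ne hune
  rw [e1, e2, sub_one_val C.one_lt c1, sub_one_val C.one_lt c2] at h
  have p1 : 0 < (C.mT (s + 1) - s).val := ZMod.val_pos.2 c1
  have p2 : 0 < (u - s).val := ZMod.val_pos.2 c2
  omega

lemma O1 {s w : ZMod n} (hs : s ∈ C.T') (hw : w ∈ C.V) (h : (C.g s).val < w.val) :
    (C.g1 s).val ≤ w.val := by
  have hsT := C.hT'T hs
  rcases C.V_cases hw with ⟨u, huT, rfl⟩ | ⟨u, huT, rfl⟩ | ⟨u, huT, rfl⟩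
  · have hune : u ≠ s := fun hc => by rw [hc] at h; omega
    rcases val_cases hune with hlt | hgt
    · exact absurd (C.hord1 u huT s hsT hlt) (by omega)
    · have h2 := C.hord3 s hs u huT hgt
      have h3 := (C.hord2 s hs).2
      have h1 := (C.hord2 s hs).1
      omega
  · by_cases hus : u = s
    · rw [hus]
    · rcases val_cases hus with hlt | hgt
      · have h1 := (C.hord2 u huT).1
        have h2 := (C.hord2 u huT).2
        have h3 := C.hord3 u huT s hsT hlt
        omega
      · have h1 := C.hord3 s hs u (C.hT'T huT) hgt
        have h2 := (C.hord2 u huT).1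
        have h3 := (C.hord2 s hs).2
        omega
  · by_cases hus : u = s
    · rw [hus]; exact ((C.hord2 s hs).2).le
    · rcases val_cases hus with hlt | hgt
      · have h3 := C.hord3 u huT s hsT hlt
        omega
      · have h1 := C.hord3 s hs u (C.hT'T huT) hgt
        have h2 := (C.hord2 u huT).1
        have h4 := (C.hord2 u huT).2
        have h3 := (C.hord2 s hs).2
        omega

lemma O2 {s w : ZMod n} (hs : s ∈ C.T') (hw : w ∈ C.V) (h : (C.g1 s).val < w.val) :
    (C.g2 s).val ≤ w.val := by
  have hsT := C.hT'T hs
  have hg1 := (C.hord2 s hs).1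
  have hg2 := (C.hord2 s hs).2
  rcases C.V_cases hw with ⟨u, huT, rfl⟩ | ⟨u, huT, rfl⟩ | ⟨u, huT, rfl⟩
  · have hune : u ≠ s := fun hc => by rw [hc] at h; omega
    rcases val_cases hune with hlt | hgt
    · have := C.hord1 u huT s hsT hlt; omega
    · have := C.hord3 s hs u huT hgt; omega
  · by_cases hus : u = s
    · rw [hus] at h; omega
    · rcases val_cases hus with hlt | hgt
      · have h1 := (C.hord2 u huT).1
        have h2 := (C.hord2 u huT).2
        have h3 := C.hord3 u huT s hsT hlt
        omega
      · have h1 := C.hord3 s hs u (C.hT'T huT) hgt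
        have h2 := (C.hord2 u huT).1
        omega
  · by_cases hus : u = s
    · rw [hus]
    · rcases val_cases hus with hlt | hgt
      · have h3 := C.hord3 u huT s hsT hlt; omega
      · have h1 := C.hord3 s hs u (C.hT'T huT) hgt
        have h2 := (C.hord2 u huT).1
        have h4 := (C.hord2 u huT).2
        omega

lemma markV_g1 {s : ZMod n} (hs : s ∈ C.T') : C.mV (C.g s + 1) = C.g1 s := by
  have ha : (C.g s).val < (C.g1 s).val := (C.hord2 s hs).1
  rw [mV_def]
  refine mark_eq_succ C.hVne C.one_lt (C.g1memV hs)
    ((C.hgg12 s (C.hT'T hs) s hs).1.symm) (fun w hw hwne => ?_)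
  rcases val_cases hwne with hbelow | habove
  · exact dcmp_ab ha hbelow
  · exact dcmp_aa ha habove (C.O1 hs hw habove)

lemma markV_g2 {s : ZMod n} (hs : s ∈ C.T') : C.mV (C.g1 s + 1) = C.g2 s := by
  have ha : (C.g1 s).val < (C.g2 s).val := (C.hord2 s hs).2
  rw [mV_def]
  refine mark_eq_succ C.hVne C.one_lt (C.g2memV hs)
    (Ne.symm (C.hg12 s hs s hs)) (fun w hw hwne => ?_)
  rcases val_cases hwne with hbelow | habove
  · exact dcmp_ab ha hbelow
  · exact dcmp_aa ha habove (C.O2 hs hw habove)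

lemma markV_master {s : ZMod n} (hs : s ∈ C.T) (a : ZMod n)
    (H0 : ∀ u ∈ C.T, u ≠ s → C.g u ≠ a)
    (H1 : (C.g s).val ≤ a.val)
    (H2 : ∀ u ∈ C.T, s.val < u.val → a.val < (C.g u).val)
    (H3 : ∀ w ∈ C.V, a.val < w.val → ∃ u ∈ C.T, s.val < u.val ∧ (C.g u).val ≤ w.val) :
    C.mV (a + 1) = C.g (C.mT (s + 1)) := by
  have ht₀T : C.mT (s + 1) ∈ C.T := C.mT_mem _
  have ht₀ne : C.mT (s + 1) ≠ s := C.mT_succ_ne hs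
  have hgt₀V : C.g (C.mT (s + 1)) ∈ C.V := C.gmemV ht₀T
  have hgt₀a : C.g (C.mT (s + 1)) ≠ a := H0 _ ht₀T ht₀ne
  by_cases hcase : s.val < (C.mT (s + 1)).val
  · have hga : a.val < (C.g (C.mT (s + 1))).val := H2 _ ht₀T hcase
    rw [mV_def]
    refine mark_eq_succ C.hVne C.one_lt hgt₀V hgt₀a (fun w hw hwa => ?_)
    rcases val_cases hwa with hbelow | habove
    · exact dcmp_ab hga hbelow
    · obtain ⟨u, huT, hus, hguw⟩ := H3 w hw habove
      have hune : u ≠ s := fun hc => by rw [hc] at hus; omega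
      have h4 := C.tmin hs huT hune
      have ht₀u : (C.mT (s + 1)).val ≤ u.val := dle_aa hcase hus h4
      have h5 : (C.g (C.mT (s + 1))).val ≤ (C.g u).val := C.hord1le ht₀T huT ht₀u
      exact dcmp_aa hga habove (le_trans h5 hguw)
  · have ht₀lt : (C.mT (s + 1)).val < s.val := by
      rcases val_cases ht₀ne with h | h
      · exact h
      · exact absurd h hcase
    have noAbove : ∀ u ∈ C.T, ¬ s.val < u.val := by
      intro u huT hus
      have hune : u ≠ s := fun hc => by rw [hc] at hus; omega
      exact dle_ba_false ht₀lt hus (C.tmin hs huT hune)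
    have baseT : ∀ u ∈ C.T, (C.g (C.mT (s + 1))).val ≤ (C.g u).val := by
      intro u huT
      by_cases hus : u = s
      · subst hus
        exact (C.hord1 _ ht₀T _ huT ht₀lt).le
      · have hub : u.val < s.val := by
          rcases val_cases hus with h | h
          · exact h
          · exact absurd h (noAbove u huT)
        have h6 := C.tmin hs huT hus
        have h7 : (C.mT (s + 1)).val ≤ u.val := dle_bb ht₀lt hub h6
        exact C.hord1le ht₀T huT h7
    have gt₀min : ∀ w ∈ C.V, (C.g (C.mT (s + 1))).val ≤ w.val := by
      intro w hw
      rcases C.V_cases hw with ⟨u, huT, rfl⟩ | ⟨u, huT, rfl⟩ | ⟨u, huT, rfl⟩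
      · exact baseT u huT
      · have := baseT u (C.hT'T huT)
        have := (C.hord2 u huT).1
        omega
      · have := baseT u (C.hT'T huT)
        have h1 := (C.hord2 u huT).1
        have h2 := (C.hord2 u huT).2
        omega
    rw [mV_def]
    refine mark_eq_succ C.hVne C.one_lt hgt₀V hgt₀a (fun w hw hwa => ?_)
    rcases val_cases hwa with hbelow | habove
    · have h5 : (C.g (C.mT (s + 1))).val < a.val :=
        lt_of_lt_of_le (C.hord1 _ ht₀T _ hs ht₀lt) H1
      exact dcmp_bb h5 hbelow (gt₀min w hw)
    · exfalso
      obtain ⟨u, huT, hus, _⟩ := H3 w hw habove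
      exact noAbove u huT hus

lemma markV_after_g2 {s : ZMod n} (hs : s ∈ C.T') :
    C.mV (C.g2 s + 1) = C.g (C.mT (s + 1)) := by
  have hsT := C.hT'T hs
  have hg1 := (C.hord2 s hs).1
  have hg2 := (C.hord2 s hs).2
  refine C.markV_master hsT (C.g2 s) (fun u huT _ => (C.hgg12 u huT s hs).2) (by omega)
    (fun u huT h => C.hord3 s hs u huT h) (fun w hw h => ?_)
  rcases C.V_cases hw with ⟨u, huT, rfl⟩ | ⟨u, huT', rfl⟩ | ⟨u, huT', rfl⟩
  · have hune : u ≠ s := fun hc => by rw [hc] at h; omega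
    rcases val_cases hune with hlt | hgt
    · have := C.hord1 u huT s hsT hlt; omega
    · exact ⟨u, huT, hgt, le_refl _⟩
  · by_cases hus : u = s
    · rw [hus] at h; omega
    · rcases val_cases hus with hlt | hgt
      · have h1 := (C.hord2 u huT').1
        have h2 := (C.hord2 u huT').2
        have h3 := C.hord3 u huT' s hsT hlt
        omega
      · exact ⟨u, C.hT'T huT', hgt, ((C.hord2 u huT').1).le⟩
  · by_cases hus : u = s
    · rw [hus] at h; omega
    · rcases val_cases hus with hlt | hgt
      · have h3 := C.hord3 u huT' s hsT hlt; omega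
      · have h1 := (C.hord2 u huT').1
        have h2 := (C.hord2 u huT').2
        exact ⟨u, C.hT'T huT', hgt, by omega⟩

lemma markV_after_g {s : ZMod n} (hs : s ∈ C.T) (hs' : s ∉ C.T') :
    C.mV (C.g s + 1) = C.g (C.mT (s + 1)) := by
  refine C.markV_master hs (C.g s)
    (fun u huT hune hc => hune (C.hginj u huT s hs hc)) (le_refl _)
    (fun u huT h => C.hord1 s hs u huT h) (fun w hw h => ?_)
  rcases C.V_cases hw with ⟨u, huT, rfl⟩ | ⟨u, huT', rfl⟩ | ⟨u, huT', rfl⟩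
  · have hune : u ≠ s := fun hc => by rw [hc] at h; omega
    rcases val_cases hune with hlt | hgt
    · have := C.hord1 u huT s hs hlt; omega
    · exact ⟨u, huT, hgt, le_refl _⟩
  · have hus : u ≠ s := fun hc => hs' (hc ▸ huT')
    rcases val_cases hus with hlt | hgt
    · have h1 := (C.hord2 u huT').1
      have h2 := (C.hord2 u huT').2
      have h3 := C.hord3 u huT' s hs hlt
      omega
    · exact ⟨u, C.hT'T huT', hgt, ((C.hord2 u huT').1).le⟩
  · have hus : u ≠ s := fun hc => hs' (hc ▸ huT')
    rcases val_cases hus with hlt | hgt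
    · have h3 := C.hord3 u huT' s hs hlt; omega
    · have h1 := (C.hord2 u huT').1
      have h2 := (C.hord2 u huT').2
      exact ⟨u, C.hT'T huT', hgt, by omega⟩

end Interleave


section Parity

/-- presence of the S-side darts after deleting the two chords at `k₀`. -/
def presS (x : ZMod n) (c : Bool) : Prop :=
  if c then (x - 1 ∈ C.T → (x - 1 ≠ C.k₀ ∧ x - 1 ≠ C.r C.k₀))
  else (x ∈ C.T → (x ≠ C.k₀ ∧ x ≠ C.b C.k₀))

/-- the other end of an S-side dart. -/
noncomputable def iotaS (d : ZMod n × Bool) : ZMod n × Bool :=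
  if d.2 then (if d.1 - 1 ∈ C.T then (C.r (d.1 - 1) + 1, true) else (d.1 - 1, false))
  else (if d.1 ∈ C.T then (C.b d.1, false) else (d.1 + 1, true))

lemma iotaS_adj {x : ZMod n} {c : Bool} (hp : C.presS x c) :
    C.Shat.Adj x (C.iotaS (x, c)).1 := by
  cases c with
  | false =>
    simp only [presS, if_false, Bool.false_eq_true] at hp
    by_cases hx : x ∈ C.T
    · obtain ⟨h1, h2⟩ := hp hx
      simp only [iotaS, if_pos hx, Bool.false_eq_true, if_false]
      exact C.sh_blue hx h1 h2
    · simp only [iotaS, if_neg hx, Bool.false_eq_true, if_false]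
      exact C.sh_ham hx
  | true =>
    simp only [presS, if_true] at hp
    by_cases hx : x - 1 ∈ C.T
    · obtain ⟨h1, h2⟩ := hp hx
      simp only [iotaS, if_pos hx, if_true]
      have := C.sh_red hx h1 h2
      rwa [zsub_add_one _] at this
    · simp only [iotaS, if_neg hx, if_true]
      have := (C.sh_ham hx).symm
      rwa [zsub_add_one _] at this

lemma iotaS_pres {x : ZMod n} {c : Bool} (hp : C.presS x c) :
    C.presS (C.iotaS (x, c)).1 (C.iotaS (x, c)).2 := by
  cases c with
  | false =>
    simp only [presS, Bool.false_eq_true, if_false] at hp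
    by_cases hx : x ∈ C.T
    · obtain ⟨h1, h2⟩ := hp hx
      simp only [iotaS, if_pos hx, Bool.false_eq_true, if_false, presS]
      intro _
      constructor
      · intro hc
        exact h2 (by rw [← hc, C.hbb hx])
      · intro hc
        apply h1
        have := congrArg C.b hc
        rwa [C.hbb hx, C.hbb C.hk₀T] at this
    · simp only [iotaS, if_neg hx, Bool.false_eq_true, if_false, presS, if_true]
      rw [zadd_sub_one _]
      intro hc
      exact absurd hc hx
  | true =>
    simp only [presS, if_true] at hp
    by_cases hx : x - 1 ∈ C.T
    · obtain ⟨h1, h2⟩ := hp hx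
      simp only [iotaS, if_pos hx, presS, if_true]
      rw [zadd_sub_one _]
      intro _
      constructor
      · intro hc
        apply h2
        have := congrArg C.r hc
        rwa [C.hrr hx] at this
      · intro hc
        apply h1
        have := congrArg C.r hc
        rwa [C.hrr hx, C.hrr C.hk₀T] at this
    · simp only [iotaS, if_neg hx, presS, Bool.false_eq_true, if_false]
      intro hc
      exact absurd hc hx

lemma iotaS_invol {x : ZMod n} {c : Bool} : C.iotaS (C.iotaS (x, c)) = (x, c) := by
  cases c with
  | false =>
    by_cases hx : x ∈ C.T
    · have h1 : C.iotaS (x, false) = (C.b x, false) := by simp [iotaS, hx]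
      have h2 : C.iotaS (C.b x, false) = (C.b (C.b x), false) := by simp [iotaS, C.hbT hx]
      rw [h1, h2, C.hbb hx]
    · have h1 : C.iotaS (x, false) = (x + 1, true) := by simp [iotaS, hx]
      have h2 : C.iotaS (x + 1, true) = (x, false) := by
        simp [iotaS, zadd_sub_one, hx]
      rw [h1, h2]
  | true =>
    by_cases hx : x - 1 ∈ C.T
    · have h1 : C.iotaS (x, true) = (C.r (x - 1) + 1, true) := by simp [iotaS, hx]
      have h2 : C.iotaS (C.r (x - 1) + 1, true) = (x, true) := by
        simp only [iotaS, if_true, zadd_sub_one]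
        rw [if_pos (C.hrT hx), C.hrr hx, zsub_add_one]
      rw [h1, h2]
    · have h1 : C.iotaS (x, true) = (x - 1, false) := by simp [iotaS, hx]
      have h2 : C.iotaS (x - 1, false) = (x, true) := by
        simp only [iotaS, Bool.false_eq_true, if_false]
        rw [if_neg hx, zsub_add_one]
      rw [h1, h2]

lemma iotaS_ne {x : ZMod n} {c : Bool} (hp : C.presS x c) : C.iotaS (x, c) ≠ (x, c) := by
  cases c with
  | false =>
    by_cases hx : x ∈ C.T
    · simp only [iotaS, if_pos hx, Bool.false_eq_true, if_false]
      intro hc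
      rw [Prod.mk.injEq] at hc
      exact C.hbne hx hc.1
    · simp only [iotaS, if_neg hx, Bool.false_eq_true, if_false]
      intro hc
      simpa using congrArg Prod.snd hc
  | true =>
    by_cases hx : x - 1 ∈ C.T
    · simp only [iotaS, if_pos hx, if_true]
      intro hc
      rw [Prod.mk.injEq] at hc
      exact C.hrne hx (eq_sub_of_add_eq hc.1)
    · simp only [iotaS, if_neg hx, if_true]
      intro hc
      simpa using congrArg Prod.snd hc

lemma sdart_even (K : Finset (ZMod n))
    (hcl : ∀ x ∈ K, ∀ y : ZMod n, C.Shat.Adj x y → y ∈ K) :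
    Even (((K ×ˢ (Finset.univ : Finset Bool))).filter
      (fun d => C.presS d.1 d.2)).card := by
  apply even_card_invol _ C.iotaS
  · rintro ⟨x, c⟩ hd
    rw [Finset.mem_filter, Finset.mem_product] at hd ⊢
    obtain ⟨⟨hK, -⟩, hp⟩ := hd
    refine ⟨⟨hcl x hK _ (C.iotaS_adj hp), Finset.mem_univ _⟩, C.iotaS_pres hp⟩
  · rintro ⟨x, c⟩ _
    exact C.iotaS_invol
  · rintro ⟨x, c⟩ hd
    rw [Finset.mem_filter] at hd
    exact C.iotaS_ne hd.2

end Parity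


section CutReach

lemma S2a : C.Shat.Reachable C.k₀ (C.b C.k₀) := by
  by_contra hcon
  set K : Finset (ZMod n) := Finset.univ.filter (fun v => C.Shat.Reachable C.k₀ v) with hK
  have hmemK : ∀ {v : ZMod n}, v ∈ K ↔ C.Shat.Reachable C.k₀ v := by
    intro v; simp [hK]
  have hcl : ∀ x ∈ K, ∀ y : ZMod n, C.Shat.Adj x y → y ∈ K :=
    fun x hx y hadj => hmemK.2 ((hmemK.1 hx).trans hadj.reachable)
  have heven := C.sdart_even K hcl
  have hk₀K : C.k₀ ∈ K := hmemK.2 (SimpleGraph.Reachable.refl _)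
  have hbk₀K : C.b C.k₀ ∉ K := fun h => hcon (hmemK.1 h)
  have hk₁K : C.k₀ + 1 ∉ K := fun h => C.hsep (C.shat_reach_fs (hmemK.1 h))
  have hrk₁K : C.r C.k₀ + 1 ∉ K := by
    intro h
    exact C.hsep ((C.shat_reach_fs (hmemK.1 h)).trans (C.fs_red C.hk₀T).symm.reachable)
  have hneg : ((K ×ˢ (Finset.univ : Finset Bool))).filter (fun d => ¬ C.presS d.1 d.2)
      = {(C.k₀, false)} := by
    ext ⟨x, c⟩
    simp only [Finset.mem_filter, Finset.mem_product, Finset.mem_univ, and_true,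
      Finset.mem_singleton, Prod.mk.injEq]
    constructor
    · rintro ⟨hxK, hnp⟩
      cases c with
      | false =>
        simp only [presS, Bool.false_eq_true, if_false] at hnp
        push_neg at hnp
        obtain ⟨hxT, hor⟩ := hnp
        by_cases h : x = C.k₀
        · exact ⟨h, rfl⟩
        · exact absurd hxK ((hor h) ▸ hbk₀K)
      | true =>
        simp only [presS, if_true] at hnp
        push_neg at hnp
        obtain ⟨hxT, hor⟩ := hnp
        by_cases h : x - 1 = C.k₀
        · have : x = C.k₀ + 1 := eq_add_of_sub_eq h
          exact absurd hxK (this ▸ hk₁K)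
        · have : x = C.r C.k₀ + 1 := eq_add_of_sub_eq (hor h)
          exact absurd hxK (this ▸ hrk₁K)
    · rintro ⟨rfl, rfl⟩
      refine ⟨hk₀K, ?_⟩
      simp only [presS, Bool.false_eq_true, if_false]
      intro himp
      exact (himp C.hk₀T).1 rfl
  have hsplit := Finset.card_filter_add_card_filter_not
    (s := K ×ˢ (Finset.univ : Finset Bool)) (p := fun d => C.presS d.1 d.2)
  rw [hneg] at hsplit
  have hprod : (K ×ˢ (Finset.univ : Finset Bool)).card = 2 * K.card := by
    rw [Finset.card_product]
    simp [Finset.card_univ]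
    ring
  obtain ⟨m, hm⟩ := heven
  rw [Finset.card_singleton, hprod] at hsplit
  omega

lemma S2b : C.Shat.Reachable (C.k₀ + 1) (C.r C.k₀ + 1) := by
  by_contra hcon
  set K : Finset (ZMod n) := Finset.univ.filter
    (fun v => C.Shat.Reachable (C.k₀ + 1) v) with hK
  have hmemK : ∀ {v : ZMod n}, v ∈ K ↔ C.Shat.Reachable (C.k₀ + 1) v := by
    intro v; simp [hK]
  have hcl : ∀ x ∈ K, ∀ y : ZMod n, C.Shat.Adj x y → y ∈ K :=
    fun x hx y hadj => hmemK.2 ((hmemK.1 hx).trans hadj.reachable)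
  have heven := C.sdart_even K hcl
  have hk₁K : C.k₀ + 1 ∈ K := hmemK.2 (SimpleGraph.Reachable.refl _)
  have hrk₁K : C.r C.k₀ + 1 ∉ K := fun h => hcon (hmemK.1 h)
  have hk₀K : C.k₀ ∉ K := fun h => C.hsep (C.shat_reach_fs (hmemK.1 h)).symm
  have hbk₀K : C.b C.k₀ ∉ K := by
    intro h
    apply C.hsep
    exact ((C.fs_blue C.hk₀T).reachable.trans (C.shat_reach_fs (hmemK.1 h)).symm).symm.symm
  have hneg : ((K ×ˢ (Finset.univ : Finset Bool))).filter (fun d => ¬ C.presS d.1 d.2)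
      = {(C.k₀ + 1, true)} := by
    ext ⟨x, c⟩
    simp only [Finset.mem_filter, Finset.mem_product, Finset.mem_univ, and_true,
      Finset.mem_singleton, Prod.mk.injEq]
    constructor
    · rintro ⟨hxK, hnp⟩
      cases c with
      | false =>
        simp only [presS, Bool.false_eq_true, if_false] at hnp
        push_neg at hnp
        obtain ⟨hxT, hor⟩ := hnp
        by_cases h : x = C.k₀
        · exact absurd hxK (h ▸ hk₀K)
        · exact absurd hxK ((hor h) ▸ hbk₀K)
      | true =>
        simp only [presS, if_true] at hnp
        push_neg at hnp
        obtain ⟨hxT, hor⟩ := hnp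
        by_cases h : x - 1 = C.k₀
        · exact ⟨eq_add_of_sub_eq h, rfl⟩
        · have : x = C.r C.k₀ + 1 := eq_add_of_sub_eq (hor h)
          exact absurd hxK (this ▸ hrk₁K)
    · rintro ⟨rfl, rfl⟩
      refine ⟨hk₁K, ?_⟩
      simp only [presS, if_true]
      intro himp
      rw [zadd_sub_one] at himp
      exact (himp C.hk₀T).1 rfl
  have hsplit := Finset.card_filter_add_card_filter_not
    (s := K ×ˢ (Finset.univ : Finset Bool)) (p := fun d => C.presS d.1 d.2)
  rw [hneg] at hsplit
  have hprod : (K ×ˢ (Finset.univ : Finset Bool)).card = 2 * K.card := by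
    rw [Finset.card_product]
    simp [Finset.card_univ]
    ring
  obtain ⟨m, hm⟩ := heven
  rw [Finset.card_singleton, hprod] at hsplit
  omega

lemma notXY : ¬ C.Shat.Reachable C.k₀ (C.k₀ + 1) :=
  fun h => C.hsep (C.shat_reach_fs h)

end CutReach


section CycleConn

/-- moves along the cycle `C` avoiding the blue edge at `k₀`. -/
def Rel1 (x y : ZMod n) : Prop :=
  x ∈ C.T' ∧ y ∈ C.T' ∧
    ((y = C.r x ∨ x = C.r y) ∨ ((y = C.b x ∨ x = C.b y) ∧ x ≠ C.k₀ ∧ y ≠ C.k₀))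

/-- moves along the cycle `C` avoiding the vertex `k₀` entirely. -/
def Rel2 (x y : ZMod n) : Prop :=
  x ∈ C.T' ∧ y ∈ C.T' ∧ x ≠ C.k₀ ∧ y ≠ C.k₀ ∧
    (y = C.r x ∨ x = C.r y ∨ y = C.b x ∨ x = C.b y)

lemma E2_inv {a z : ZMod n} (h : Relation.EqvGen C.Rel2 a z) :
    a = z ∨ ((z ∈ C.T' ∧ z ≠ C.k₀) ∧ (a ∈ C.T' ∧ a ≠ C.k₀)) := by
  induction h with
  | rel x y hxy => exact Or.inr ⟨⟨hxy.2.1, hxy.2.2.2.1⟩, ⟨hxy.1, hxy.2.2.1⟩⟩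
  | refl x => exact Or.inl rfl
  | symm x y _ ih =>
    rcases ih with h | h
    · exact Or.inl h.symm
    · exact Or.inr ⟨h.2, h.1⟩
  | trans x y z _ _ ih1 ih2 =>
    rcases ih1 with h1 | h1
    · rcases ih2 with h2 | h2
      · exact Or.inl (h1.trans h2)
      · exact Or.inr ⟨h2.1, h1 ▸ h2.2⟩
    · rcases ih2 with h2 | h2
      · exact Or.inr ⟨h2 ▸ h1.1, h1.2⟩
      · exact Or.inr ⟨h2.1, h1.2⟩

/-- the ends of a T'-dart. -/
noncomputable def iotaC (d : ZMod n × Bool) : ZMod n × Bool :=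
  if d.2 then (C.b d.1, true) else (C.r d.1, false)

lemma Q1pair : Relation.EqvGen C.Rel1 C.k₀ (C.b C.k₀) := by
  by_contra hcon
  set K : Finset (ZMod n) := C.T'.filter (fun v => Relation.EqvGen C.Rel1 C.k₀ v) with hK
  have hmemK : ∀ {v : ZMod n}, v ∈ K ↔ v ∈ C.T' ∧ Relation.EqvGen C.Rel1 C.k₀ v := by
    intro v; simp [hK]
  have hKT : ∀ {v : ZMod n}, v ∈ K → v ∈ C.T := fun hv => C.hT'T (hmemK.1 hv).1
  have hk₀K : C.k₀ ∈ K := hmemK.2 ⟨C.hk₀, Relation.EqvGen.refl _⟩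
  have hbk₀K : C.b C.k₀ ∉ K := fun h => hcon (hmemK.1 h).2
  set pres : ZMod n → Bool → Prop :=
    fun x c => c = true → (x ≠ C.k₀ ∧ x ≠ C.b C.k₀) with hpres
  have heven : Even (((K ×ˢ (Finset.univ : Finset Bool))).filter
      (fun d => pres d.1 d.2)).card := by
    apply even_card_invol _ C.iotaC
    · rintro ⟨x, c⟩ hd
      rw [Finset.mem_filter, Finset.mem_product] at hd ⊢
      obtain ⟨⟨hxK, -⟩, hp⟩ := hd
      obtain ⟨hxT', hxE⟩ := hmemK.1 hxK
      cases c with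
      | false =>
        have hrel : C.Rel1 x (C.r x) := ⟨hxT', C.hrT' hxT', Or.inl (Or.inl rfl)⟩
        refine ⟨⟨hmemK.2 ⟨C.hrT' hxT', Relation.EqvGen.trans _ _ _ hxE (Relation.EqvGen.rel _ _ hrel)⟩,
          Finset.mem_univ _⟩, ?_⟩
        simp [iotaC, hpres]
      | true =>
        obtain ⟨h1, h2⟩ := hp rfl
        have hbk : C.b x ≠ C.k₀ := fun hc => h2 (by rw [← hc, C.hbb (C.hT'T hxT')])
        have hrel : C.Rel1 x (C.b x) :=
          ⟨hxT', C.hbT' hxT', Or.inr ⟨Or.inl rfl, h1, hbk⟩⟩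
        refine ⟨⟨hmemK.2 ⟨C.hbT' hxT', Relation.EqvGen.trans _ _ _ hxE (Relation.EqvGen.rel _ _ hrel)⟩,
          Finset.mem_univ _⟩, ?_⟩
        simp only [iotaC, if_true, hpres]
        intro _
        refine ⟨hbk, fun hc => h1 ?_⟩
        have := congrArg C.b hc
        rwa [C.hbb (C.hT'T hxT'), C.hbb C.hk₀T] at this
    · rintro ⟨x, c⟩ hd
      rw [Finset.mem_filter, Finset.mem_product] at hd
      have hxT : x ∈ C.T := hKT hd.1.1
      cases c with
      | false => simp [iotaC, C.hrr hxT]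
      | true => simp [iotaC, C.hbb hxT]
    · rintro ⟨x, c⟩ hd
      rw [Finset.mem_filter, Finset.mem_product] at hd
      have hxT : x ∈ C.T := hKT hd.1.1
      cases c with
      | false =>
        simp only [iotaC, Bool.false_eq_true, if_false, Ne, Prod.mk.injEq]
        rintro ⟨h, -⟩
        exact C.hrne hxT h
      | true =>
        simp only [iotaC, if_true, Ne, Prod.mk.injEq]
        rintro ⟨h, -⟩
        exact C.hbne hxT h
  have hneg : ((K ×ˢ (Finset.univ : Finset Bool))).filter (fun d => ¬ pres d.1 d.2)
      = {(C.k₀, true)} := by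
    ext ⟨x, c⟩
    simp only [Finset.mem_filter, Finset.mem_product, Finset.mem_univ, and_true,
      Finset.mem_singleton, Prod.mk.injEq, hpres]
    constructor
    · rintro ⟨hxK, hnp⟩
      push_neg at hnp
      obtain ⟨hc, hor⟩ := hnp
      subst hc
      by_cases h : x = C.k₀
      · exact ⟨h, rfl⟩
      · exact absurd hxK ((hor h) ▸ hbk₀K)
    · rintro ⟨rfl, rfl⟩
      exact ⟨hk₀K, fun h => (h rfl).1 rfl⟩
  have hsplit := Finset.card_filter_add_card_filter_not
    (s := K ×ˢ (Finset.univ : Finset Bool)) (p := fun d => pres d.1 d.2)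
  rw [hneg] at hsplit
  have hprod : (K ×ˢ (Finset.univ : Finset Bool)).card = 2 * K.card := by
    rw [Finset.card_product]
    simp [Finset.card_univ]
    ring
  obtain ⟨m, hm⟩ := heven
  rw [Finset.card_singleton, hprod] at hsplit
  omega

lemma Q2pair : Relation.EqvGen C.Rel2 (C.b C.k₀) (C.r C.k₀) := by
  by_cases hrb : C.r C.k₀ = C.b C.k₀
  · rw [hrb]; exact Relation.EqvGen.refl _
  by_contra hcon
  set K : Finset (ZMod n) := C.T'.filter
    (fun v => v ≠ C.k₀ ∧ Relation.EqvGen C.Rel2 (C.b C.k₀) v) with hK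
  have hmemK : ∀ {v : ZMod n}, v ∈ K ↔ v ∈ C.T' ∧ v ≠ C.k₀ ∧
      Relation.EqvGen C.Rel2 (C.b C.k₀) v := by
    intro v; simp [hK]
  have hKT : ∀ {v : ZMod n}, v ∈ K → v ∈ C.T := fun hv => C.hT'T (hmemK.1 hv).1
  have hbk₀K : C.b C.k₀ ∈ K := hmemK.2 ⟨C.hbT' C.hk₀, C.hbk₀, Relation.EqvGen.refl _⟩
  have hrk₀K : C.r C.k₀ ∉ K := fun h => hcon (hmemK.1 h).2.2
  set pres : ZMod n → Bool → Prop :=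
    fun x c => if c then C.b x ≠ C.k₀ else C.r x ≠ C.k₀ with hpres
  have heven : Even (((K ×ˢ (Finset.univ : Finset Bool))).filter
      (fun d => pres d.1 d.2)).card := by
    apply even_card_invol _ C.iotaC
    · rintro ⟨x, c⟩ hd
      rw [Finset.mem_filter, Finset.mem_product] at hd ⊢
      obtain ⟨⟨hxK, -⟩, hp⟩ := hd
      obtain ⟨hxT', hxk, hxE⟩ := hmemK.1 hxK
      cases c with
      | false =>
        simp only [hpres, Bool.false_eq_true, if_false] at hp
        have hrel : C.Rel2 x (C.r x) := ⟨hxT', C.hrT' hxT', hxk, hp, Or.inl rfl⟩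
        refine ⟨⟨hmemK.2 ⟨C.hrT' hxT', hp, Relation.EqvGen.trans _ _ _ hxE (Relation.EqvGen.rel _ _ hrel)⟩,
          Finset.mem_univ _⟩, ?_⟩
        simp only [iotaC, Bool.false_eq_true, if_false, hpres]
        rw [C.hrr (C.hT'T hxT')]
        exact hxk
      | true =>
        simp only [hpres, if_true] at hp
        have hrel : C.Rel2 x (C.b x) := ⟨hxT', C.hbT' hxT', hxk, hp, Or.inr (Or.inr (Or.inl rfl))⟩
        refine ⟨⟨hmemK.2 ⟨C.hbT' hxT', hp, Relation.EqvGen.trans _ _ _ hxE (Relation.EqvGen.rel _ _ hrel)⟩,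
          Finset.mem_univ _⟩, ?_⟩
        simp only [iotaC, if_true, hpres]
        rw [C.hbb (C.hT'T hxT')]
        exact hxk
    · rintro ⟨x, c⟩ hd
      rw [Finset.mem_filter, Finset.mem_product] at hd
      have hxT : x ∈ C.T := hKT hd.1.1
      cases c with
      | false => simp [iotaC, C.hrr hxT]
      | true => simp [iotaC, C.hbb hxT]
    · rintro ⟨x, c⟩ hd
      rw [Finset.mem_filter, Finset.mem_product] at hd
      have hxT : x ∈ C.T := hKT hd.1.1
      cases c with
      | false =>
        simp only [iotaC, Bool.false_eq_true, if_false, Ne, Prod.mk.injEq]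
        rintro ⟨h, -⟩
        exact C.hrne hxT h
      | true =>
        simp only [iotaC, if_true, Ne, Prod.mk.injEq]
        rintro ⟨h, -⟩
        exact C.hbne hxT h
  have hneg : ((K ×ˢ (Finset.univ : Finset Bool))).filter (fun d => ¬ pres d.1 d.2)
      = {(C.b C.k₀, true)} := by
    ext ⟨x, c⟩
    simp only [Finset.mem_filter, Finset.mem_product, Finset.mem_univ, and_true,
      Finset.mem_singleton, Prod.mk.injEq, hpres]
    constructor
    · rintro ⟨hxK, hnp⟩
      cases c with
      | false =>
        simp only [Bool.false_eq_true, if_false] at hnp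
        push_neg at hnp
        have hx : x = C.r C.k₀ := by
          have := congrArg C.r hnp
          rwa [C.hrr (hKT hxK)] at this
        exact absurd hxK (hx ▸ hrk₀K)
      | true =>
        simp only [if_true] at hnp
        push_neg at hnp
        have hx : x = C.b C.k₀ := by
          have := congrArg C.b hnp
          rwa [C.hbb (hKT hxK)] at this
        exact ⟨hx, rfl⟩
    · rintro ⟨rfl, rfl⟩
      refine ⟨hbk₀K, ?_⟩
      simp only [if_true]
      push_neg
      rw [C.hbb C.hk₀T]
  have hsplit := Finset.card_filter_add_card_filter_not
    (s := K ×ˢ (Finset.univ : Finset Bool)) (p := fun d => pres d.1 d.2)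
  rw [hneg] at hsplit
  have hprod : (K ×ˢ (Finset.univ : Finset Bool)).card = 2 * K.card := by
    rw [Finset.card_product]
    simp [Finset.card_univ]
    ring
  obtain ⟨m, hm⟩ := heven
  rw [Finset.card_singleton, hprod] at hsplit
  omega

lemma Q1 {z : ZMod n} (hz : z ∈ C.T') : Relation.EqvGen C.Rel1 C.k₀ z := by
  refine C.hT'conn (fun z => Relation.EqvGen C.Rel1 C.k₀ z) C.k₀ C.hk₀
    (Relation.EqvGen.refl _) (fun w hw hP => ?_) z hz
  constructor
  · exact Relation.EqvGen.trans _ _ _ hP (Relation.EqvGen.rel _ _ ⟨hw, C.hrT' hw, Or.inl (Or.inl rfl)⟩)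
  · by_cases h1 : w = C.k₀
    · rw [h1]; exact C.Q1pair
    · by_cases h2 : w = C.b C.k₀
      · have : C.b w = C.k₀ := by rw [h2, C.hbb C.hk₀T]
        rw [this]; exact Relation.EqvGen.refl _
      · have hbk : C.b w ≠ C.k₀ := fun hc => h2 (by rw [← hc, C.hbb (C.hT'T hw)])
        exact Relation.EqvGen.trans _ _ _ hP (Relation.EqvGen.rel _ _ ⟨hw, C.hbT' hw, Or.inr ⟨Or.inl rfl, h1, hbk⟩⟩)

lemma Q2 {z : ZMod n} (hz : z ∈ C.T') (hzk : z ≠ C.k₀) :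
    Relation.EqvGen C.Rel2 (C.b C.k₀) z := by
  have key : ∀ y ∈ C.T', y = C.k₀ ∨ Relation.EqvGen C.Rel2 (C.b C.k₀) y := by
    refine C.hT'conn (fun y => y = C.k₀ ∨ Relation.EqvGen C.Rel2 (C.b C.k₀) y)
      C.k₀ C.hk₀ (Or.inl rfl) (fun w hw hP => ?_)
    rcases hP with rfl | hE
    · exact ⟨Or.inr C.Q2pair, Or.inr (Relation.EqvGen.refl _)⟩
    · have hwk : w ≠ C.k₀ := by
        rcases C.E2_inv hE with h | h
        · rw [← h]; exact C.hbk₀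
        · exact h.1.2
      constructor
      · by_cases hrk : C.r w = C.k₀
        · exact Or.inl hrk
        · exact Or.inr (Relation.EqvGen.trans _ _ _ hE (Relation.EqvGen.rel _ _
            ⟨hw, C.hrT' hw, hwk, hrk, Or.inl rfl⟩))
      · by_cases hbk : C.b w = C.k₀
        · exact Or.inl hbk
        · exact Or.inr (Relation.EqvGen.trans _ _ _ hE (Relation.EqvGen.rel _ _
            ⟨hw, C.hbT' hw, hwk, hbk, Or.inr (Or.inr (Or.inl rfl))⟩))
  rcases key z hz with h | h
  · exact absurd h hzk
  · exact h

end CycleConn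


section Chains

lemma fdre_g1 {x : ZMod n} (hx : x ∈ C.T') :
    C.FD.Reachable (C.g1 x) (C.g1 (C.r x)) := by
  have h1 : C.FD.Reachable (C.g x + 1) (C.g1 x) := by
    have := C.fd_reach_mV (C.g x + 1)
    rwa [C.markV_g1 hx] at this
  have h2 : C.FD.Reachable (C.g (C.r x) + 1) (C.g1 (C.r x)) := by
    have := C.fd_reach_mV (C.g (C.r x) + 1)
    rwa [C.markV_g1 (C.hrT' hx)] at this
  exact h1.symm.trans ((C.fd_red0 (C.hT'T hx)).reachable.trans h2)

lemma fdre_g2 {x : ZMod n} (hx : x ∈ C.T') (h1 : x ≠ C.k₀) (h2 : C.r x ≠ C.k₀) :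
    C.FD.Reachable (C.g2 x) (C.g2 (C.r x)) := by
  have ha : C.FD.Reachable (C.g1 x + 1) (C.g2 x) := by
    have := C.fd_reach_mV (C.g1 x + 1)
    rwa [C.markV_g2 hx] at this
  have hb : C.FD.Reachable (C.g1 (C.r x) + 1) (C.g2 (C.r x)) := by
    have := C.fd_reach_mV (C.g1 (C.r x) + 1)
    rwa [C.markV_g2 (C.hrT' hx)] at this
  exact ha.symm.trans ((C.fd_red1 hx h1 h2).reachable.trans hb)

lemma lift1 {u z : ZMod n} (h : Relation.EqvGen C.Rel1 u z) :
    C.FD.Reachable (C.g1 u) (C.g1 z) := by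
  induction h with
  | rel x y hxy =>
    obtain ⟨hx, hy, hor⟩ := hxy
    rcases hor with (h | h) | ⟨(h | h), h1, h2⟩
    · rw [h]; exact C.fdre_g1 hx
    · rw [h]; exact (C.fdre_g1 hy).symm
    · rw [h]
      have hbk : C.b x ≠ C.k₀ := h ▸ h2
      exact (C.fd_blue1 hx h1 hbk).reachable
    · rw [h]
      have hbk : C.b y ≠ C.k₀ := h ▸ h1
      exact (C.fd_blue1 hy h2 hbk).reachable.symm
  | refl x => exact SimpleGraph.Reachable.refl _
  | symm x y _ ih => exact ih.symm
  | trans x y z _ _ ih1 ih2 => exact ih1.trans ih2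

lemma lift2 {u z : ZMod n} (h : Relation.EqvGen C.Rel2 u z) :
    C.FD.Reachable (C.g2 u) (C.g2 z) := by
  induction h with
  | rel x y hxy =>
    obtain ⟨hx, hy, hxk, hyk, hor⟩ := hxy
    rcases hor with h | h | h | h
    · rw [h]; exact C.fdre_g2 hx hxk (h ▸ hyk)
    · rw [h]; exact (C.fdre_g2 hy hyk (h ▸ hxk)).symm
    · rw [h]; exact (C.fd_blue2 hx hxk (h ▸ hyk)).reachable
    · rw [h]; exact (C.fd_blue2 hy hyk (h ▸ hxk)).reachable.symm
  | refl x => exact SimpleGraph.Reachable.refl _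
  | symm x y _ ih => exact ih.symm
  | trans x y z _ _ ih1 ih2 => exact ih1.trans ih2

lemma sim_rel {x y : ZMod n}
    (h : (y = x + 1 ∧ x ∉ C.T) ∨
      (x - 1 ∈ C.T ∧ x - 1 ≠ C.k₀ ∧ x - 1 ≠ C.r C.k₀ ∧ y = C.r (x - 1) + 1) ∨
      (x ∈ C.T ∧ x ≠ C.k₀ ∧ x ≠ C.b C.k₀ ∧ y = C.b x)) :
    C.FD.Reachable (C.g (C.mT x)) (C.g (C.mT y)) := by
  rcases h with ⟨rfl, hx⟩ | ⟨hs, hk, hrk, rfl⟩ | ⟨hx, h1, h2, rfl⟩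
  · rw [C.mT_shift hx]
  · set s := x - 1 with hsdef
    have hxeq : x = s + 1 := (zsub_add_one x).symm
    have hrsk : C.r s ≠ C.k₀ := by
      intro hc
      apply hrk
      have := congrArg C.r hc
      rwa [C.hrr hs] at this
    rw [hxeq]
    by_cases hsT' : s ∈ C.T'
    · have hra : C.FD.Reachable (C.g2 s + 1) (C.g (C.mT (s + 1))) := by
        have := C.fd_reach_mV (C.g2 s + 1)
        rwa [C.markV_after_g2 hsT'] at this
      have hrb : C.FD.Reachable (C.g2 (C.r s) + 1) (C.g (C.mT (C.r s + 1))) := by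
        have := C.fd_reach_mV (C.g2 (C.r s) + 1)
        rwa [C.markV_after_g2 (C.hrT' hsT')] at this
      exact hra.symm.trans ((C.fd_red2 hsT' hk hrsk).reachable.trans hrb)
    · have hrsT' : C.r s ∉ C.T' := by
        intro hc
        apply hsT'
        have := C.hrT' hc
        rwa [C.hrr hs] at this
      have hra : C.FD.Reachable (C.g s + 1) (C.g (C.mT (s + 1))) := by
        have := C.fd_reach_mV (C.g s + 1)
        rwa [C.markV_after_g hs hsT'] at this
      have hrb : C.FD.Reachable (C.g (C.r s) + 1) (C.g (C.mT (C.r s + 1))) := by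
        have := C.fd_reach_mV (C.g (C.r s) + 1)
        rwa [C.markV_after_g (C.hrT hs) hrsT'] at this
      exact hra.symm.trans ((C.fd_red0 hs).reachable.trans hrb)
  · rw [C.mT_id hx, C.mT_id (C.hbT hx)]
    have hbk : C.b x ≠ C.k₀ := by
      intro hc
      apply h2
      have := congrArg C.b hc
      rwa [C.hbb hx] at this
    exact (C.fd_blue0 hx h1 hbk).reachable

lemma sim_adj {x y : ZMod n} (h : C.Shat.Adj x y) :
    C.FD.Reachable (C.g (C.mT x)) (C.g (C.mT y)) := by
  rw [show C.Shat = SimpleGraph.fromRel _ from rfl, SimpleGraph.fromRel_adj] at h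
  rcases h.2 with hrel | hrel
  · exact C.sim_rel hrel
  · exact (C.sim_rel hrel).symm

lemma sim {u v : ZMod n} (h : C.Shat.Reachable u v) :
    C.FD.Reachable (C.g (C.mT u)) (C.g (C.mT v)) := by
  rw [SimpleGraph.reachable_iff_reflTransGen] at h
  induction h with
  | refl => exact SimpleGraph.Reachable.refl _
  | tail _ hadj ih => exact ih.trans (C.sim_adj hadj)

end Chains

section Blob

lemma blob_gbk₀ : C.FD.Reachable (C.g C.k₀) (C.g (C.b C.k₀)) := by
  have := C.sim C.S2a
  rwa [C.mT_id C.hk₀T, C.mT_id (C.hbT C.hk₀T)] at this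

lemma blob_g1 {z : ZMod n} (hz : z ∈ C.T') :
    C.FD.Reachable (C.g C.k₀) (C.g1 z) := by
  have h1 : C.FD.Reachable (C.g C.k₀) (C.g1 C.k₀) :=
    C.blob_gbk₀.trans C.fd_blue8.reachable
  exact h1.trans (C.lift1 (C.Q1 hz))

lemma blob_g2 {z : ZMod n} (hz : z ∈ C.T') :
    C.FD.Reachable (C.g C.k₀) (C.g2 z) := by
  by_cases hzk : z = C.k₀
  · rw [hzk]
    exact (C.blob_g1 (C.hbT' C.hk₀)).trans C.fd_blue9.reachable
  · exact C.fd_blue10.reachable.symm.trans (C.lift2 (C.Q2 hz hzk))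

lemma blob_Y : C.FD.Reachable (C.g C.k₀) (C.g (C.mT (C.k₀ + 1))) := by
  have h7 : C.FD.Reachable (C.g (C.mT (C.k₀ + 1))) (C.g2 (C.r C.k₀)) := by
    have ha : C.FD.Reachable (C.g2 C.k₀ + 1) (C.g (C.mT (C.k₀ + 1))) := by
      have := C.fd_reach_mV (C.g2 C.k₀ + 1)
      rwa [C.markV_after_g2 C.hk₀] at this
    have hb : C.FD.Reachable (C.g1 (C.r C.k₀) + 1) (C.g2 (C.r C.k₀)) := by
      have := C.fd_reach_mV (C.g1 (C.r C.k₀) + 1)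
      rwa [C.markV_g2 (C.hrT' C.hk₀)] at this
    exact ha.symm.trans (C.fd_red4.reachable.symm.trans hb)
  exact (C.blob_g2 (C.hrT' C.hk₀)).trans h7.symm

end Blob


section Labels

/-- the `Shat`-component of `k₀` (the class `X`). -/
noncomputable def cX : C.Shat.ConnectedComponent := C.Shat.connectedComponentMk C.k₀

/-- the `Shat`-component of `k₀ + 1` (the class `Y`). -/
noncomputable def cY : C.Shat.ConnectedComponent := C.Shat.connectedComponentMk (C.k₀ + 1)

lemma hXY : C.cX ≠ C.cY := fun h => C.notXY (SimpleGraph.ConnectedComponent.eq.1 h)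

/-- the raw label of a `V`-marker. -/
noncomputable def rawS (w : ZMod n) : C.Shat.ConnectedComponent :=
  if h : ∃ s, s ∈ C.T ∧ C.g s = w then C.Shat.connectedComponentMk h.choose else C.cX

/-- merge class `Y` into class `X`. -/
noncomputable def collapse (q : C.Shat.ConnectedComponent) : C.Shat.ConnectedComponent :=
  if q = C.cY then C.cX else q

/-- the label of a vertex in the `D`-world. -/
noncomputable def lab (x : ZMod n) : C.Shat.ConnectedComponent :=
  C.collapse (C.rawS (C.mV x))

lemma rawS_g {s : ZMod n} (hs : s ∈ C.T) :
    C.rawS (C.g s) = C.Shat.connectedComponentMk s := by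
  have hex : ∃ u, u ∈ C.T ∧ C.g u = C.g s := ⟨s, hs, rfl⟩
  rw [rawS, dif_pos hex]
  congr 1
  exact C.hginj _ hex.choose_spec.1 _ hs hex.choose_spec.2

lemma rawS_g1 {s : ZMod n} (hs : s ∈ C.T') : C.rawS (C.g1 s) = C.cX := by
  rw [rawS, dif_neg]
  rintro ⟨u, huT, hc⟩
  exact (C.hgg12 u huT s hs).1 hc

lemma rawS_g2 {s : ZMod n} (hs : s ∈ C.T') : C.rawS (C.g2 s) = C.cX := by
  rw [rawS, dif_neg]
  rintro ⟨u, huT, hc⟩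
  exact (C.hgg12 u huT s hs).2 hc

lemma col_cX : C.collapse C.cX = C.cX := by
  rw [collapse, if_neg C.hXY]

lemma col_cY : C.collapse C.cY = C.cX := by
  rw [collapse, if_pos rfl]

lemma col_ne_cY (q : C.Shat.ConnectedComponent) : C.collapse q ≠ C.cY := by
  rw [collapse]
  split_ifs with h
  · exact C.hXY
  · exact h

lemma lab_ne_cY (x : ZMod n) : C.lab x ≠ C.cY := C.col_ne_cY _

lemma lab_g {s : ZMod n} (hs : s ∈ C.T) :
    C.lab (C.g s) = C.collapse (C.Shat.connectedComponentMk s) := by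
  rw [lab, C.mV_id (C.gmemV hs), C.rawS_g hs]

lemma lab_g1 {s : ZMod n} (hs : s ∈ C.T') : C.lab (C.g1 s) = C.cX := by
  rw [lab, C.mV_id (C.g1memV hs), C.rawS_g1 hs, C.col_cX]

lemma lab_g2 {s : ZMod n} (hs : s ∈ C.T') : C.lab (C.g2 s) = C.cX := by
  rw [lab, C.mV_id (C.g2memV hs), C.rawS_g2 hs, C.col_cX]

lemma lab_gs1 {s : ZMod n} (hs : s ∈ C.T') : C.lab (C.g s + 1) = C.cX := by
  rw [lab, C.markV_g1 hs, C.rawS_g1 hs, C.col_cX]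

lemma lab_g1s1 {s : ZMod n} (hs : s ∈ C.T') : C.lab (C.g1 s + 1) = C.cX := by
  rw [lab, C.markV_g2 hs, C.rawS_g2 hs, C.col_cX]

lemma lab_g2s1 {s : ZMod n} (hs : s ∈ C.T') :
    C.lab (C.g2 s + 1) = C.collapse (C.Shat.connectedComponentMk (s + 1)) := by
  rw [lab, C.markV_after_g2 hs, C.rawS_g (C.mT_mem _)]
  congr 1
  exact SimpleGraph.ConnectedComponent.sound (C.sh_reach_mT (s + 1)).symm

lemma lab_gs1' {s : ZMod n} (hs : s ∈ C.T) (hs' : s ∉ C.T') :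
    C.lab (C.g s + 1) = C.collapse (C.Shat.connectedComponentMk (s + 1)) := by
  rw [lab, C.markV_after_g hs hs', C.rawS_g (C.mT_mem _)]
  congr 1
  exact SimpleGraph.ConnectedComponent.sound (C.sh_reach_mT (s + 1)).symm

lemma col_eq_of_reach {u v : ZMod n} (h : C.Shat.Reachable u v) :
    C.collapse (C.Shat.connectedComponentMk u) = C.collapse (C.Shat.connectedComponentMk v) := by
  rw [SimpleGraph.ConnectedComponent.sound h]

lemma lab_rel {x y : ZMod n} (h : FDrel C x y) : C.lab x = C.lab y := by
  rcases h with ⟨rfl, hx⟩ | ⟨s, hs, rfl, rfl⟩ | ⟨s, hs, h1, h2, (⟨rfl, rfl⟩ | ⟨rfl, rfl⟩)⟩ |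
    ⟨rfl, rfl⟩ | ⟨rfl, rfl⟩ | ⟨s, hs, h1, h2, rfl, rfl⟩ |
    ⟨s, hs, h1, h2, (⟨rfl, rfl⟩ | ⟨rfl, rfl⟩)⟩ | ⟨rfl, rfl⟩ | ⟨rfl, rfl⟩ | ⟨rfl, rfl⟩
  · -- Hamilton step
    rw [lab, lab, C.mV_shift (fun hc => hx (C.mem_V_iff.1 hc))]
  · -- original red chords
    by_cases hsT' : s ∈ C.T'
    · rw [C.lab_gs1 hsT', C.lab_gs1 (C.hrT' hsT')]
    · have hrsT' : C.r s ∉ C.T' := fun hc => hsT' (by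
        have := C.hrT' hc
        rwa [C.hrr hs] at this)
      rw [C.lab_gs1' hs hsT', C.lab_gs1' (C.hrT hs) hrsT']
      apply C.col_eq_of_reach
      exact (C.sh_red hs (fun hc => hsT' (hc ▸ C.hk₀)) (fun hc => hsT' (hc ▸ C.hrT' C.hk₀))).reachable
  · -- copy-1 red chords
    rw [C.lab_g1s1 hs, C.lab_g1s1 (C.hrT' hs)]
  · -- copy-2 red chords
    rw [C.lab_g2s1 hs, C.lab_g2s1 (C.hrT' hs)]
    apply C.col_eq_of_reach
    have hsrk : s ≠ C.r C.k₀ := fun hc => h2 (by rw [hc, C.hrr C.hk₀T])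
    exact (C.sh_red (C.hT'T hs) h1 hsrk).reachable
  · -- rewired red: g1 (r k₀) + 1 ~ g2 k₀ + 1
    rw [C.lab_g1s1 (C.hrT' C.hk₀), C.lab_g2s1 C.hk₀]
    rw [show C.Shat.connectedComponentMk (C.k₀ + 1) = C.cY from rfl, C.col_cY]
  · -- rewired red: g2 (r k₀) + 1 ~ g1 k₀ + 1
    rw [C.lab_g2s1 (C.hrT' C.hk₀), C.lab_g1s1 C.hk₀]
    have : C.Shat.connectedComponentMk (C.r C.k₀ + 1) = C.cY :=
      SimpleGraph.ConnectedComponent.sound C.S2b.symm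
    rw [this, C.col_cY]
  · -- original blue chords
    rw [C.lab_g hs, C.lab_g (C.hbT hs)]
    apply C.col_eq_of_reach
    have hsbk : s ≠ C.b C.k₀ := fun hc => h2 (by rw [hc, C.hbb C.hk₀T])
    exact (C.sh_blue hs h1 hsbk).reachable
  · -- copy-1 blue chords
    rw [C.lab_g1 hs, C.lab_g1 (C.hbT' hs)]
  · -- copy-2 blue chords
    rw [C.lab_g2 hs, C.lab_g2 (C.hbT' hs)]
  · -- rewired blue: g (b k₀) ~ g1 k₀
    rw [C.lab_g (C.hbT C.hk₀T), C.lab_g1 C.hk₀]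
    have : C.Shat.connectedComponentMk (C.b C.k₀) = C.cX :=
      SimpleGraph.ConnectedComponent.sound C.S2a.symm
    rw [this, C.col_cX]
  · -- rewired blue: g1 (b k₀) ~ g2 k₀
    rw [C.lab_g1 (C.hbT' C.hk₀), C.lab_g2 C.hk₀]
  · -- rewired blue: g2 (b k₀) ~ g k₀
    rw [C.lab_g2 (C.hbT' C.hk₀), C.lab_g C.hk₀T]
    rw [show C.Shat.connectedComponentMk C.k₀ = C.cX from rfl, C.col_cX]

lemma lab_adj {x y : ZMod n} (h : C.FD.Adj x y) : C.lab x = C.lab y := by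
  rw [C.fd_adj_iff] at h
  rcases h.2 with hrel | hrel
  · exact C.lab_rel hrel
  · exact (C.lab_rel hrel).symm

end Labels


section Final

lemma lab_flag {x : ZMod n} (h : C.lab x = C.cX) : C.FD.Reachable (C.g C.k₀) x := by
  have hxm : C.FD.Reachable (C.mV x) x := (C.fd_reach_mV x).symm
  rcases C.V_cases (C.mV_mem x) with ⟨u, huT, hmv⟩ | ⟨u, huT, hmv⟩ | ⟨u, huT, hmv⟩
  · have hlab : C.lab x = C.collapse (C.Shat.connectedComponentMk u) := by
      rw [lab, hmv, C.rawS_g huT]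
    rw [hlab] at h
    by_cases hY : C.Shat.connectedComponentMk u = C.cY
    · have hreach : C.Shat.Reachable u (C.k₀ + 1) := SimpleGraph.ConnectedComponent.eq.1 hY
      have := C.sim hreach
      rw [C.mT_id huT] at this
      refine (C.blob_Y.trans ?_).trans hxm
      rw [hmv]
      exact this.symm
    · rw [collapse, if_neg hY] at h
      have hreach : C.Shat.Reachable u C.k₀ := SimpleGraph.ConnectedComponent.eq.1 h
      have := C.sim hreach
      rw [C.mT_id huT, C.mT_id C.hk₀T] at this
      refine this.symm.trans ?_
      rw [← hmv]
      exact hxm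
  · refine (C.blob_g1 huT).trans ?_
    rw [← hmv]
    exact hxm
  · refine (C.blob_g2 huT).trans ?_
    rw [← hmv]
    exact hxm

lemma lab_inj {x y : ZMod n} (h : C.lab x = C.lab y) : C.FD.Reachable x y := by
  by_cases hx : C.lab x = C.cX
  · exact (C.lab_flag hx).symm.trans (C.lab_flag (h ▸ hx))
  · have hy : C.lab y ≠ C.cX := fun hc => hx (h ▸ hc)
    have hmx : C.FD.Reachable x (C.mV x) := C.fd_reach_mV x
    have hmy : C.FD.Reachable y (C.mV y) := C.fd_reach_mV y
    obtain ⟨u, huT, hmu⟩ : ∃ u ∈ C.T, C.mV x = C.g u := by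
      rcases C.V_cases (C.mV_mem x) with hc | ⟨u, huT, hmv⟩ | ⟨u, huT, hmv⟩
      · exact hc
      · exact absurd (by rw [lab, hmv, C.rawS_g1 huT, C.col_cX]) hx
      · exact absurd (by rw [lab, hmv, C.rawS_g2 huT, C.col_cX]) hx
    obtain ⟨v, hvT, hmw⟩ : ∃ v ∈ C.T, C.mV y = C.g v := by
      rcases C.V_cases (C.mV_mem y) with hc | ⟨v, hvT, hmv⟩ | ⟨v, hvT, hmv⟩
      · exact hc
      · exact absurd (by rw [lab, hmv, C.rawS_g1 hvT, C.col_cX]) hy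
      · exact absurd (by rw [lab, hmv, C.rawS_g2 hvT, C.col_cX]) hy
    have hlabx : C.lab x = C.collapse (C.Shat.connectedComponentMk u) := by
      rw [lab, hmu, C.rawS_g huT]
    have hlaby : C.lab y = C.collapse (C.Shat.connectedComponentMk v) := by
      rw [lab, hmw, C.rawS_g hvT]
    have hu' : C.Shat.connectedComponentMk u ≠ C.cY := by
      intro hc
      rw [hlabx, hc, C.col_cY] at hx
      exact hx rfl
    have hv' : C.Shat.connectedComponentMk v ≠ C.cY := by
      intro hc
      rw [hlaby, hc, C.col_cY] at hy
      exact hy rfl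
    have heq : C.Shat.connectedComponentMk u = C.Shat.connectedComponentMk v := by
      have := h
      rw [hlabx, hlaby, collapse, collapse, if_neg hu', if_neg hv'] at this
      exact this
    have hreach := C.sim (SimpleGraph.ConnectedComponent.eq.1 heq)
    rw [C.mT_id huT, C.mT_id hvT] at hreach
    refine hmx.trans ?_
    rw [hmu]
    refine hreach.trans ?_
    rw [← hmw]
    exact hmy.symm

lemma lab_surj (q : C.Shat.ConnectedComponent) (hq : q ≠ C.cY) : ∃ x, C.lab x = q := by
  induction q using SimpleGraph.ConnectedComponent.ind with
  | _ u =>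
    refine ⟨C.g (C.mT u), ?_⟩
    rw [C.lab_g (C.mT_mem u)]
    have h1 : C.Shat.connectedComponentMk (C.mT u) = C.Shat.connectedComponentMk u :=
      SimpleGraph.ConnectedComponent.sound (C.sh_reach_mT u).symm
    rw [h1, collapse, if_neg hq]

lemma lab_walk {v w : ZMod n} (p : C.FD.Walk v w) : C.lab v = C.lab w := by
  induction p with
  | nil => rfl
  | cons hadj _ ih => exact (C.lab_adj hadj).trans ih

/-- the induced injection from `F(D)`-components into `Shat`-components avoiding `Y`. -/
noncomputable def Fmap : C.FD.ConnectedComponent → {q : C.Shat.ConnectedComponent // ¬ q = C.cY} :=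
  SimpleGraph.ConnectedComponent.lift (fun v => ⟨C.lab v, C.lab_ne_cY v⟩)
    (fun v w p _ => Subtype.ext (C.lab_walk p))

lemma Fmap_bij : Function.Bijective C.Fmap := by
  constructor
  · intro c1 c2
    refine SimpleGraph.ConnectedComponent.ind₂ (fun x y h => ?_) c1 c2
    have : C.lab x = C.lab y := congrArg Subtype.val h
    exact SimpleGraph.ConnectedComponent.sound (C.lab_inj this)
  · rintro ⟨q, hq⟩
    obtain ⟨x, hx⟩ := C.lab_surj q hq
    exact ⟨C.FD.connectedComponentMk x, Subtype.ext hx⟩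

lemma fs_rel_shat_reach {x y : ZMod n}
    (h : (y = x + 1 ∧ x ∉ C.T) ∨ (x - 1 ∈ C.T ∧ y = C.r (x - 1) + 1) ∨
      (x ∈ C.T ∧ y = C.b x)) : C.Shat.Reachable x y := by
  rcases h with ⟨rfl, hx⟩ | ⟨hs, rfl⟩ | ⟨hx, rfl⟩
  · exact (C.sh_ham hx).reachable
  · set s := x - 1 with hsdef
    have hxeq : x = s + 1 := (zsub_add_one x).symm
    rw [hxeq]
    by_cases h1 : s = C.k₀
    · rw [h1]; exact C.S2b
    · by_cases h2 : s = C.r C.k₀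
      · have : C.r s = C.k₀ := by rw [h2, C.hrr C.hk₀T]
        rw [this]
        rw [h2]
        exact C.S2b.symm
      · exact (C.sh_red hs h1 h2).reachable
  · by_cases h1 : x = C.k₀
    · rw [h1]; exact C.S2a
    · by_cases h2 : x = C.b C.k₀
      · have : C.b x = C.k₀ := by rw [h2, C.hbb C.hk₀T]
        rw [this, h2]
        exact C.S2a.symm
      · exact (C.sh_blue hx h1 h2).reachable

lemma fs_adj_shat_reach {x y : ZMod n} (h : C.FS.Adj x y) : C.Shat.Reachable x y := by
  rw [show C.FS = SimpleGraph.fromRel _ from rfl, SimpleGraph.fromRel_adj] at h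
  rcases h.2 with hrel | hrel
  · exact C.fs_rel_shat_reach hrel
  · exact (C.fs_rel_shat_reach hrel).symm

lemma fs_walk_shat {v w : ZMod n} (p : C.FS.Walk v w) :
    C.Shat.connectedComponentMk v = C.Shat.connectedComponentMk w := by
  induction p with
  | nil => rfl
  | cons hadj _ ih =>
    exact (SimpleGraph.ConnectedComponent.sound (C.fs_adj_shat_reach hadj)).trans ih

lemma shat_walk_fs {v w : ZMod n} (p : C.Shat.Walk v w) :
    C.FS.connectedComponentMk v = C.FS.connectedComponentMk w := by
  induction p with
  | nil => rfl
  | cons hadj _ ih =>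
    exact (SimpleGraph.ConnectedComponent.sound (C.shat_le_fs hadj).reachable).trans ih

/-- the equivalence between `F(S)`-components and `Shat`-components. -/
noncomputable def Emap : C.FS.ConnectedComponent ≃ C.Shat.ConnectedComponent where
  toFun := SimpleGraph.ConnectedComponent.lift (fun v => C.Shat.connectedComponentMk v)
    (fun v w p _ => C.fs_walk_shat p)
  invFun := SimpleGraph.ConnectedComponent.lift (fun v => C.FS.connectedComponentMk v)
    (fun v w p _ => C.shat_walk_fs p)
  left_inv := by
    intro c
    induction c using SimpleGraph.ConnectedComponent.ind with
    | _ v => rfl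
  right_inv := by
    intro c
    induction c using SimpleGraph.ConnectedComponent.ind with
    | _ v => rfl

include C in
lemma main : Nat.card C.FD.ConnectedComponent + 1 = Nat.card C.FS.ConnectedComponent := by
  have e1 : C.FD.ConnectedComponent ≃ {q : C.Shat.ConnectedComponent // ¬ q = C.cY} :=
    Equiv.ofBijective _ C.Fmap_bij
  have e3 : C.Shat.ConnectedComponent ≃
      {q : C.Shat.ConnectedComponent // q = C.cY} ⊕ {q : C.Shat.ConnectedComponent // ¬ q = C.cY} :=
    (Equiv.sumCompl _).symm
  rw [Nat.card_congr e1, Nat.card_congr C.Emap, Nat.card_congr e3, Nat.card_sum]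
  have h1 : Nat.card {q : C.Shat.ConnectedComponent // q = C.cY} = 1 := by
    haveI : Nonempty {q : C.Shat.ConnectedComponent // q = C.cY} := ⟨⟨C.cY, rfl⟩⟩
    haveI : Subsingleton {q : C.Shat.ConnectedComponent // q = C.cY} :=
      ⟨fun a b => Subtype.ext (a.2.trans b.2.symm)⟩
    exact Nat.card_unique
  rw [h1]
  omega

end Final

end Ctx

end GoingDown

/-- **Going down.**  Let `S ⊆ A(G,H)` be a disjoint union of colour-alternating
cycles without neighbouring vertices, let `s_k = k₀` be a vertex of `S` separating
components of `F(S)` (i.e. `v_k` and `v_{k+1}` lie in different components of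
`F(S)`), lying on the cycle `C` of `S` with vertex set `T'`.  Let `D` be an ordered
subgraph of `A` without neighbouring vertices that is a going-down version
`D(S, s_k)` of `S`, given by injective order-preserving embeddings `g` (originals),
`g1`, `g2` (the `+1/3` and `+2/3` copies of the vertices of `C`) whose required
coloured edges are all present in `A`.  Then the 2-factor `F(D)` has exactly one
fewer connected component than `F(S)`. -/
theorem stmt_11 (n : ℕ) [NeZero n] (hn : 3 ≤ n) (G : SimpleGraph (ZMod n))
    (hH : ∀ i : ZMod n, G.Adj i (i + 1))
    (T T' : Finset (ZMod n)) (r b g g1 g2 : ZMod n → ZMod n) (k₀ : ZMod n)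
    -- `S` is a disjoint union of colour-alternating cycles in `A` …
    (hr : ∀ i ∈ T, r i ∈ T ∧ r (r i) = i ∧ (auxRed n G).Adj i (r i))
    (hb : ∀ i ∈ T, b i ∈ T ∧ b (b i) = i ∧ (auxBlue n G).Adj i (b i))
    -- … without neighbouring vertices
    (hnb : ∀ i ∈ T, i + 1 ∉ T)
    -- `k₀` is a vertex of the cycle `C` of `S` with vertex set `T'`
    (hk₀ : k₀ ∈ T') (hT'T : T' ⊆ T)
    (hT'cl : ∀ x ∈ T', r x ∈ T' ∧ b x ∈ T')
    (hT'conn : ∀ (P : ZMod n → Prop) (x : ZMod n), x ∈ T' → P x →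
      (∀ z ∈ T', P z → P (r z) ∧ P (b z)) → ∀ y ∈ T', P y)
    -- `k₀` separates components of `F(S)`
    (hsep : ¬ (FSgraph n T r b).Reachable k₀ (k₀ + 1))
    -- `D` is embedded injectively via `g`, `g1`, `g2`
    (hginj : ∀ x ∈ T, ∀ y ∈ T, g x = g y → x = y)
    (hg1inj : ∀ x ∈ T', ∀ y ∈ T', g1 x = g1 y → x = y)
    (hg2inj : ∀ x ∈ T', ∀ y ∈ T', g2 x = g2 y → x = y)
    (hgg12 : ∀ x ∈ T, ∀ y ∈ T', g x ≠ g1 y ∧ g x ≠ g2 y)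
    (hg12 : ∀ x ∈ T', ∀ y ∈ T', g1 x ≠ g2 y)
    -- the embedding preserves the order of `D(S, s_k)`
    (hord1 : ∀ x ∈ T, ∀ y ∈ T, x.val < y.val → (g x).val < (g y).val)
    (hord2 : ∀ x ∈ T', (g x).val < (g1 x).val ∧ (g1 x).val < (g2 x).val)
    (hord3 : ∀ x ∈ T', ∀ y ∈ T, x.val < y.val → (g2 x).val < (g y).val)
    -- `D` is a subgraph of `A`: all its coloured edges are present in `A`
    (hA1 : ∀ s ∈ T, (auxRed n G).Adj (g s) (g (r s)))
    (hA2 : ∀ s ∈ T, s ≠ k₀ → b s ≠ k₀ → (auxBlue n G).Adj (g s) (g (b s)))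
    (hA3 : ∀ s ∈ T', s ≠ k₀ → r s ≠ k₀ →
      (auxRed n G).Adj (g1 s) (g1 (r s)) ∧ (auxRed n G).Adj (g2 s) (g2 (r s)))
    (hA4 : ∀ s ∈ T', s ≠ k₀ → b s ≠ k₀ →
      (auxBlue n G).Adj (g1 s) (g1 (b s)) ∧ (auxBlue n G).Adj (g2 s) (g2 (b s)))
    (hA5 : (auxRed n G).Adj (g1 (r k₀)) (g2 k₀) ∧
      (auxRed n G).Adj (g2 (r k₀)) (g1 k₀))
    (hA6 : (auxBlue n G).Adj (g (b k₀)) (g1 k₀) ∧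
      (auxBlue n G).Adj (g1 (b k₀)) (g2 k₀) ∧
      (auxBlue n G).Adj (g2 (b k₀)) (g k₀))
    -- `D` has no neighbouring vertices
    (hnbD : ∀ x : ZMod n,
      x ∈ g '' (T : Set (ZMod n)) ∪ g1 '' (T' : Set (ZMod n))
        ∪ g2 '' (T' : Set (ZMod n)) →
      x + 1 ∉ g '' (T : Set (ZMod n)) ∪ g1 '' (T' : Set (ZMod n))
        ∪ g2 '' (T' : Set (ZMod n))) :
    Nat.card (FDgraph n T T' r b g g1 g2 k₀).ConnectedComponent + 1
      = Nat.card (FSgraph n T r b).ConnectedComponent := by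
  exact GoingDown.Ctx.main ⟨hn, G, hH, T, T', r, b, g, g1, g2, k₀, hr, hb, hnb, hk₀, hT'T,
    hT'cl, hT'conn, hsep, hginj, hg1inj, hg2inj, hgg12, hg12, hord1, hord2, hord3,
    hA1, hA2, hA3, hA4, hA5, hA6⟩
end
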